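/- arXiv:1411.6983 — 9 statements merged into one kernel-verified Lean document; each statement's English description precedes it below -/
import Mathlib

section
/- Let R = k[x_0,...,x_n] with n ≥ 2 and let J = (x_0·x_1, x_2, x_3, ..., x_n), the ideal of the two points [1:0:...:0] and [0:1:0:...:0] in P^n. Then the Jacobian ideal I = (J, I_n(Θ)) equals the irrelevant maximal ideal (x_0,...,x_n), and the element x_0·x_1 lies in J ∩ I^2 but not in J·I; in particular the pair (J,I) is not Aluffi torsion-free. -/
open MvPolynomial

/-- The ideal generated by the `u × u` minors of a matrix. -/
noncomputable def minorsIdeal {R : Type*} [CommRing R] {ι κ : Type*}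
    (M : Matrix ι κ R) (u : ℕ) : Ideal R :=
  Ideal.span {d | ∃ (f : Fin u → ι) (g : Fin u → κ), d = (M.submatrix f g).det}

lemma mem_span_range_X_iff {R : Type*} [CommRing R] {σ : Type*} {p : MvPolynomial σ R} :
    p ∈ Ideal.span (Set.range (X : σ → MvPolynomial σ R)) ↔ constantCoeff p = 0 := by
  rw [← Set.image_univ, mem_ideal_span_X_image, constantCoeff_eq]
  constructor
  · intro h
    by_contra hc
    obtain ⟨i, -, hi⟩ := h 0 (by simpa [mem_support_iff] using hc)
    simp at hi
  · intro h m hm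
    by_contra hc
    push_neg at hc
    have hm0 : m = 0 := Finsupp.ext fun i => by simpa using hc i trivial
    rw [mem_support_iff, hm0] at hm
    exact hm h

/-- For `J = (x₀x₁, x₂, …, xₙ)` (ideal of two points in general position in `ℙⁿ`,
`n ≥ 2`), the Jacobian ideal `I = (J, Iₙ(Θ))` equals the irrelevant maximal ideal
`(x₀,…,xₙ)`, and `x₀x₁ ∈ J ∩ I² \ J·I`; in particular the pair is not Aluffi torsion-free. -/
theorem stmt_1 {k : Type*} [Field k] (n : ℕ) (hn : 2 ≤ n)
    (J I : Ideal (MvPolynomial (Fin (n + 1)) k))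
    (g : Fin n → MvPolynomial (Fin (n + 1)) k)
    (hg : g = fun i : Fin n => if (i : ℕ) = 0 then
            X (⟨0, by omega⟩ : Fin (n + 1)) * X (⟨1, by omega⟩ : Fin (n + 1))
          else X (⟨(i : ℕ) + 1, by exact Nat.succ_lt_succ i.isLt⟩ : Fin (n + 1)))
    (hJ : J = Ideal.span (Set.range g))
    (Θ : Matrix (Fin n) (Fin (n + 1)) (MvPolynomial (Fin (n + 1)) k))
    (hΘ : Θ = fun i j => pderiv j (g i))
    (hI : I = J ⊔ minorsIdeal Θ n) :
    I = Ideal.span (Set.range X) ∧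
    X (⟨0, by omega⟩ : Fin (n + 1)) * X (⟨1, by omega⟩ : Fin (n + 1)) ∈ J ⊓ I ^ 2 ∧
    X (⟨0, by omega⟩ : Fin (n + 1)) * X (⟨1, by omega⟩ : Fin (n + 1)) ∉ J * I := by
  have h0 : (0:ℕ) < n + 1 := by omega
  have h1 : (1:ℕ) < n + 1 := by omega
  -- entries of Θ
  have hTval : ∀ (i : Fin n) (j : Fin (n+1)), Θ i j =
      if (i:ℕ) = 0 then
        (if (j:ℕ) = 0 then X ⟨1,h1⟩ else if (j:ℕ) = 1 then X ⟨0,h0⟩ else 0)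
      else (if (j:ℕ) = (i:ℕ)+1 then 1 else 0) := by
    intro i j
    rw [hΘ, hg]
    by_cases hi : (i:ℕ) = 0
    · simp only [hi, if_true]
      rw [pderiv_mul]
      by_cases hj0 : (j:ℕ) = 0
      · have : j = ⟨0,h0⟩ := Fin.ext hj0
        subst this
        simp [Fin.ext_iff]
      · by_cases hj1 : (j:ℕ) = 1
        · have : j = ⟨1,h1⟩ := Fin.ext hj1
          subst this
          simp [Fin.ext_iff]
        · rw [pderiv_X_of_ne (by simp [Fin.ext_iff]; omega),
            pderiv_X_of_ne (by simp [Fin.ext_iff]; omega)]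
          simp [hj0, hj1]
    · simp only [hi, if_false]
      by_cases hj : (j:ℕ) = (i:ℕ)+1
      · have : (⟨(i:ℕ)+1, Nat.succ_lt_succ i.isLt⟩ : Fin (n+1)) = j := Fin.ext hj.symm
        rw [this]
        simp [hj]
      · rw [pderiv_X_of_ne (by simp [Fin.ext_iff]; omega)]
        simp [hj]
  haveI : NeZero n := ⟨by omega⟩
  -- x0 is a minor
  have hdet0 : ((Θ.submatrix id (fun j : Fin n => j.succ)).det) = X ⟨0,h0⟩ := by
    have hM : Θ.submatrix id (fun j : Fin n => j.succ) =
        Matrix.diagonal (fun i : Fin n => if i = 0 then X (⟨0,h0⟩ : Fin (n+1)) else 1) := by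
      apply Matrix.ext; intro i j
      rw [Matrix.submatrix_apply, id, hTval, Matrix.diagonal_apply]
      simp only [Fin.val_succ, Fin.ext_iff, Fin.val_zero]
      split_ifs <;> first | rfl | omega | exact absurd rfl (by omega) | exact (‹False›).elim
    rw [hM, Matrix.det_diagonal]
    rw [Finset.prod_ite_eq' Finset.univ (0 : Fin n)
      (fun _ => X (⟨0,h0⟩ : Fin (n+1)))]
    simp
  have hdet1 : ((Θ.submatrix id
      (fun j : Fin n => if j = 0 then (⟨0,h0⟩ : Fin (n+1)) else j.succ)).det) = X ⟨1,h1⟩ := by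
    have hM : Θ.submatrix id (fun j : Fin n => if j = 0 then (⟨0,h0⟩ : Fin (n+1)) else j.succ)
        = Matrix.diagonal (fun i : Fin n => if i = 0 then X (⟨1,h1⟩ : Fin (n+1)) else 1) := by
      apply Matrix.ext; intro i j
      rw [Matrix.submatrix_apply, id, hTval, Matrix.diagonal_apply]
      by_cases hj : j = 0
      · subst hj
        simp only [if_true, Fin.ext_iff, Fin.val_zero]
        split_ifs <;> first | rfl | omega | exact absurd rfl (by omega) | exact (‹False›).elim
      · rw [if_neg hj]
        simp only [Fin.val_succ, Fin.ext_iff, Fin.val_zero] at *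
        split_ifs <;> first | rfl | omega | exact absurd rfl (by omega) | exact (‹False›).elim
    rw [hM, Matrix.det_diagonal]
    rw [Finset.prod_ite_eq' Finset.univ (0 : Fin n)
      (fun _ => X (⟨1,h1⟩ : Fin (n+1)))]
    simp
  have hx0m : X (⟨0,h0⟩ : Fin (n+1)) ∈ minorsIdeal Θ n :=
    Ideal.subset_span ⟨id, _, hdet0.symm⟩
  have hx1m : X (⟨1,h1⟩ : Fin (n+1)) ∈ minorsIdeal Θ n :=
    Ideal.subset_span ⟨id, _, hdet1.symm⟩
  -- I = span range X
  have hIup : I ≤ Ideal.span (Set.range X) := by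
    rw [hI]
    apply sup_le
    · rw [hJ, Ideal.span_le]
      rintro _ ⟨i, rfl⟩
      by_cases hi : (i:ℕ) = 0
      · have hgi : g i = X (⟨0,h0⟩ : Fin (n+1)) * X (⟨1,h1⟩ : Fin (n+1)) := by
          rw [hg]; simp [hi]
        rw [hgi]
        exact Ideal.mul_mem_left _ _ (Ideal.subset_span ⟨_, rfl⟩)
      · have hgi : g i = X (⟨(i:ℕ)+1, Nat.succ_lt_succ i.isLt⟩ : Fin (n+1)) := by
          rw [hg]; simp [hi]
        rw [hgi]
        exact Ideal.subset_span ⟨_, rfl⟩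
    · rw [minorsIdeal, Ideal.span_le]
      rintro _ ⟨f, c, rfl⟩
      rw [SetLike.mem_coe, mem_span_range_X_iff, RingHom.map_det, RingHom.mapMatrix_apply]
      set N := ((Θ.submatrix f c).map (constantCoeff : MvPolynomial (Fin (n+1)) k →+* k)) with hNdef
      have hN : ∀ i j, N i j = if (f i : ℕ) = 0 then 0
          else (if (c j : ℕ) = (f i : ℕ)+1 then 1 else 0) := by
        intro i j
        rw [hNdef, Matrix.map_apply, Matrix.submatrix_apply, hTval]
        split_ifs <;> simp
      by_cases hf : ∃ i, (f i : ℕ) = 0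
      · obtain ⟨i, hi⟩ := hf
        apply Matrix.det_eq_zero_of_row_eq_zero i
        intro j
        rw [hN, if_pos hi]
      · push_neg at hf
        obtain ⟨i, -, j, -, hne, heq⟩ :=
          Finset.exists_ne_map_eq_of_card_lt_of_maps_to (f := f) (s := Finset.univ) (t := Finset.univ.erase 0)
            (by rw [Finset.card_erase_of_mem (Finset.mem_univ _), Finset.card_univ, Fintype.card_fin]; omega)
            (fun a _ => Finset.mem_erase.2 ⟨fun h => hf a (by rw [h]; rfl), Finset.mem_univ _⟩)
        apply Matrix.det_zero_of_row_eq hne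
        funext j'
        rw [hN, hN, heq]
  have hIlow : Ideal.span (Set.range X) ≤ I := by
    rw [Ideal.span_le]
    rintro _ ⟨j, rfl⟩
    rcases Nat.lt_or_ge (j:ℕ) 2 with hj | hj
    · rcases Nat.lt_or_ge (j:ℕ) 1 with hj0 | hj1
      · have : j = ⟨0,h0⟩ := Fin.ext (show (j:ℕ) = 0 by omega)
        rw [this, hI]
        exact Ideal.mem_sup_right hx0m
      · have : j = ⟨1,h1⟩ := Fin.ext (show (j:ℕ) = 1 by omega)
        rw [this, hI]
        exact Ideal.mem_sup_right hx1m
    · have hjn : (j:ℕ) - 1 < n := by have := j.isLt; omega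
      have hgj : g ⟨(j:ℕ)-1, hjn⟩ = X j := by
        rw [hg]
        simp only
        rw [if_neg (show ¬((⟨(j:ℕ)-1, hjn⟩ : Fin n) : ℕ) = 0 from by simp only [Fin.val_mk]; omega)]
        congr 1
        exact Fin.ext (show (j:ℕ)-1+1 = (j:ℕ) from by omega)
      rw [hI]
      exact Ideal.mem_sup_left (hJ ▸ Ideal.subset_span ⟨_, hgj⟩)
  have hIeq : I = Ideal.span (Set.range X) := le_antisymm hIup hIlow
  refine ⟨hIeq, ?_, ?_⟩
  · constructor
    · rw [hJ]
      refine Ideal.subset_span ⟨⟨0, by omega⟩, ?_⟩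
      rw [hg]; simp
    · rw [hIeq, pow_two]
      exact Ideal.mul_mem_mul (Ideal.subset_span ⟨_, rfl⟩) (Ideal.subset_span ⟨_, rfl⟩)
  · -- not in J * I
    intro hmem
    set φ : MvPolynomial (Fin (n+1)) k →ₐ[k] Polynomial k :=
      aeval (fun j : Fin (n+1) => if (j:ℕ) ≤ 1 then (Polynomial.X : Polynomial k) else 0)
      with hφdef
    have hφX : ∀ j : Fin (n+1), φ (X j) = if (j:ℕ) ≤ 1 then (Polynomial.X : Polynomial k) else 0 := by
      intro j; rw [hφdef, aeval_X]
    have hφJ : ∀ a ∈ J, (Polynomial.X : Polynomial k)^2 ∣ φ a := by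
      have hle : J ≤ Ideal.comap φ.toRingHom (Ideal.span {(Polynomial.X : Polynomial k)^2}) := by
        rw [hJ, Ideal.span_le]
        rintro _ ⟨i, rfl⟩
        rw [SetLike.mem_coe, Ideal.mem_comap, Ideal.mem_span_singleton]
        by_cases hi : (i:ℕ) = 0
        · have hgi : g i = X (⟨0,h0⟩ : Fin (n+1)) * X (⟨1,h1⟩ : Fin (n+1)) := by
            rw [hg]; simp [hi]
          rw [hgi]
          show (Polynomial.X : Polynomial k)^2 ∣ φ _
          rw [map_mul, hφX, hφX, if_pos (by norm_num), if_pos (by norm_num), ← pow_two]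
        · have hgi : g i = X (⟨(i:ℕ)+1, Nat.succ_lt_succ i.isLt⟩ : Fin (n+1)) := by
            rw [hg]; simp [hi]
          rw [hgi]
          show (Polynomial.X : Polynomial k)^2 ∣ φ _
          rw [hφX, if_neg (by simp only [Fin.val_mk]; omega)]
          exact dvd_zero _
      intro a ha
      have := hle ha
      rwa [Ideal.mem_comap, Ideal.mem_span_singleton] at this
    have hφI : ∀ b ∈ I, (Polynomial.X : Polynomial k) ∣ φ b := by
      have hle : I ≤ Ideal.comap φ.toRingHom (Ideal.span {(Polynomial.X : Polynomial k)}) := by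
        rw [hIeq, Ideal.span_le]
        rintro _ ⟨j, rfl⟩
        rw [SetLike.mem_coe, Ideal.mem_comap, Ideal.mem_span_singleton]
        show (Polynomial.X : Polynomial k) ∣ φ _
        rw [hφX]
        split_ifs
        · rfl
        · exact dvd_zero _
      intro b hb
      have := hle hb
      rwa [Ideal.mem_comap, Ideal.mem_span_singleton] at this
    have hcube : (Polynomial.X : Polynomial k)^3 ∣ φ (X (⟨0,h0⟩ : Fin (n+1)) * X (⟨1,h1⟩ : Fin (n+1))) := by
      have hle : J * I ≤ Ideal.comap φ.toRingHom (Ideal.span {(Polynomial.X : Polynomial k)^3}) := by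
        rw [Ideal.mul_le]
        intro a ha b hb
        rw [Ideal.mem_comap, Ideal.mem_span_singleton]
        show (Polynomial.X : Polynomial k)^3 ∣ φ (a * b)
        rw [map_mul, pow_succ]
        exact mul_dvd_mul (hφJ a ha) (hφI b hb)
      have := hle hmem
      rwa [Ideal.mem_comap, Ideal.mem_span_singleton] at this
    rw [map_mul, hφX, hφX, if_pos (by norm_num), if_pos (by norm_num), ← pow_two] at hcube
    have := Polynomial.natDegree_le_of_dvd hcube (pow_ne_zero 2 Polynomial.X_ne_zero)
    simp [Polynomial.natDegree_X_pow] at this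
end

section
/- Let 3 ≤ s ≤ n and let J = (x_i·x_j : 0 ≤ i < j ≤ s-1) + (x_s, ..., x_n) ⊂ R = k[x_0,...,x_n] be the ideal of the first s coordinate points of P^n. Then the Jacobian ideal is I = (J, x_0^{s-1}, ..., x_{s-1}^{s-1}), and the pair (J, I) is Aluffi torsion-free, i.e., J ∩ I^t ⊆ J·I^{t-1} for all t ≥ 2. -/
set_option maxHeartbeats 1000000
open MvPolynomial

namespace Stmt2

variable (k : Type*) [Field k] (n s : ℕ)

abbrev SumT := {p : Fin (n + 1) × Fin (n + 1) // p.1 < p.2 ∧ (p.2 : ℕ) ≤ s - 1} ⊕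
      {i : Fin (n + 1) // s ≤ (i : ℕ)}

noncomputable def gens : SumT n s → MvPolynomial (Fin (n + 1)) k :=
  Sum.elim (fun p => X p.1.1 * X p.1.2) (fun i => X i.1)

noncomputable def Jid : Ideal (MvPolynomial (Fin (n + 1)) k) := Ideal.span (Set.range (gens k n s))

noncomputable def Mid : Ideal (MvPolynomial (Fin (n + 1)) k) :=
  Ideal.span {f | ∃ i : Fin (n + 1), (i : ℕ) < s ∧ f = X i ^ (s - 1)}

noncomputable def Nid (t : ℕ) : Ideal (MvPolynomial (Fin (n + 1)) k) :=
  Ideal.span {f | ∃ i : Fin (n + 1), (i : ℕ) < s ∧ f = X i ^ (t * (s - 1))}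

variable {k n s}

lemma X_mem_J {a : Fin (n + 1)} (ha : s ≤ (a : ℕ)) : X a ∈ Jid k n s :=
  Ideal.subset_span ⟨Sum.inr ⟨a, ha⟩, rfl⟩

lemma XX_mem_J (hs1 : 1 ≤ s) {a b : Fin (n + 1)} (hab : a ≠ b) :
    X (R := k) a * X b ∈ Jid k n s := by
  by_cases ha : s ≤ (a : ℕ)
  · exact Ideal.mul_mem_right _ _ (X_mem_J ha)
  by_cases hb : s ≤ (b : ℕ)
  · exact Ideal.mul_mem_left _ _ (X_mem_J hb)
  push_neg at ha hb
  rcases lt_or_gt_of_ne hab with h | h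
  · exact Ideal.subset_span ⟨Sum.inl ⟨(a, b), h, show ((b:ℕ)) ≤ s-1 by omega⟩, rfl⟩
  · rw [mul_comm]
    exact Ideal.subset_span ⟨Sum.inl ⟨(b, a), h, show ((a:ℕ)) ≤ s-1 by omega⟩, rfl⟩

lemma Xpow_mem_M {i : Fin (n + 1)} (hi : (i : ℕ) < s) : X (R := k) i ^ (s - 1) ∈ Mid k n s :=
  Ideal.subset_span ⟨i, hi, rfl⟩

/-- Substitution setting all variables except `i` to zero. -/
noncomputable def phi (i : Fin (n + 1)) :
    MvPolynomial (Fin (n + 1)) k →ₐ[k] MvPolynomial (Fin (n + 1)) k :=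
  aeval (fun j => if j = i then X i else 0)

lemma phi_X (i j : Fin (n + 1)) : phi (k := k) i (X j) = if j = i then X i else 0 := by
  simp [phi]

lemma phi_J {i : Fin (n + 1)} (hi : (i : ℕ) < s) {f : MvPolynomial (Fin (n + 1)) k}
    (hf : f ∈ Jid k n s) : phi i f = 0 := by
  have : Jid k n s ≤ RingHom.ker (phi (k := k) i).toRingHom := by
    rw [Jid, Ideal.span_le]
    rintro _ ⟨x, rfl⟩
    rcases x with p | m
    · have hne : p.1.1 ≠ p.1.2 := ne_of_lt p.2.1
      simp only [gens, Sum.elim_inl, SetLike.mem_coe, RingHom.mem_ker, AlgHom.toRingHom_eq_coe,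
        RingHom.coe_coe, map_mul, phi_X]
      by_cases h1 : p.1.1 = i
      · rw [if_neg (show p.1.2 ≠ i by rw [← h1]; exact hne.symm)]; ring
      · rw [if_neg h1]; ring
    · have hm : m.1 ≠ i := by
        have h2 := m.2; intro h; rw [h] at h2; omega
      simp only [gens, Sum.elim_inr, SetLike.mem_coe, RingHom.mem_ker, AlgHom.toRingHom_eq_coe,
        RingHom.coe_coe, phi_X, if_neg hm]
  exact this hf

/-- The ideal of all variables other than `i`. -/
noncomputable def Kid (i : Fin (n + 1)) : Ideal (MvPolynomial (Fin (n + 1)) k) :=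
  Ideal.span {g | ∃ m : Fin (n + 1), m ≠ i ∧ g = X m}

lemma sub_phi_mem (i : Fin (n + 1)) (f : MvPolynomial (Fin (n + 1)) k) :
    f - phi i f ∈ Kid (k := k) i := by
  induction f using MvPolynomial.induction_on with
  | C a => simp [phi]
  | add f g hf hg =>
      rw [map_add]
      have : f + g - (phi i f + phi i g) = (f - phi i f) + (g - phi i g) := by ring
      rw [this]; exact add_mem hf hg
  | mul_X f j hf =>
      rw [map_mul, phi_X]
      by_cases h : j = i
      · rw [if_pos h, h]
        have : f * X i - phi i f * X i = (f - phi i f) * X i := by ring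
        rw [this]; exact Ideal.mul_mem_right _ _ hf
      · rw [if_neg h, mul_zero, sub_zero]
        exact Ideal.mul_mem_left _ _ (Ideal.subset_span ⟨j, h, rfl⟩)


lemma sup_pow_le {R : Type*} [CommRing R] (A B : Ideal R) :
    ∀ r : ℕ, (A ⊔ B) ^ (r + 1) ≤ A * (A ⊔ B) ^ r ⊔ B ^ (r + 1)
  | 0 => by simp
  | (r + 1) => by
    rw [pow_succ]
    refine le_trans (Ideal.mul_mono_left (sup_pow_le A B r)) ?_
    rw [Ideal.sup_mul]
    apply sup_le
    · rw [mul_assoc, ← pow_succ]; exact le_sup_left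
    · rw [Ideal.mul_sup]
      apply sup_le
      · rw [mul_comm]
        exact le_trans (Ideal.mul_mono_right (Ideal.pow_right_mono le_sup_right _)) le_sup_left
      · rw [← pow_succ]; exact le_sup_right

lemma Mpow_le (hs3 : 3 ≤ s) (r : ℕ) :
    (Mid k n s) ^ (r + 1) ≤
      Jid k n s * (Jid k n s ⊔ Mid k n s) ^ r ⊔ Nid k n s (r + 1) := by
  induction r with
  | zero =>
    rw [pow_one]
    refine le_trans ?_ le_sup_right
    rw [Mid, Nid, Ideal.span_le]
    rintro _ ⟨i, hi, rfl⟩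
    exact Ideal.subset_span ⟨i, hi, by norm_num⟩
  | succ r ih =>
    rw [pow_succ]
    refine le_trans (Ideal.mul_mono_left ih) ?_
    rw [Ideal.sup_mul]
    apply sup_le
    · refine le_trans ?_ le_sup_left
      rw [mul_assoc]
      refine Ideal.mul_mono_right ?_
      rw [pow_succ]
      exact Ideal.mul_mono_right le_sup_right
    · rw [Nid, Mid, Ideal.span_mul_span', Ideal.span_le]
      rintro _ ⟨_, ⟨a, ha, rfl⟩, _, ⟨b, hb, rfl⟩, rfl⟩
      rw [SetLike.mem_coe]
      by_cases hab : a = b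
      · subst hab
        refine Ideal.mem_sup_right (Ideal.subset_span ⟨a, ha, ?_⟩)
        show X a ^ ((r + 1) * (s - 1)) * X a ^ (s - 1) = X a ^ ((r + 1 + 1) * (s - 1))
        rw [← pow_add]
        congr 1
        ring
      · refine Ideal.mem_sup_left ?_
        obtain ⟨m, hm⟩ : ∃ m, s = 3 + m := ⟨s - 3, by omega⟩
        have e1 : s - 1 = m + 2 := by omega
        have e3 : s - 3 = m := by omega
        have key : X (R := k) a ^ ((r + 1) * (s - 1)) * X b ^ (s - 1)
            = (X a * X b) * ((X a ^ (s - 1)) ^ r * ((X a * X b) * (X a ^ (s - 3) * X b ^ (s - 3)))) := by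
          rw [e1, e3]; ring
        show X a ^ ((r + 1) * (s - 1)) * X b ^ (s - 1) ∈ _
        rw [key, pow_succ]
        apply Ideal.mul_mem_mul
        · exact XX_mem_J (by omega) hab
        · apply Ideal.mul_mem_mul
          · exact Ideal.pow_mem_pow (Ideal.mem_sup_right (Xpow_mem_M ha)) r
          · exact Ideal.mul_mem_right _ _ (Ideal.mem_sup_left (XX_mem_J (by omega) hab))

lemma inf_N_le (hs3 : 3 ≤ s) (r : ℕ) :
    Jid k n s ⊓ Nid k n s (r + 2) ≤ Jid k n s * (Jid k n s ⊔ Mid k n s) ^ (r + 1) := by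
  intro x hx
  obtain ⟨hxJ, hxN⟩ := hx
  rw [SetLike.mem_coe] at hxJ hxN
  have hset : {f : MvPolynomial (Fin (n + 1)) k |
        ∃ i : Fin (n + 1), (i : ℕ) < s ∧ f = X i ^ ((r + 2) * (s - 1))}
      = Set.range (fun i : {i : Fin (n + 1) // (i : ℕ) < s} =>
          X (R := k) i.1 ^ ((r + 2) * (s - 1))) := by
    ext f
    constructor
    · rintro ⟨i, hi, rfl⟩; exact ⟨⟨i, hi⟩, rfl⟩
    · rintro ⟨i, rfl⟩; exact ⟨i.1, i.2, rfl⟩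
  rw [Nid, hset, Ideal.mem_span_range_iff_exists_fun] at hxN
  obtain ⟨c, hc⟩ := hxN
  have hT0 : (r + 2) * (s - 1) ≠ 0 := by
    have : 1 ≤ s - 1 := by omega
    positivity
  have hphi : ∀ j : {i : Fin (n + 1) // (i : ℕ) < s}, phi j.1 (c j) = 0 := by
    intro j
    have h0 : phi (k := k) j.1 x = 0 := phi_J j.2 hxJ
    rw [← hc, map_sum] at h0
    have hsum : (∑ i : {i : Fin (n + 1) // (i : ℕ) < s},
          phi (k := k) j.1 (c i * X i.1 ^ ((r + 2) * (s - 1))))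
        = phi (k := k) j.1 (c j * X j.1 ^ ((r + 2) * (s - 1))) := by
      refine Finset.sum_eq_single j ?_ (fun h => absurd (Finset.mem_univ j) h)
      intro i _ hij
      have hne : i.1 ≠ j.1 := fun h => hij (Subtype.ext h)
      rw [map_mul, map_pow, phi_X, if_neg hne, zero_pow hT0, mul_zero]
    rw [hsum, map_mul, map_pow, phi_X, if_pos rfl] at h0
    have hX : (X (R := k) j.1) ^ ((r + 2) * (s - 1)) ≠ 0 :=
      pow_ne_zero _ (X_ne_zero _)
    exact (mul_eq_zero.1 h0).resolve_right hX
  rw [← hc]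
  apply Ideal.sum_mem
  intro j _
  have hcj : c j = c j - phi j.1 (c j) := by rw [hphi j, sub_zero]
  rw [hcj]
  have hd : c j - phi j.1 (c j) ∈ Kid (k := k) j.1 := sub_phi_mem _ _
  have hle : Kid (k := k) j.1 * Ideal.span {X (R := k) j.1 ^ ((r + 2) * (s - 1))}
      ≤ Jid k n s * (Jid k n s ⊔ Mid k n s) ^ (r + 1) := by
    rw [Kid, Ideal.span_mul_span', Ideal.span_le]
    rintro _ ⟨_, ⟨mm, hmj, rfl⟩, y, hy, rfl⟩
    rw [Set.mem_singleton_iff] at hy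
    subst hy
    rw [SetLike.mem_coe]
    have e : (r + 2) * (s - 1) = 1 + ((s - 1) * (r + 1) + (s - 2)) := by
      obtain ⟨u, hu⟩ : ∃ u, s = u + 3 := ⟨s - 3, by omega⟩
      subst hu
      have e1 : u + 3 - 1 = u + 2 := by omega
      have e2 : u + 3 - 2 = u + 1 := by omega
      rw [e1, e2]; ring
    have key : X (R := k) mm * X j.1 ^ ((r + 2) * (s - 1))
        = (X mm * X j.1) * ((X j.1 ^ (s - 1)) ^ (r + 1) * X j.1 ^ (s - 2)) := by
      rw [e, pow_add, pow_add, pow_one, ← pow_mul]; ring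
    show X (R := k) mm * X j.1 ^ ((r + 2) * (s - 1)) ∈ _
    rw [key]
    apply Ideal.mul_mem_mul
    · exact XX_mem_J (by omega) hmj
    · exact Ideal.mul_mem_right _ _
        (Ideal.pow_mem_pow (Ideal.mem_sup_right (Xpow_mem_M j.2)) _)
  exact hle (Ideal.mul_mem_mul hd (Ideal.subset_span rfl))

lemma part2 (hs3 : 3 ≤ s) (t : ℕ) (ht : 2 ≤ t) :
    Jid k n s ⊓ (Jid k n s ⊔ Mid k n s) ^ t
      ≤ Jid k n s * (Jid k n s ⊔ Mid k n s) ^ (t - 1) := by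
  obtain ⟨r, rfl⟩ : ∃ r, t = r + 2 := ⟨t - 2, by omega⟩
  have hAJ : Jid k n s * (Jid k n s ⊔ Mid k n s) ^ (r + 1) ≤ Jid k n s := le_trans Ideal.mul_le_inf inf_le_left
  refine le_trans (inf_le_inf_left _ (sup_pow_le _ _ (r + 1))) ?_
  rw [inf_comm, sup_inf_assoc_of_le _ hAJ]
  refine sup_le le_rfl ?_
  refine le_trans (inf_le_inf_right _ (Mpow_le hs3 (r + 1))) ?_
  rw [sup_inf_assoc_of_le _ hAJ]
  refine sup_le le_rfl ?_
  rw [inf_comm]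
  exact inf_N_le hs3 r

noncomputable def theta : Matrix (SumT n s) (Fin (n + 1)) (MvPolynomial (Fin (n + 1)) k) :=
  fun r j => pderiv j (gens k n s r)

variable (k n s)

lemma theta_inl (p : {p : Fin (n + 1) × Fin (n + 1) // p.1 < p.2 ∧ (p.2 : ℕ) ≤ s - 1})
    (j : Fin (n + 1)) :
    theta (k := k) (n := n) (s := s) (Sum.inl p) j =
      if j = p.1.1 then X p.1.2 else if j = p.1.2 then X p.1.1 else 0 := by
  have hne : p.1.1 ≠ p.1.2 := ne_of_lt p.2.1
  show pderiv j (X p.1.1 * X p.1.2) = _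
  rw [pderiv_mul]
  rcases eq_or_ne j p.1.1 with h1 | h1
  · subst h1
    rw [pderiv_X_self, pderiv_X_of_ne hne.symm, if_pos rfl]
    ring
  · rw [pderiv_X_of_ne (Ne.symm h1), if_neg h1]
    rcases eq_or_ne j p.1.2 with h2 | h2
    · subst h2
      rw [pderiv_X_self, if_pos rfl]
      ring
    · rw [pderiv_X_of_ne (Ne.symm h2), if_neg h2]
      ring

lemma theta_inr (m : {i : Fin (n + 1) // s ≤ (i : ℕ)}) (j : Fin (n + 1)) :
    theta (k := k) (n := n) (s := s) (Sum.inr m) j = if j = m.1 then 1 else 0 := by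
  show pderiv j (X m.1) = _
  rcases eq_or_ne j m.1 with h | h
  · subst h; rw [pderiv_X_self, if_pos rfl]
  · rw [pderiv_X_of_ne (Ne.symm h), if_neg h]

variable {k n s}

lemma card_filter_lt {N m : ℕ} (h : m ≤ N) :
    (Finset.univ.filter (fun a : Fin N => (a : ℕ) < m)).card = m := by
  have : Finset.univ.filter (fun a : Fin N => (a : ℕ) < m)
      = Finset.map (Fin.castLEEmb h) Finset.univ := by
    ext a
    simp only [Finset.mem_filter, Finset.mem_univ, true_and, Finset.mem_map]
    constructor
    · intro ha; exact ⟨⟨a, ha⟩, by ext; simp⟩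
    · rintro ⟨b, -, rfl⟩; exact b.isLt
  rw [this, Finset.card_map, Finset.card_univ, Fintype.card_fin]

lemma prod_X_mem (hs3 : 3 ≤ s) {β : Type*} [DecidableEq β] (T : Finset β)
    (v : β → Fin (n + 1)) (hv : ∀ b ∈ T, (v b : ℕ) < s) (hcard : s - 1 ≤ T.card) :
    (∏ b ∈ T, X (R := k) (v b)) ∈ Jid k n s ⊔ Mid k n s := by
  by_cases hdiff : ∃ a ∈ T, ∃ b ∈ T, v a ≠ v b
  · obtain ⟨a, ha, b, hb, hab⟩ := hdiff
    have hne : a ≠ b := fun h => hab (h ▸ rfl)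
    have hb' : b ∈ T.erase a := Finset.mem_erase.2 ⟨hne.symm, hb⟩
    rw [← Finset.mul_prod_erase T _ ha, ← Finset.mul_prod_erase _ _ hb', ← mul_assoc]
    exact Ideal.mul_mem_right _ _ (Ideal.mem_sup_left (XX_mem_J (by omega) hab))
  · push_neg at hdiff
    have hT0 : T.Nonempty := Finset.card_pos.1 (by omega)
    obtain ⟨a, ha⟩ := hT0
    have hconst : ∀ b ∈ T, X (R := k) (v b) = X (v a) := fun b hb => by rw [hdiff b hb a ha]
    rw [Finset.prod_congr rfl hconst, Finset.prod_const]
    have hcc : T.card = (s - 1) + (T.card - (s - 1)) := by omega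
    rw [hcc, pow_add]
    exact Ideal.mul_mem_right _ _ (Ideal.mem_sup_right (Xpow_mem_M (hv a ha)))

lemma minors_le (hs3 : 3 ≤ s) (hsn : s ≤ n) :
    minorsIdeal (theta (k := k) (n := n) (s := s)) n ≤ Jid k n s ⊔ Mid k n s := by
  rw [minorsIdeal, Ideal.span_le]
  rintro d ⟨f, cl, rfl⟩
  rw [SetLike.mem_coe]
  by_cases hf : Function.Injective f
  · rw [Matrix.det_apply']
    apply Ideal.sum_mem
    intro σ _
    apply Ideal.mul_mem_left
    classical
    set L := Finset.univ.filter (fun b : Fin n => (f (σ b)).isLeft) with hL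
    have hcard : s - 1 ≤ L.card := by
      have h2 : (Finset.univ.filter (fun b : Fin n => ¬ (f (σ b)).isLeft)).card
          ≤ (Finset.univ.filter (fun i : Fin (n + 1) => s ≤ (i : ℕ))).card := by
        apply Finset.card_le_card_of_injOn
          (fun b => Sum.elim (fun _ => (0 : Fin (n + 1))) (fun m => m.1) (f (σ b)))
        · intro b hb
          rw [Finset.mem_coe, Finset.mem_filter] at hb
          rcases hq : f (σ b) with p | m
          · simp [hq] at hb
          · simp only [hq, Sum.elim_inr, Finset.mem_coe, Finset.mem_filter, Finset.mem_univ, true_and]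
            exact m.2
        · intro b hb b' hb' heq
          rw [Finset.mem_coe, Finset.mem_filter] at hb hb'
          rcases hq : f (σ b) with p | m
          · simp [hq] at hb
          rcases hq' : f (σ b') with p' | m'
          · simp [hq'] at hb'
          simp only [hq, hq', Sum.elim_inr] at heq
          have hfe : f (σ b) = f (σ b') := by rw [hq, hq']; exact congrArg _ (Subtype.ext heq)
          exact σ.injective (hf hfe)
      have h3 : (Finset.univ.filter (fun i : Fin (n + 1) => s ≤ (i : ℕ))).card = n + 1 - s := by
        have : (Finset.univ.filter (fun i : Fin (n + 1) => s ≤ (i : ℕ)))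
            = Finset.univ.filter (fun i : Fin (n + 1) => ¬ ((i : ℕ) < s)) := by
          apply Finset.filter_congr; intro i _; simp [not_lt]
        rw [this, Finset.filter_not, Finset.card_sdiff_of_subset (Finset.filter_subset _ _),
          Finset.card_univ, Fintype.card_fin, card_filter_lt (by omega : s ≤ n + 1)]
      have h4 := Finset.card_filter_add_card_filter_not
        (s := (Finset.univ : Finset (Fin n))) (p := fun b : Fin n => (f (σ b)).isLeft = true)
      rw [Finset.card_univ, Fintype.card_fin] at h4
      rw [hL]
      have h5 : (Finset.univ.filter (fun b : Fin n => ¬ (f (σ b)).isLeft)).card ≤ n + 1 - s :=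
        le_trans h2 (le_of_eq h3)
      omega
    by_cases hz : ∃ b : Fin n, (theta (k := k)).submatrix f cl (σ b) b = 0
    · obtain ⟨b, hb0⟩ := hz
      rw [Finset.prod_eq_zero (f := fun i => (theta (k := k)).submatrix f cl (σ i) i)
        (Finset.mem_univ b) hb0]
      exact zero_mem _
    · push_neg at hz
      have hsplit := Finset.prod_filter_mul_prod_filter_not (Finset.univ : Finset (Fin n))
        (fun b : Fin n => (f (σ b)).isLeft = true)
        (fun b => (theta (k := k)).submatrix f cl (σ b) b)
      rw [← hsplit]
      apply Ideal.mul_mem_right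
      have hw : ∀ b ∈ L, ∃ w : Fin (n + 1), (w : ℕ) < s ∧
          (theta (k := k)).submatrix f cl (σ b) b = X w := by
        intro b hb
        rw [hL, Finset.mem_filter] at hb
        obtain ⟨p, hp⟩ := Sum.isLeft_iff.1 hb.2
        have hps1 : (p.1.1 : ℕ) < s := by have := p.2.1; have := p.2.2; omega
        have hps2 : (p.1.2 : ℕ) < s := by have := p.2.2; omega
        by_cases h1 : cl b = p.1.1
        · exact ⟨p.1.2, hps2, by
            rw [Matrix.submatrix_apply, hp, theta_inl, if_pos h1]⟩
        · by_cases h2 : cl b = p.1.2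
          · exact ⟨p.1.1, hps1, by
              rw [Matrix.submatrix_apply, hp, theta_inl, if_neg h1, if_pos h2]⟩
          · exfalso
            apply hz b
            rw [Matrix.submatrix_apply, hp, theta_inl, if_neg h1, if_neg h2]
      choose w hw1 hw2 using hw
      let v : Fin n → Fin (n + 1) := fun b => if hb : b ∈ L then w b hb else 0
      have hpr : (∏ b ∈ L, (theta (k := k)).submatrix f cl (σ b) b) = ∏ b ∈ L, X (v b) := by
        refine Finset.prod_congr rfl (fun b hb => ?_)
        rw [hw2 b hb]
        simp only [v, dif_pos hb]
      rw [hpr]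
      refine prod_X_mem hs3 L v (fun b hb => ?_) hcard
      simp only [v, dif_pos hb]
      exact hw1 b hb
  · rw [Function.not_injective_iff] at hf
    obtain ⟨a, b, hfab, hab⟩ := hf
    have hrow : (theta (k := k)).submatrix f cl a = (theta (k := k)).submatrix f cl b := by
      funext j
      rw [Matrix.submatrix_apply, Matrix.submatrix_apply, hfab]
    rw [Matrix.det_zero_of_row_eq hab hrow]
    exact zero_mem _

noncomputable def colf (i : Fin (n + 1)) : Fin n → Fin (n + 1) := fun a =>
  if (a : ℕ) < (i : ℕ) then ⟨a, Nat.lt_succ_of_lt a.isLt⟩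
  else ⟨(a : ℕ) + 1, Nat.succ_lt_succ a.isLt⟩

noncomputable def rowf (hs3 : 3 ≤ s) (hsn : s ≤ n) (i : Fin (n + 1)) (hi : (i : ℕ) < s) :
    Fin n → SumT n s := fun a =>
  if h : (a : ℕ) < s - 1 then
    (if h2 : (a : ℕ) < (i : ℕ) then
      Sum.inl ⟨(⟨a, Nat.lt_succ_of_lt a.isLt⟩, i),
        ⟨show (a : ℕ) < (i : ℕ) from h2, show (i : ℕ) ≤ s - 1 by omega⟩⟩
    else
      Sum.inl ⟨(i, ⟨(a : ℕ) + 1, Nat.succ_lt_succ a.isLt⟩),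
        ⟨show (i : ℕ) < (a : ℕ) + 1 by omega, show (a : ℕ) + 1 ≤ s - 1 by omega⟩⟩)
  else Sum.inr ⟨⟨(a : ℕ) + 1, Nat.succ_lt_succ a.isLt⟩, show s ≤ (a : ℕ) + 1 by omega⟩

lemma submatrix_eq_diagonal (hs3 : 3 ≤ s) (hsn : s ≤ n) (i : Fin (n + 1)) (hi : (i : ℕ) < s) :
    (theta (k := k) (n := n) (s := s)).submatrix (rowf hs3 hsn i hi) (colf i)
      = Matrix.diagonal (fun a : Fin n => if (a : ℕ) < s - 1 then X (R := k) i else 1) := by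
  ext a b
  rw [Matrix.submatrix_apply, Matrix.diagonal_apply]
  by_cases hab : a = b
  · subst hab
    rw [if_pos rfl]
    by_cases h : (a : ℕ) < s - 1
    · rw [if_pos h]
      by_cases h2 : (a : ℕ) < (i : ℕ)
      · rw [rowf, dif_pos h, dif_pos h2, colf, if_pos h2, theta_inl, if_pos rfl]
      · rw [rowf, dif_pos h, dif_neg h2, colf, if_neg h2, theta_inl,
          if_neg (by intro hcon; rw [Fin.ext_iff] at hcon; simp at hcon; omega),
          if_pos rfl]
    · rw [if_neg h, rowf, dif_neg h, colf, if_neg (by omega), theta_inr, if_pos rfl]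
  · rw [if_neg hab]
    have habv : (a : ℕ) ≠ (b : ℕ) := fun hcon => hab (Fin.ext hcon)
    by_cases h : (a : ℕ) < s - 1
    · by_cases h2 : (a : ℕ) < (i : ℕ)
      · rw [rowf, dif_pos h, dif_pos h2, theta_inl, colf]
        by_cases hb : (b : ℕ) < (i : ℕ)
        · rw [if_pos hb,
            if_neg (by intro hcon; rw [Fin.ext_iff] at hcon; simp at hcon; omega),
            if_neg (by intro hcon; rw [Fin.ext_iff] at hcon; simp at hcon; omega)]
        · rw [if_neg hb,
            if_neg (by intro hcon; rw [Fin.ext_iff] at hcon; simp at hcon; omega),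
            if_neg (by intro hcon; rw [Fin.ext_iff] at hcon; simp at hcon; omega)]
      · rw [rowf, dif_pos h, dif_neg h2, theta_inl, colf]
        by_cases hb : (b : ℕ) < (i : ℕ)
        · rw [if_pos hb,
            if_neg (by intro hcon; rw [Fin.ext_iff] at hcon; simp at hcon; omega),
            if_neg (by intro hcon; rw [Fin.ext_iff] at hcon; simp at hcon; omega)]
        · rw [if_neg hb,
            if_neg (by intro hcon; rw [Fin.ext_iff] at hcon; simp at hcon; omega),
            if_neg (by intro hcon; rw [Fin.ext_iff] at hcon; simp at hcon; omega)]
    · rw [rowf, dif_neg h, theta_inr, colf]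
      by_cases hb : (b : ℕ) < (i : ℕ)
      · rw [if_pos hb,
          if_neg (by intro hcon; rw [Fin.ext_iff] at hcon; simp at hcon; omega)]
      · rw [if_neg hb,
          if_neg (by intro hcon; rw [Fin.ext_iff] at hcon; simp at hcon; omega)]

lemma Xpow_mem_minors (hs3 : 3 ≤ s) (hsn : s ≤ n) (i : Fin (n + 1)) (hi : (i : ℕ) < s) :
    X (R := k) i ^ (s - 1) ∈ minorsIdeal (theta (k := k) (n := n) (s := s)) n := by
  apply Ideal.subset_span
  refine ⟨rowf hs3 hsn i hi, colf i, ?_⟩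
  rw [submatrix_eq_diagonal hs3 hsn i hi, Matrix.det_diagonal, Finset.prod_ite,
    Finset.prod_const, Finset.prod_const_one, mul_one, card_filter_lt (by omega : s - 1 ≤ n)]

lemma part1 (hs3 : 3 ≤ s) (hsn : s ≤ n) :
    Jid k n s ⊔ Mid k n s = Jid k n s ⊔ minorsIdeal (theta (k := k) (n := n) (s := s)) n := by
  apply le_antisymm
  · refine sup_le le_sup_left ?_
    rw [Mid, Ideal.span_le]
    rintro _ ⟨i, hi, rfl⟩
    exact Ideal.mem_sup_right (Xpow_mem_minors hs3 hsn i hi)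
  · exact sup_le le_sup_left (minors_le hs3 hsn)

end Stmt2

/-- For `J = (xᵢxⱼ : 0 ≤ i < j ≤ s-1) + (x_s,…,xₙ)` (ideal of the first `s`
coordinate points of `ℙⁿ`, `3 ≤ s ≤ n`), the Jacobian ideal is
`I = (J, x₀^{s-1},…,x_{s-1}^{s-1})` and the pair `(J, I)` is Aluffi torsion-free. -/
theorem stmt_2 {k : Type*} [Field k] (n s : ℕ) (hs3 : 3 ≤ s) (hsn : s ≤ n)
    (ι : Type) (hι : ι = ({p : Fin (n + 1) × Fin (n + 1) // p.1 < p.2 ∧ (p.2 : ℕ) ≤ s - 1} ⊕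
      {i : Fin (n + 1) // s ≤ (i : ℕ)}))
    (g : ι → MvPolynomial (Fin (n + 1)) k)
    (hg : g = hι ▸ (Sum.elim (fun p => X p.1.1 * X p.1.2) (fun i => X i.1)))
    (J I : Ideal (MvPolynomial (Fin (n + 1)) k))
    (hJ : J = Ideal.span (Set.range g))
    (Θ : Matrix ι (Fin (n + 1)) (MvPolynomial (Fin (n + 1)) k))
    (hΘ : Θ = fun i j => pderiv j (g i))
    (hI : I = J ⊔ Ideal.span {f | ∃ i : Fin (n + 1), (i : ℕ) < s ∧ f = X i ^ (s - 1)}) :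
    I = J ⊔ minorsIdeal Θ n ∧
    ∀ t : ℕ, 2 ≤ t → J ⊓ I ^ t ≤ J * I ^ (t - 1) := by
  subst hι
  subst hg
  subst hJ
  subst hΘ
  subst hI
  constructor
  · exact Stmt2.part1 hs3 hsn
  · intro t ht
    exact Stmt2.part2 hs3 t ht
end

section
/- Let J = (x_i·x_j : 0 ≤ i < j ≤ s-1) + (x_s,...,x_n) ⊂ k[x_0,...,x_n] with 3 ≤ s ≤ n, and let Θ be the Jacobian matrix of these generators. Then the ideal of n-minors of Θ satisfies I_n(Θ) = (x_0, x_1, ..., x_{s-1})^{s-1}. -/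
open MvPolynomial Pointwise

lemma prod_mem_pow_card {R : Type*} [CommRing R] (I : Ideal R) {ι : Type*} [DecidableEq ι]
    (T : Finset ι) (f : ι → R) (hf : ∀ i ∈ T, f i ∈ I) : ∏ i ∈ T, f i ∈ I ^ T.card := by
  induction T using Finset.induction with
  | empty => simp
  | insert a T' ha ih =>
    rw [Finset.prod_insert ha, Finset.card_insert_of_notMem ha, pow_succ']
    exact Ideal.mul_mem_mul (hf a (Finset.mem_insert_self a T'))
      (ih fun i hi => hf i (Finset.mem_insert_of_mem hi))

lemma flatMap_rep_getElem {α : Type*} (c : α → ℕ) :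
    ∀ (d : List α), (∀ x ∈ d, 1 ≤ c x) →
      ∀ t (ht : t < (d.flatMap fun x => List.replicate (c x) x).length),
        ∃ j, j ≤ t ∧ ∃ hj : j < d.length,
          (d.flatMap fun x => List.replicate (c x) x)[t] = d[j] := by
  intro d
  induction d with
  | nil => intro _ t ht; simp at ht
  | cons x d' ih =>
    intro hc t ht
    have heq : ((x :: d').flatMap fun x => List.replicate (c x) x)
        = List.replicate (c x) x ++ d'.flatMap fun x => List.replicate (c x) x :=
      List.flatMap_cons ..
    have ht2 : t < (List.replicate (c x) x ++
        d'.flatMap fun x => List.replicate (c x) x).length := by rw [← heq]; exact ht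
    by_cases h : t < c x
    · refine ⟨0, Nat.zero_le _, Nat.succ_pos _, ?_⟩
      rw [List.getElem_of_eq heq, List.getElem_append_left (by simpa using h)]
      simp
    · push_neg at h
      have hcx : 1 ≤ c x := hc x List.mem_cons_self
      have ht' : t - (List.replicate (c x) x).length <
          (d'.flatMap fun y => List.replicate (c y) y).length := by
        rw [List.length_append] at ht2
        simp only [List.length_replicate] at ht2 ⊢
        omega
      obtain ⟨j, hj1, hj2, hj3⟩ := ih (fun y hy => hc y (List.mem_cons_of_mem x hy))
        _ ht'
      refine ⟨j + 1, by simp [List.length_replicate] at hj1 ⊢; omega, by simpa using hj2, ?_⟩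
      rw [List.getElem_of_eq heq, List.getElem_append_right (by simpa using h)]
      simpa using hj3

lemma count_flatMap_rep {α : Type*} [DecidableEq α] (c : α → ℕ) :
    ∀ (d : List α), d.Nodup → ∀ x,
      (d.flatMap fun y => List.replicate (c y) y).count x = if x ∈ d then c x else 0 := by
  intro d
  induction d with
  | nil => simp
  | cons y d' ih =>
    intro hnd x
    rw [List.flatMap_cons, List.count_append, List.count_replicate,
      ih (List.nodup_cons.mp hnd).2 x]
    by_cases hxy : x = y
    · subst hxy
      simp [(List.nodup_cons.mp hnd).1]
    · simp only [List.mem_cons, hxy, false_or]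
      rw [if_neg (by simp only [beq_iff_eq]; exact fun h => hxy h.symm)]
      simp


lemma card_filter_lt (n s : ℕ) (hs : s ≤ n + 1) :
    (Finset.univ.filter fun i : Fin (n + 1) => (i : ℕ) < s).card = s := by
  have : (Finset.univ.filter fun i : Fin (n + 1) => (i : ℕ) < s)
      = Finset.univ.map (Fin.castLEEmb hs) := by
    ext i
    simp only [Finset.mem_filter, Finset.mem_univ, true_and, Finset.mem_map,
      Fin.castLEEmb_apply]
    constructor
    · intro hi
      exact ⟨⟨(i : ℕ), hi⟩, by simp [Fin.ext_iff]⟩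
    · rintro ⟨j, rfl⟩
      simpa using j.isLt
  rw [this, Finset.card_map, Finset.card_univ, Fintype.card_fin]

lemma card_ge_subtype (n s : ℕ) (hs : s ≤ n + 1) :
    Fintype.card {i : Fin (n + 1) // s ≤ (i : ℕ)} = n + 1 - s := by
  rw [Fintype.card_subtype]
  have : (Finset.univ.filter fun i : Fin (n + 1) => s ≤ (i : ℕ))
      = Finset.univ \ (Finset.univ.filter fun i : Fin (n + 1) => (i : ℕ) < s) := by
    rw [← Finset.filter_not]
    exact Finset.filter_congr (by intro i _; simp [not_lt])
  rw [this, Finset.card_sdiff_of_subset (Finset.filter_subset _ _), card_filter_lt n s hs]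
  simp

theorem dir2 {k : Type*} [Field k] (n s : ℕ) (hs3 : 3 ≤ s) (hsn : s ≤ n) :
    (Ideal.span {f : MvPolynomial (Fin (n + 1)) k | ∃ i : Fin (n + 1), (i : ℕ) < s ∧ f = X i}) ^ (s - 1) ≤
    minorsIdeal (fun (r : ({p : Fin (n + 1) × Fin (n + 1) // p.1 < p.2 ∧ (p.2 : ℕ) ≤ s - 1} ⊕
      {i : Fin (n + 1) // s ≤ (i : ℕ)})) (j : Fin (n + 1)) =>
        pderiv j (Sum.elim (fun p => X p.1.1 * X p.1.2) (fun i => X i.1) r)) n := by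
  classical
  set R := MvPolynomial (Fin (n + 1)) k
  set S : Set R := {f | ∃ i : Fin (n + 1), (i : ℕ) < s ∧ f = X i} with hS
  have hspow : (Ideal.span S) ^ (s - 1) = Ideal.span (S ^ (s - 1)) := Submodule.span_pow S (s - 1)
  rw [hspow, Ideal.span_le]
  rintro d hd
  rw [Set.mem_pow] at hd
  obtain ⟨w, hw⟩ := hd
  choose wi hwi1 hwi2 using fun t => (w t).2
  -- lists
  set lw : List (Fin (n + 1)) := List.ofFn wi with hlw
  have hlwlen : lw.length = s - 1 := by simp [hlw]
  have hlwmem : ∀ x ∈ lw, (x : ℕ) < s := by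
    intro x hx
    rw [hlw, List.mem_ofFn] at hx
    obtain ⟨t, rfl⟩ := hx
    exact hwi1 t
  set dd := lw.dedup with hdd
  set pl := dd.flatMap (fun x => List.replicate (lw.count x) x) with hpl
  have hperm : pl.Perm lw := by
    rw [List.perm_iff_count]
    intro x
    rw [hpl, count_flatMap_rep _ _ (List.nodup_dedup lw) x]
    by_cases hx : x ∈ dd
    · rw [if_pos hx]
    · rw [if_neg hx]
      symm
      rw [List.count_eq_zero]
      intro hxl
      exact hx (List.mem_dedup.mpr hxl)
  have hpllen : pl.length = s - 1 := hperm.length_eq.trans hlwlen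
  set rest := (List.finRange (n + 1)).filter (fun i : Fin (n+1) => decide ((i : ℕ) < s ∧ i ∉ dd)) with hrest
  set vl := dd ++ rest with hvl
  have hddmem : ∀ x ∈ dd, (x : ℕ) < s := fun x hx => hlwmem x (List.mem_dedup.mp hx)
  have hvlmem : ∀ x : Fin (n + 1), x ∈ vl ↔ (x : ℕ) < s := by
    intro x
    rw [hvl, List.mem_append]
    constructor
    · rintro (hx | hx)
      · exact hddmem x hx
      · rw [hrest, List.mem_filter, decide_eq_true_iff] at hx
        exact hx.2.1
    · intro hx
      by_cases hxd : x ∈ dd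
      · exact Or.inl hxd
      · refine Or.inr ?_
        rw [hrest, List.mem_filter, decide_eq_true_iff]
        exact ⟨List.mem_finRange x, hx, hxd⟩
  have hvlnd : vl.Nodup := by
    rw [hvl]
    refine List.Nodup.append (List.nodup_dedup lw) ((List.nodup_finRange _).filter _) ?_
    intro x hx hx2
    rw [hrest, List.mem_filter, decide_eq_true_iff] at hx2
    exact hx2.2.2 hx
  have hvllen : vl.length = s := by
    have h1 : vl.toFinset = Finset.univ.filter fun i : Fin (n + 1) => (i : ℕ) < s := by
      ext x
      rw [List.mem_toFinset, hvlmem, Finset.mem_filter]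
      simp
    have h2 := List.toFinset_card_of_nodup hvlnd
    rw [h1, card_filter_lt n s (by omega)] at h2
    omega
  -- vertex and parent functions
  set v : Fin (s - 1) → Fin (n + 1) := fun t => vl.get ⟨(t : ℕ) + 1, by rw [hvllen]; omega⟩
    with hv
  set p : Fin (s - 1) → Fin (n + 1) := fun t => pl.get ⟨(t : ℕ), by rw [hpllen]; exact t.isLt⟩
    with hp
  have hddle : dd.length ≤ vl.length := by rw [hvl, List.length_append]; omega
  have hpidx : ∀ t : Fin (s - 1), ∃ j, j ≤ (t : ℕ) ∧ ∃ hj : j < vl.length,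
      p t = vl.get ⟨j, hj⟩ := by
    intro t
    obtain ⟨j, hj1, hj2, hj3⟩ := flatMap_rep_getElem (fun x => lw.count x) dd
      (fun x hx => List.count_pos_iff.mpr (List.mem_dedup.mp hx))
      (t : ℕ) (by rw [← hpl, hpllen]; exact t.isLt)
    refine ⟨j, hj1, lt_of_lt_of_le hj2 hddle, ?_⟩
    have h4 : vl[j]'(lt_of_lt_of_le hj2 hddle) = dd[j]'hj2 :=
      List.getElem_append_left hj2
    simp only [hp, List.get_eq_getElem]
    exact hj3.trans h4.symm
  have hvlt : ∀ t, (v t : ℕ) < s := by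
    intro t
    rw [← hvlmem]
    exact List.get_mem vl _
  have hplt : ∀ t, (p t : ℕ) < s := by
    intro t
    obtain ⟨j, _, hj, heq⟩ := hpidx t
    rw [heq, ← hvlmem]
    exact List.get_mem vl _
  have hvinj : Function.Injective v := by
    intro t t' htt
    rw [hv] at htt
    have := (List.Nodup.get_inj_iff hvlnd).mp htt
    rw [Fin.mk.injEq] at this
    exact Fin.ext (by omega)
  have hpv : ∀ t t' : Fin (s - 1), (t : ℕ) ≤ (t' : ℕ) → p t ≠ v t' := by
    intro t t' htt heq
    obtain ⟨j, hj1, hj, heq'⟩ := hpidx t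
    rw [heq'] at heq
    have := (List.Nodup.get_inj_iff hvlnd).mp heq
    rw [Fin.mk.injEq] at this
    omega
  have hpvself : ∀ t, p t ≠ v t := fun t => hpv t t le_rfl
  -- the target product
  have hd2 : d = ∏ t : Fin (s - 1), (X (wi t) : R) := by
    have hfe : (fun i => ((w i : R))) = fun i => X (wi i) := funext hwi2
    rw [← hw, hfe, List.prod_ofFn]
  have hprodp : ∏ t : Fin (s - 1), (X (p t) : R) = d := by
    have hmapeq : pl.map X = List.ofFn (fun t : Fin (s - 1) => (X (p t) : R)) := by
      apply List.ext_getElem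
      · simp [hpllen]
      · intro i h1 h2
        simp only [List.getElem_map, List.getElem_ofFn]
        rfl
    have : (pl.map X).prod = ((lw.map X).prod : R) := (hperm.map X).prod_eq
    rw [hmapeq] at this
    rw [List.prod_ofFn] at this
    rw [this, hd2, hlw]
    rw [List.map_ofFn, List.prod_ofFn]
    rfl
  -- the edge rows
  have hvle : ∀ t : Fin (s - 1), (v t : ℕ) ≤ s - 1 := fun t => by have := hvlt t; omega
  have hple : ∀ t : Fin (s - 1), (p t : ℕ) ≤ s - 1 := fun t => by have := hplt t; omega
  set ee : Fin (s - 1) → {q : Fin (n + 1) × Fin (n + 1) // q.1 < q.2 ∧ ((q.2 : ℕ) ≤ s - 1)} :=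
    fun t =>
      if h : p t < v t then ⟨(p t, v t), h, hvle t⟩
      else ⟨(v t, p t), lt_of_le_of_ne (not_lt.mp h) (fun he => hpvself t he.symm), hple t⟩
    with hee
  set F : Fin n → ({q : Fin (n + 1) × Fin (n + 1) // q.1 < q.2 ∧ ((q.2 : ℕ) ≤ s - 1)} ⊕
      {i : Fin (n + 1) // s ≤ (i : ℕ)}) := fun t =>
    if h : (t : ℕ) < s - 1 then Sum.inl (ee ⟨(t : ℕ), h⟩)
    else Sum.inr ⟨⟨(t : ℕ) + 1, by omega⟩, by show s ≤ (t : ℕ) + 1; omega⟩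
    with hF
  set G : Fin n → Fin (n + 1) := fun t =>
    if h : (t : ℕ) < s - 1 then v ⟨(t : ℕ), h⟩ else ⟨(t : ℕ) + 1, by omega⟩ with hG
  apply Ideal.subset_span
  refine ⟨F, G, ?_⟩
  have hzero : ∀ a b c : Fin (n + 1), a ≠ c → b ≠ c → pderiv c (X a * X b : R) = 0 := by
    intro a b c ha hb
    rw [pderiv_mul, pderiv_X_of_ne ha, pderiv_X_of_ne hb]
    simp
  have hXl : ∀ a c : Fin (n + 1), a ≠ c → pderiv c (X a * X c : R) = X a := by
    intro a c ha
    rw [pderiv_mul, pderiv_X_of_ne ha, pderiv_X_self]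
    simp
  have hXr : ∀ a c : Fin (n + 1), a ≠ c → pderiv c (X c * X a : R) = X a := by
    intro a c ha
    rw [pderiv_mul, pderiv_X_of_ne ha, pderiv_X_self]
    simp
  set M : Matrix (Fin n) (Fin n) R := (Matrix.of fun (r : ({q : Fin (n + 1) × Fin (n + 1) //
      q.1 < q.2 ∧ ((q.2 : ℕ) ≤ s - 1)} ⊕ {i : Fin (n + 1) // s ≤ (i : ℕ)})) (j : Fin (n + 1)) =>
      pderiv j (Sum.elim (fun q => X q.1.1 * X q.1.2) (fun i => X i.1) r)).submatrix F G
    with hM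
  have htri : Matrix.BlockTriangular M OrderDual.toDual := by
    intro i j hij
    have hij' : i < j := hij
    have hijv : (i : ℕ) < (j : ℕ) := hij'
    show pderiv (G j) (Sum.elim (fun q => X q.1.1 * X q.1.2) (fun i => X i.1) (F i)) = 0
    by_cases hi : (i : ℕ) < s - 1 <;> by_cases hj : (j : ℕ) < s - 1
    · simp only [hF, hG, dif_pos hi, dif_pos hj, Sum.elim_inl]
      have h1 : p ⟨(i : ℕ), hi⟩ ≠ v ⟨(j : ℕ), hj⟩ := hpv _ _ (by simp; omega)
      have h2 : v ⟨(i : ℕ), hi⟩ ≠ v ⟨(j : ℕ), hj⟩ := fun he => by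
        have := hvinj he
        rw [Fin.mk.injEq] at this
        omega
      simp only [hee]
      by_cases h : p ⟨(i : ℕ), hi⟩ < v ⟨(i : ℕ), hi⟩
      · rw [dif_pos h]
        exact hzero _ _ _ h1 h2
      · rw [dif_neg h]
        exact hzero _ _ _ h2 h1
    · simp only [hF, hG, dif_pos hi, dif_neg hj, Sum.elim_inl]
      have hbig : s ≤ (j : ℕ) + 1 := by omega
      simp only [hee]
      by_cases h : p ⟨(i : ℕ), hi⟩ < v ⟨(i : ℕ), hi⟩
      · rw [dif_pos h]
        refine hzero _ _ _ (Fin.ne_of_val_ne ?_) (Fin.ne_of_val_ne ?_) <;> simp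
        · have := hplt ⟨(i : ℕ), hi⟩; omega
        · have := hvlt ⟨(i : ℕ), hi⟩; omega
      · rw [dif_neg h]
        refine hzero _ _ _ (Fin.ne_of_val_ne ?_) (Fin.ne_of_val_ne ?_) <;> simp
        · have := hvlt ⟨(i : ℕ), hi⟩; omega
        · have := hplt ⟨(i : ℕ), hi⟩; omega
    · simp only [hF, hG, dif_neg hi, dif_pos hj, Sum.elim_inr]
      refine pderiv_X_of_ne (Fin.ne_of_val_ne ?_)
      have := hvlt ⟨(j : ℕ), hj⟩
      simp
      omega
    · simp only [hF, hG, dif_neg hi, dif_neg hj, Sum.elim_inr]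
      refine pderiv_X_of_ne (Fin.ne_of_val_ne ?_)
      simp
      omega
  set F' : ℕ → R := fun i => if h : i < s - 1 then X (p ⟨i, h⟩) else 1 with hF'
  have hdiag : ∀ i : Fin n, M i i = F' (i : ℕ) := by
    intro i
    show pderiv (G i) (Sum.elim (fun q => X q.1.1 * X q.1.2) (fun i => X i.1) (F i)) = _
    by_cases hi : (i : ℕ) < s - 1
    · simp only [hF, hG, hF', dif_pos hi, Sum.elim_inl]
      simp only [hee]
      by_cases h : p ⟨(i : ℕ), hi⟩ < v ⟨(i : ℕ), hi⟩
      · rw [dif_pos h]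
        exact hXl _ _ (hpvself _)
      · rw [dif_neg h]
        exact hXr _ _ (hpvself _)
    · simp only [hF, hG, hF', dif_neg hi, Sum.elim_inr]
      exact pderiv_X_self _
  have hdet : M.det = d := by
    rw [Matrix.det_of_lowerTriangular _ htri]
    calc ∏ i : Fin n, M i i
        = ∏ i : Fin n, F' (i : ℕ) := Finset.prod_congr rfl fun i _ => hdiag i
      _ = ∏ i ∈ Finset.range n, F' i := Fin.prod_univ_eq_prod_range F' n
      _ = (∏ i ∈ Finset.range (s - 1), F' i) * ∏ i ∈ Finset.Ico (s - 1) n, F' i :=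
          (Finset.prod_range_mul_prod_Ico F' (by omega)).symm
      _ = (∏ t : Fin (s - 1), (X (p t) : R)) * 1 := by
          congr 1
          · rw [← Fin.prod_univ_eq_prod_range]
            refine Finset.prod_congr rfl fun t _ => ?_
            simp only [hF']
            rw [dif_pos t.isLt, Fin.eta]
          · refine Finset.prod_eq_one fun i hi => ?_
            simp only [hF']
            rw [dif_neg]
            exact fun h => by have := (Finset.mem_Ico.mp hi).1; omega
      _ = d := by rw [mul_one, hprodp]
  exact hdet.symm


/-- For the generators `xᵢxⱼ (0 ≤ i < j ≤ s-1)` and `x_s,…,xₙ` (with `3 ≤ s ≤ n`),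
the ideal of `n`-minors of the Jacobian matrix `Θ` satisfies
`Iₙ(Θ) = (x₀,…,x_{s-1})^{s-1}`. -/
theorem stmt_3 {k : Type*} [Field k] (n s : ℕ) (hs3 : 3 ≤ s) (hsn : s ≤ n)
    (g : ({p : Fin (n + 1) × Fin (n + 1) // p.1 < p.2 ∧ (p.2 : ℕ) ≤ s - 1} ⊕
      {i : Fin (n + 1) // s ≤ (i : ℕ)}) → MvPolynomial (Fin (n + 1)) k)
    (hg : g = Sum.elim (fun p => X p.1.1 * X p.1.2) (fun i => X i.1))
    (Θ : Matrix ({p : Fin (n + 1) × Fin (n + 1) // p.1 < p.2 ∧ (p.2 : ℕ) ≤ s - 1} ⊕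
      {i : Fin (n + 1) // s ≤ (i : ℕ)}) (Fin (n + 1)) (MvPolynomial (Fin (n + 1)) k))
    (hΘ : Θ = fun i j => pderiv j (g i)) :
    minorsIdeal Θ n =
      (Ideal.span {f | ∃ i : Fin (n + 1), (i : ℕ) < s ∧ f = X i}) ^ (s - 1) := by
  subst hg hΘ
  set R := MvPolynomial (Fin (n + 1)) k
  set S : Set R := {f | ∃ i : Fin (n + 1), (i : ℕ) < s ∧ f = X i} with hS
  set Row := ({p : Fin (n + 1) × Fin (n + 1) // p.1 < p.2 ∧ (p.2 : ℕ) ≤ s - 1} ⊕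
      {i : Fin (n + 1) // s ≤ (i : ℕ)}) with hRow
  -- entries of quadric rows lie in span S
  have hentry : ∀ (p : {p : Fin (n + 1) × Fin (n + 1) // p.1 < p.2 ∧ (p.2 : ℕ) ≤ s - 1})
      (c : Fin (n + 1)), (pderiv c (X p.1.1 * X p.1.2) : R) ∈ Ideal.span S := by
    intro p c
    have h1 : ((p.1.1 : ℕ)) < s := by
      have ha : ((p.1.1 : Fin (n+1))) < p.1.2 := p.2.1
      rw [Fin.lt_def] at ha
      have hb := p.2.2
      omega
    have h2 : ((p.1.2 : ℕ)) < s := by have := p.2.2; omega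
    rw [pderiv_mul]
    apply Ideal.add_mem
    · by_cases hc : p.1.1 = c
      · subst hc
        rw [pderiv_X_self, one_mul]
        exact Ideal.subset_span ⟨p.1.2, h2, rfl⟩
      · rw [pderiv_X_of_ne hc, zero_mul]
        exact Ideal.zero_mem _
    · by_cases hc : p.1.2 = c
      · subst hc
        rw [pderiv_X_self, mul_one]
        exact Ideal.subset_span ⟨p.1.1, h1, rfl⟩
      · rw [pderiv_X_of_ne hc, mul_zero]
        exact Ideal.zero_mem _
  apply le_antisymm
  · unfold minorsIdeal
    rw [Ideal.span_le]
    rintro d ⟨f, gc, rfl⟩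
    by_cases hf : Function.Injective f
    · rw [SetLike.mem_coe, Matrix.det_apply]
      apply Submodule.sum_mem
      intro σ _
      rw [Units.smul_def, zsmul_eq_mul]
      apply Ideal.mul_mem_left
      set T : Finset (Fin n) := Finset.univ.filter (fun i => (f (σ i)).isLeft) with hT
      have hcardT : s - 1 ≤ T.card := by
        set U : Finset (Fin n) := Finset.univ.filter (fun i => ¬ (f (σ i)).isLeft) with hU
        have hTU : T.card + U.card = n := by
          rw [hT, hU, Finset.card_filter_add_card_filter_not]
          simp
        have hUle : U.card ≤ n + 1 - s := by
          have := Finset.card_le_card_of_injOn (s := U)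
            (t := Finset.univ.image (Sum.inr : {i : Fin (n+1) // s ≤ (i : ℕ)} → Row))
            (fun i => f (σ i))
            (fun a ha => by
              rw [hU, Finset.mem_coe, Finset.mem_filter] at ha
              obtain ⟨r, hr⟩ := Sum.isRight_iff.mp (Sum.not_isLeft.mp ha.2)
              show f (σ a) ∈ _
              rw [hr]
              exact Finset.mem_image_of_mem _ (Finset.mem_univ r))
            (fun a _ b _ hab => σ.injective (hf hab))
          rwa [Finset.card_image_of_injective _ Sum.inr_injective, Finset.card_univ,
            card_ge_subtype n s (by omega)] at this
        omega
      rw [← Finset.prod_mul_prod_compl T]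
      apply Ideal.mul_mem_right
      apply Ideal.pow_le_pow_right hcardT
      apply prod_mem_pow_card
      intro i hi
      rw [hT, Finset.mem_filter] at hi
      obtain ⟨p, hp⟩ := Sum.isLeft_iff.mp hi.2
      show (pderiv (gc i)) (Sum.elim (fun p => X p.1.1 * X p.1.2) (fun i => X i.1) (f (σ i))) ∈ Ideal.span S
      rw [hp, Sum.elim_inl]
      exact hentry p (gc i)
    · rw [Function.not_injective_iff] at hf
      obtain ⟨i, j, hij, hne⟩ := hf
      rw [SetLike.mem_coe,
        Matrix.det_zero_of_row_eq hne (by funext x; show pderiv (gc x) (Sum.elim _ _ (f i)) = pderiv (gc x) (Sum.elim _ _ (f j)); rw [hij])]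
      exact Ideal.zero_mem _
  · exact dir2 n s hs3 hsn
end

section
/- The ideal J = (x_0, x_1·x_2·(x_1 - x_2)) ⊂ k[x_0, x_1, x_2] of the three collinear points (0:1:0), (0:0:1), (0:1:1) in P^2 and its Jacobian ideal I = (J, I_2(Θ)) satisfy: x_1·x_2^3·(x_1 - x_2) ∈ J ∩ I^2 but x_1·x_2^3·(x_1 - x_2) ∉ J·I; in particular the pair (J,I) is not Aluffi torsion-free. -/
open MvPolynomial

namespace Stmt4Aux

open Finsupp

lemma le_mono_iff (a b c d : ℕ) :
    (single 1 a + single 2 b : Fin 3 →₀ ℕ) ≤ single 1 c + single 2 d ↔ a ≤ c ∧ b ≤ d := by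
  rw [Finsupp.le_def]
  constructor
  · intro h; exact ⟨by simpa using h 1, by simpa using h 2⟩
  · rintro ⟨h1, h2⟩ i
    fin_cases i <;> simp [Finsupp.single_apply, *]

lemma sub_mono (a b c d : ℕ) :
    (single 1 c + single 2 d : Fin 3 →₀ ℕ) - (single 1 a + single 2 b)
      = single 1 (c - a) + single 2 (d - b) := by
  ext i; fin_cases i <;> simp [Finsupp.single_apply]

lemma mono_eq {k : Type*} [CommSemiring k] (c : k) (i j : ℕ) :
    monomial (single 1 i + single 2 j : Fin 3 →₀ ℕ) c = C c * X 1 ^ i * X 2 ^ j := by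
  rw [C_apply, X_pow_eq_monomial, X_pow_eq_monomial, monomial_mul, monomial_mul, zero_add,
    mul_one, mul_one]

variable {k : Type*} [Field k] [CharZero k]

/-- The linear functional that kills `J·I` but not `x₁x₂³(x₁-x₂)`. -/
noncomputable def L (p : MvPolynomial (Fin 3) k) : k :=
  3 * coeff (single 1 1 + single 2 4) p + coeff (single 1 2 + single 2 3) p
    - 2 * coeff (single 1 4 + single 2 1) p

lemma L_add (p q : MvPolynomial (Fin 3) k) : L (p + q) = L p + L q := by
  simp only [L, coeff_add]; ring

lemma L_zero : L (0 : MvPolynomial (Fin 3) k) = 0 := by simp [L]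

lemma L_mul_mono (q : MvPolynomial (Fin 3) k) (i j : ℕ) (c : k) :
    L (q * (C c * X 1 ^ i * X 2 ^ j)) =
      3 * (if i ≤ 1 ∧ j ≤ 4 then coeff (single 1 (1 - i) + single 2 (4 - j)) q * c else 0)
      + (if i ≤ 2 ∧ j ≤ 3 then coeff (single 1 (2 - i) + single 2 (3 - j)) q * c else 0)
      - 2 * (if i ≤ 4 ∧ j ≤ 1 then coeff (single 1 (4 - i) + single 2 (1 - j)) q * c else 0) := by
  rw [← mono_eq]
  simp only [L, coeff_mul_monomial', le_mono_iff, sub_mono]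

lemma L_X0_mul (p : MvPolynomial (Fin 3) k) : L (X 0 * p) = 0 := by
  simp [L, coeff_X_mul', Finsupp.mem_support_iff, Finsupp.single_apply]

/-- The ideal of all `p` such that `L` kills every multiple of `p`. -/
noncomputable def K : Ideal (MvPolynomial (Fin 3) k) where
  carrier := {p | ∀ q, L (q * p) = 0}
  zero_mem' := fun q => by rw [mul_zero]; exact L_zero
  add_mem' := fun {p r} hp hr q => by rw [mul_add, L_add, hp, hr, add_zero]
  smul_mem' := fun r p hp q => by
    rw [smul_eq_mul, ← mul_assoc]; exact hp (q * r)

lemma mem_K {p : MvPolynomial (Fin 3) k} : p ∈ (K : Ideal (MvPolynomial (Fin 3) k)) ↔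
    ∀ q, L (q * p) = 0 := Iff.rfl

end Stmt4Aux

open Stmt4Aux

/-- For the ideal `J = (x₀, x₁x₂(x₁ - x₂))` of the three collinear points
`(0:1:0), (0:0:1), (0:1:1)` in `ℙ²` and its Jacobian ideal `I = (J, I₂(Θ))`, the element
`x₁x₂³(x₁-x₂)` lies in `J ∩ I²` but not in `J·I`; in particular `(J, I)` is not Aluffi
torsion-free. -/
theorem stmt_4 {k : Type*} [Field k] [CharZero k]
    (g : Fin 2 → MvPolynomial (Fin 3) k)
    (hg : g = ![X 0, X 1 * X 2 * (X 1 - X 2)])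
    (J I : Ideal (MvPolynomial (Fin 3) k))
    (hJ : J = Ideal.span (Set.range g))
    (Θ : Matrix (Fin 2) (Fin 3) (MvPolynomial (Fin 3) k))
    (hΘ : Θ = fun i j => pderiv j (g i))
    (hI : I = J ⊔ minorsIdeal Θ 2) :
    X 1 * X 2 ^ 3 * (X 1 - X 2) ∈ J ⊓ I ^ 2 ∧
    X 1 * X 2 ^ 3 * (X 1 - X 2) ∉ J * I := by
  subst hg hΘ hI hJ
  set e : MvPolynomial (Fin 3) k := X 1 * X 2 ^ 3 * (X 1 - X 2) with he_def
  set f : MvPolynomial (Fin 3) k := X 1 * X 2 * (X 1 - X 2) with hf_def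
  set A : MvPolynomial (Fin 3) k := 2 * (X 1 * X 2) - X 2 ^ 2 with hA_def
  set B : MvPolynomial (Fin 3) k := X 1 ^ 2 - 2 * (X 1 * X 2) with hB_def
  set g : Fin 2 → MvPolynomial (Fin 3) k := ![X 0, f] with hg_def
  set Θ : Matrix (Fin 2) (Fin 3) (MvPolynomial (Fin 3) k) := fun i j => pderiv j (g i)
    with hΘ_def
  have hg0 : g 0 = X 0 := rfl
  have hg1 : g 1 = f := rfl
  have hΘ10 : Θ 1 0 = 0 := by
    rw [hΘ_def]; show pderiv 0 (g 1) = 0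
    rw [hg1, hf_def]
    simp [pderiv_mul]
  have hΘ11 : Θ 1 1 = A := by
    rw [hΘ_def]; show pderiv 1 (g 1) = A
    rw [hg1, hf_def, hA_def]
    simp [pderiv_mul]
    ring
  have hΘ12 : Θ 1 2 = B := by
    rw [hΘ_def]; show pderiv 2 (g 1) = B
    rw [hg1, hf_def, hB_def]
    simp [pderiv_mul]
    ring
  have hΘ00 : Θ 0 0 = 1 := by
    rw [hΘ_def]; show pderiv 0 (g 0) = 1
    rw [hg0]; simp
  have hΘ01 : Θ 0 1 = 0 := by
    rw [hΘ_def]; show pderiv 1 (g 0) = 0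
    rw [hg0]; simp
  have hΘ02 : Θ 0 2 = 0 := by
    rw [hΘ_def]; show pderiv 2 (g 0) = 0
    rw [hg0]; simp
  -- A and B are minors
  have hAmem : A ∈ minorsIdeal Θ 2 := by
    refine Ideal.subset_span ⟨![0, 1], ![0, 1], ?_⟩
    rw [Matrix.det_fin_two]
    simp [Matrix.submatrix_apply, hΘ00, hΘ01, hΘ10, hΘ11]
  have hBmem : B ∈ minorsIdeal Θ 2 := by
    refine Ideal.subset_span ⟨![0, 1], ![0, 2], ?_⟩
    rw [Matrix.det_fin_two]
    simp [Matrix.submatrix_apply, hΘ00, hΘ02, hΘ10, hΘ12]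
  have hAI : A ∈ Ideal.span (Set.range g) ⊔ minorsIdeal Θ 2 := Ideal.mem_sup_right hAmem
  have hBI : B ∈ Ideal.span (Set.range g) ⊔ minorsIdeal Θ 2 := Ideal.mem_sup_right hBmem
  have hfJ : f ∈ Ideal.span (Set.range g) := Ideal.subset_span ⟨1, hg1⟩
  constructor
  · refine Submodule.mem_inf.mpr ⟨?_, ?_⟩
    · -- e = x₂² · f ∈ J
      have : e = X 2 ^ 2 * f := by rw [he_def, hf_def]; ring
      rw [this]
      exact Ideal.mul_mem_left _ _ hfJ
    · -- e ∈ I², using 9e = x₁A² + (2x₁-5x₂)AB - 4x₂B²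
      rw [pow_two]
      have h9 : (9 : MvPolynomial (Fin 3) k) * e =
          X 1 * (A * A) + (2 * X 1 - 5 * X 2) * (A * B) + (-(4 * X 2)) * (B * B) := by
        rw [he_def, hA_def, hB_def]; ring
      have hC : (C ((9 : k)⁻¹) : MvPolynomial (Fin 3) k) * 9 = 1 := by
        rw [show (9 : MvPolynomial (Fin 3) k) = C (9 : k) from (map_ofNat _ 9).symm, ← map_mul]
        norm_num
      have he2 : e = C ((9 : k)⁻¹) *
          (X 1 * (A * A) + (2 * X 1 - 5 * X 2) * (A * B) + (-(4 * X 2)) * (B * B)) := by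
        rw [← h9, ← mul_assoc, hC, one_mul]
      rw [he2]
      refine Ideal.mul_mem_left _ _ ?_
      refine Ideal.add_mem _ (Ideal.add_mem _ ?_ ?_) ?_
      · exact Ideal.mul_mem_left _ _ (Ideal.mul_mem_mul hAI hAI)
      · exact Ideal.mul_mem_left _ _ (Ideal.mul_mem_mul hAI hBI)
      · exact Ideal.mul_mem_left _ _ (Ideal.mul_mem_mul hBI hBI)
  · -- non-membership
    intro he
    -- key vanishing lemmas
    have hfa : ∀ q : MvPolynomial (Fin 3) k, L (q * (f * A)) = 0 := by
      intro q
      have hfaeq : f * A = C (2 : k) * X 1 ^ 3 * X 2 ^ 2 + C (-3 : k) * X 1 ^ 2 * X 2 ^ 3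
          + C (1 : k) * X 1 ^ 1 * X 2 ^ 4 := by
        rw [hf_def, hA_def]
        simp only [map_ofNat, map_neg, map_one]
        ring
      rw [hfaeq, mul_add, mul_add, L_add, L_add, L_mul_mono, L_mul_mono, L_mul_mono]
      norm_num [Finsupp.single_zero]
      ring
    have hfb : ∀ q : MvPolynomial (Fin 3) k, L (q * (f * B)) = 0 := by
      intro q
      have hfbeq : f * B = C (1 : k) * X 1 ^ 4 * X 2 ^ 1 + C (-3 : k) * X 1 ^ 3 * X 2 ^ 2
          + C (2 : k) * X 1 ^ 2 * X 2 ^ 3 := by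
        rw [hf_def, hB_def]
        simp only [map_ofNat, map_neg, map_one]
        ring
      rw [hfbeq, mul_add, mul_add, L_add, L_add, L_mul_mono, L_mul_mono, L_mul_mono]
      norm_num [Finsupp.single_zero]
      ring
    have hff : ∀ q : MvPolynomial (Fin 3) k, L (q * (f * f)) = 0 := by
      intro q
      have hffeq : f * f = C (1 : k) * X 1 ^ 4 * X 2 ^ 2 + C (-2 : k) * X 1 ^ 3 * X 2 ^ 3
          + C (1 : k) * X 1 ^ 2 * X 2 ^ 4 := by
        rw [hf_def]
        simp only [map_ofNat, map_neg, map_one]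
        ring
      rw [hffeq, mul_add, mul_add, L_add, L_add, L_mul_mono, L_mul_mono, L_mul_mono]
      norm_num
    -- x₀·anything is in K
    have hx0K : ∀ t : MvPolynomial (Fin 3) k, X 0 * t ∈ (K : Ideal (MvPolynomial (Fin 3) k)) := by
      intro t q
      rw [show q * (X 0 * t) = X 0 * (q * t) by ring]
      exact L_X0_mul _
    have hfAK : f * A ∈ (K : Ideal (MvPolynomial (Fin 3) k)) := fun q => hfa q
    have hfBK : f * B ∈ (K : Ideal (MvPolynomial (Fin 3) k)) := fun q => hfb q
    have hffK : f * f ∈ (K : Ideal (MvPolynomial (Fin 3) k)) := fun q => hff q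
    -- minors lie in the span of A и B
    have hrow1 : ∀ j : Fin 3, Θ 1 j ∈ Ideal.span ({A, B} : Set (MvPolynomial (Fin 3) k)) := by
      have hfin3 : ∀ j : Fin 3, j = 0 ∨ j = 1 ∨ j = 2 := by decide
      intro j
      rcases hfin3 j with rfl | rfl | rfl
      · rw [hΘ10]; exact Ideal.zero_mem _
      · rw [hΘ11]; exact Ideal.subset_span (Or.inl rfl)
      · rw [hΘ12]; exact Ideal.subset_span (Or.inr rfl)
    have hdet : ∀ (r : Fin 2 → Fin 2) (c : Fin 2 → Fin 3),
        (Θ.submatrix r c).det ∈ Ideal.span ({A, B} : Set (MvPolynomial (Fin 3) k)) := by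
      intro r c
      rw [Matrix.det_fin_two]
      simp only [Matrix.submatrix_apply]
      have hfin2 : ∀ i : Fin 2, i = 0 ∨ i = 1 := by decide
      rcases hfin2 (r 0) with h0 | h0 <;> rcases hfin2 (r 1) with h1 | h1 <;> rw [h0, h1]
      · rw [show Θ 0 (c 0) * Θ 0 (c 1) - Θ 0 (c 1) * Θ 0 (c 0) = 0 by ring]
        exact Ideal.zero_mem _
      · exact Ideal.sub_mem _ (Ideal.mul_mem_left _ _ (hrow1 (c 1)))
          (Ideal.mul_mem_left _ _ (hrow1 (c 0)))
      · exact Ideal.sub_mem _ (Ideal.mul_mem_right _ _ (hrow1 (c 0)))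
          (Ideal.mul_mem_right _ _ (hrow1 (c 1)))
      · rw [show Θ 1 (c 0) * Θ 1 (c 1) - Θ 1 (c 1) * Θ 1 (c 0) = 0 by ring]
        exact Ideal.zero_mem _
    -- f times anything in span {A, B} lies in K
    have hfspan : ∀ t ∈ Ideal.span ({A, B} : Set (MvPolynomial (Fin 3) k)), f * t ∈ (K : Ideal (MvPolynomial (Fin 3) k)) := by
      intro t ht
      refine Submodule.span_induction ?_ ?_ ?_ ?_ ht
      · rintro x (rfl | rfl)
        · exact hfAK
        · exact hfBK
      · rw [mul_zero]; exact Ideal.zero_mem _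
      · intro x y _ _ hx hy
        rw [mul_add]; exact Ideal.add_mem _ hx hy
      · intro a x _ hx
        rw [smul_eq_mul, show f * (a * x) = a * (f * x) by ring]
        exact Ideal.mul_mem_left _ _ hx
    -- J * I ≤ K
    have hJK : ∀ s ∈ Set.range g, ∀ t : MvPolynomial (Fin 3) k, t ∈ Set.range g ∨
        (∃ (r : Fin 2 → Fin 2) (c : Fin 2 → Fin 3), t = (Θ.submatrix r c).det) →
        s * t ∈ (K : Ideal (MvPolynomial (Fin 3) k)) := by
      rintro s ⟨i, rfl⟩ t ht
      have hfin2 : ∀ i : Fin 2, i = 0 ∨ i = 1 := by decide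
      rcases hfin2 i with hi | hi <;> rw [hi]
      · rw [hg0]; exact hx0K t
      · rw [hg1]
        rcases ht with ⟨j, rfl⟩ | ⟨r, c, rfl⟩
        · rcases hfin2 j with hj | hj <;> rw [hj]
          · rw [hg0, show f * X 0 = X 0 * f by ring]; exact hx0K f
          · rw [hg1]; exact hffK
        · exact hfspan _ (hdet r c)
    have hsub : Ideal.span (Set.range g) * (Ideal.span (Set.range g) ⊔ minorsIdeal Θ 2)
        ≤ (K : Ideal (MvPolynomial (Fin 3) k)) := by
      rw [Ideal.mul_sup]
      refine sup_le ?_ ?_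
      · rw [Ideal.span_mul_span']
        rw [Ideal.span_le]
        rintro d ⟨s, hs, t, ht, rfl⟩
        exact hJK s hs t (Or.inl ht)
      · rw [minorsIdeal, Ideal.span_mul_span']
        rw [Ideal.span_le]
        rintro d ⟨s, hs, t, ht, rfl⟩
        exact hJK s hs t (Or.inr ht)
    -- evaluate L on e
    have heK : e ∈ (K : Ideal (MvPolynomial (Fin 3) k)) := hsub he
    have h0 := heK 1
    rw [one_mul] at h0
    have heeq : e = (1 : MvPolynomial (Fin 3) k) * (C (1 : k) * X 1 ^ 2 * X 2 ^ 3 + C (-1 : k) * X 1 ^ 1 * X 2 ^ 4) := by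
      rw [he_def]
      simp only [map_one, map_neg, one_mul]
      ring
    rw [heeq, mul_add, L_add, L_mul_mono, L_mul_mono] at h0
    norm_num [Finsupp.single_zero, MvPolynomial.coeff_one] at h0
end

section
/- Let J = (x·z - y·z, x·y - y·z) ⊂ k[x,y,z] be the ideal of the four points (1:0:0), (0:1:0), (0:0:1), (1:1:1) in P^2, and let I = (J, I_2(Θ)) be its Jacobian ideal, where Θ is the 2×3 Jacobian matrix of the generators. Then J ∩ I^2 is not contained in J·I; in particular the pair (J, I) is not Aluffi torsion-free. -/
open MvPolynomial Pointwise

lemma aluffi_coeff_mul_isHomog {k σ : Type*} [CommRing k] {E : MvPolynomial σ k} {n : ℕ}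
    (hE : E.IsHomogeneous n) (p : MvPolynomial σ k) (m : σ →₀ ℕ) (hm : m.degree = n) :
    coeff m (p * E) = constantCoeff p * coeff m E := by
  classical
  rw [coeff_mul, Finset.sum_eq_single ((0 : σ →₀ ℕ), m)]
  · rfl
  · rintro ⟨a, b⟩ hab hne
    rw [Finset.HasAntidiagonal.mem_antidiagonal] at hab
    by_cases hb : b.degree = n
    · exfalso
      have hdeg : a.degree + b.degree = m.degree := by
        rw [← hab]; simp [Finsupp.degree_eq_weight_one, map_add]
      have ha : a = 0 := (Finsupp.degree_eq_zero_iff a).mp (by omega)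
      subst ha; simp only [zero_add] at hab; exact hne (by rw [hab])
    · rw [hE.coeff_eq_zero hb, mul_zero]
  · intro hmem
    exact absurd (Finset.HasAntidiagonal.mem_antidiagonal.mpr (zero_add m)) hmem

lemma aluffi_hc_mul {k σ : Type*} [CommRing k] {E : MvPolynomial σ k} {n : ℕ}
    (hE : E.IsHomogeneous n) (p : MvPolynomial σ k) :
    homogeneousComponent n (p * E) = constantCoeff p • E := by
  ext m
  rw [coeff_homogeneousComponent, coeff_smul]
  split_ifs with hm
  · rw [aluffi_coeff_mul_isHomog hE p m hm, smul_eq_mul]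
  · rw [hE.coeff_eq_zero hm, smul_zero]

/-- The separating linear functional: `q ↦ q(-1,1,0) - 2q(-1,-1,0) + q(-1,-1,-2)`. -/
noncomputable def Phi9 (k : Type*) [CommRing k] : MvPolynomial (Fin 3) k →ₗ[k] k :=
  (aeval ![(-1:k), 1, 0]).toLinearMap - (2:k) • (aeval ![(-1:k), -1, 0]).toLinearMap
    + (aeval ![(-1:k), -1, -2]).toLinearMap

set_option maxHeartbeats 1600000 in
/-- For the ideal `J = (xz - yz, xy - yz)` of the four points
`(1:0:0), (0:1:0), (0:0:1), (1:1:1)` in `ℙ²` (here `x = X 0`, `y = X 1`, `z = X 2`)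
and its Jacobian ideal `I = (J, I₂(Θ))`, one has `J ∩ I² ⊄ J·I`; in particular the pair
`(J, I)` is not Aluffi torsion-free. -/
theorem stmt_9 {k : Type*} [Field k] [CharZero k]
    (g : Fin 2 → MvPolynomial (Fin 3) k)
    (hg : g = ![X 0 * X 2 - X 1 * X 2, X 0 * X 1 - X 1 * X 2])
    (J I : Ideal (MvPolynomial (Fin 3) k))
    (hJ : J = Ideal.span (Set.range g))
    (Θ : Matrix (Fin 2) (Fin 3) (MvPolynomial (Fin 3) k))
    (hΘ : Θ = fun i j => pderiv j (g i))
    (hI : I = J ⊔ minorsIdeal Θ 2) :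
    ¬ (J ⊓ I ^ 2 ≤ J * I) := by
  intro hle
  have hg0 : g 0 = X 0 * X 2 - X 1 * X 2 := by simp [hg]
  have hg1 : g 1 = X 0 * X 1 - X 1 * X 2 := by simp [hg]
  -- the concrete Jacobian matrix
  have hTh : Θ = Matrix.of ![![X 2, -X 2, X 0 - X 1], ![X 1, X 0 - X 2, -X 1]] := by
    subst hΘ; subst hg
    ext i j
    fin_cases i <;> fin_cases j <;> simp [pderiv_X, Pi.single_apply]
  -- homogeneity helpers
  have hXX : ∀ a b : Fin 3, IsHomogeneous (X a * X b : MvPolynomial (Fin 3) k) 2 :=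
    fun a b => (isHomogeneous_X k a).mul (isHomogeneous_X k b)
  have h2 : ∀ v : Fin 2, v = 0 ∨ v = 1 := by decide
  have hgh : ∀ i, IsHomogeneous (g i) 2 := by
    intro i
    rcases h2 i with rfl | rfl
    · rw [hg0]; exact (hXX 0 2).sub (hXX 1 2)
    · rw [hg1]; exact (hXX 0 1).sub (hXX 1 2)
  have hThH : ∀ (r : Fin 2) (c : Fin 3), IsHomogeneous (Θ r c) 1 := by
    intro r c
    fin_cases r <;> fin_cases c <;>
      simp only [hTh, Matrix.of_apply, Matrix.cons_val', Matrix.cons_val_zero,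
        Matrix.cons_val_one, Matrix.head_cons, Matrix.empty_val',
        Matrix.cons_val_fin_one, Matrix.head_fin_const, Matrix.cons_val_two,
        Matrix.tail_cons] <;>
      first
        | exact isHomogeneous_X k _
        | exact (isHomogeneous_X k _).neg
        | exact (isHomogeneous_X k _).sub (isHomogeneous_X k _)
  -- the witness polynomial  H = y²z² - yz³
  -- H ∈ J
  have hHJ : ((X 1 * X 1) * (X 2 * X 2) - (X 1 * X 2) * (X 2 * X 2) : MvPolynomial (Fin 3) k) ∈ J := by
    rw [hJ]
    have h0 : g 0 ∈ Ideal.span (Set.range g) := Ideal.subset_span ⟨0, rfl⟩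
    have h1 : g 1 ∈ Ideal.span (Set.range g) := Ideal.subset_span ⟨1, rfl⟩
    have hid : ((X 1 * X 1) * (X 2 * X 2) - (X 1 * X 2) * (X 2 * X 2) : MvPolynomial (Fin 3) k)
        = (-(X 1 * X 2)) * g 0 + (X 2 * X 2) * g 1 := by
      rw [hg0, hg1]; ring
    rw [hid]
    exact Ideal.add_mem _ (Ideal.mul_mem_left _ _ h0) (Ideal.mul_mem_left _ _ h1)
  -- minors are in I
  have hJleI : J ≤ I := hI ▸ le_sup_left
  have hMle : minorsIdeal Θ 2 ≤ I := hI ▸ le_sup_right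
  have hM12 : (X 0 * X 2 + X 1 * X 2 - X 2 * X 2 : MvPolynomial (Fin 3) k) ∈ I := by
    refine hMle (Ideal.subset_span ⟨![0,1], ![0,1], ?_⟩)
    rw [Matrix.det_fin_two]
    simp [Matrix.submatrix_apply, hTh]
    ring
  have hM13 : (X 1 * X 1 - X 0 * X 1 - X 1 * X 2 : MvPolynomial (Fin 3) k) ∈ I := by
    refine hMle (Ideal.subset_span ⟨![0,1], ![0,2], ?_⟩)
    rw [Matrix.det_fin_two]
    simp [Matrix.submatrix_apply, hTh]
    ring
  have hM23 : (X 0 * X 1 + X 0 * X 2 - X 0 * X 0 : MvPolynomial (Fin 3) k) ∈ I := by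
    refine hMle (Ideal.subset_span ⟨![0,1], ![1,2], ?_⟩)
    rw [Matrix.det_fin_two]
    simp [Matrix.submatrix_apply, hTh]
    ring
  have hG1I : (X 0 * X 2 - X 1 * X 2 : MvPolynomial (Fin 3) k) ∈ I := by
    refine hJleI ?_; rw [hJ, ← hg0]; exact Ideal.subset_span ⟨0, rfl⟩
  have hG2I : (X 0 * X 1 - X 1 * X 2 : MvPolynomial (Fin 3) k) ∈ I := by
    refine hJleI ?_; rw [hJ, ← hg1]; exact Ideal.subset_span ⟨1, rfl⟩
  -- H ∈ I²
  have hHI2 : ((X 1 * X 1) * (X 2 * X 2) - (X 1 * X 2) * (X 2 * X 2) : MvPolynomial (Fin 3) k) ∈ I ^ 2 := by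
    have mm : ∀ u v : MvPolynomial (Fin 3) k, u ∈ I → v ∈ I → u * v ∈ I ^ 2 := by
      intro u v hu hv; rw [pow_two]; exact Ideal.mul_mem_mul hu hv
    have big : ((4:MvPolynomial (Fin 3) k) *
        ((X 1 * X 1) * (X 2 * X 2) - (X 1 * X 2) * (X 2 * X 2))) ∈ I ^ 2 := by
      have hid : (4:MvPolynomial (Fin 3) k) *
          ((X 1 * X 1) * (X 2 * X 2) - (X 1 * X 2) * (X 2 * X 2))
          = (-1) * ((X 0 * X 2 - X 1 * X 2) * (X 0 * X 2 + X 1 * X 2 - X 2 * X 2))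
            + (X 0 * X 2 - X 1 * X 2) * (X 1 * X 1 - X 0 * X 1 - X 1 * X 2)
            + (-1) * ((X 0 * X 2 - X 1 * X 2) * (X 0 * X 1 + X 0 * X 2 - X 0 * X 0))
            + (-2) * ((X 0 * X 1 - X 1 * X 2) * (X 0 * X 2 + X 1 * X 2 - X 2 * X 2))
            + (-2) * ((X 0 * X 1 - X 1 * X 2) * (X 1 * X 1 - X 0 * X 1 - X 1 * X 2))
            + 2 * ((X 0 * X 1 - X 1 * X 2) * (X 0 * X 1 + X 0 * X 2 - X 0 * X 0))
            + (-1) * ((X 0 * X 2 + X 1 * X 2 - X 2 * X 2) * (X 1 * X 1 - X 0 * X 1 - X 1 * X 2))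
            + (X 0 * X 2 + X 1 * X 2 - X 2 * X 2) * (X 0 * X 1 + X 0 * X 2 - X 0 * X 0)
            + 2 * ((X 1 * X 1 - X 0 * X 1 - X 1 * X 2) * (X 0 * X 1 + X 0 * X 2 - X 0 * X 0)) := by
        ring
      rw [hid]
      repeat' apply Ideal.add_mem
      all_goals first
        | exact mm _ _ hG1I hM13
        | exact mm _ _ hM12 hM23
        | exact Ideal.mul_mem_left _ _ (mm _ _ hG1I hM12)
        | exact Ideal.mul_mem_left _ _ (mm _ _ hG1I hM23)
        | exact Ideal.mul_mem_left _ _ (mm _ _ hG2I hM12)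
        | exact Ideal.mul_mem_left _ _ (mm _ _ hG2I hM13)
        | exact Ideal.mul_mem_left _ _ (mm _ _ hG2I hM23)
        | exact Ideal.mul_mem_left _ _ (mm _ _ hM12 hM13)
        | exact Ideal.mul_mem_left _ _ (mm _ _ hM13 hM23)
    have hfour : (C ((4:k)⁻¹) : MvPolynomial (Fin 3) k) * 4 = 1 := by
      rw [show (4 : MvPolynomial (Fin 3) k) = C (4:k) from (map_ofNat C 4).symm,
        ← C_mul, inv_mul_cancel₀ (by norm_num : (4:k) ≠ 0), C_1]
    have : ((X 1 * X 1) * (X 2 * X 2) - (X 1 * X 2) * (X 2 * X 2) : MvPolynomial (Fin 3) k)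
        = C ((4:k)⁻¹) * ((4:MvPolynomial (Fin 3) k) *
          ((X 1 * X 1) * (X 2 * X 2) - (X 1 * X 2) * (X 2 * X 2))) := by
      conv_rhs => rw [← mul_assoc, hfour, one_mul]
    rw [this]
    exact Ideal.mul_mem_left _ _ big
  -- Phi9 kills products with the first generator
  have hPhiG1 : ∀ t : MvPolynomial (Fin 3) k, Phi9 k ((X 0 * X 2 - X 1 * X 2) * t) = 0 := by
    intro t; simp [Phi9]
  -- Phi9 kills g1 * (any 2x2 det of Θ)
  have hPhiDet : ∀ (a : Fin 2 → Fin 2) (b : Fin 2 → Fin 3),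
      Phi9 k ((X 0 * X 1 - X 1 * X 2) * (Θ.submatrix a b).det) = 0 := by
    intro a b
    rw [Matrix.det_fin_two]
    simp only [Matrix.submatrix_apply]
    simp only [Phi9, LinearMap.add_apply, LinearMap.sub_apply, LinearMap.smul_apply,
      AlgHom.toLinearMap_apply, map_mul, map_sub, map_add, smul_eq_mul]
    have E1 : ∀ i j, aeval (![(-1:k), 1, 0]) (Θ i j) = Matrix.of ![![(0:k),0,-2],![1,-1,-1]] i j := by
      intro i j; fin_cases i <;> fin_cases j <;> simp [hTh] <;> norm_num
    have E2 : ∀ i j, aeval (![(-1:k), -1, 0]) (Θ i j) = Matrix.of ![![(0:k),0,0],![-1,-1,1]] i j := by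
      intro i j; fin_cases i <;> fin_cases j <;> simp [hTh] <;> norm_num
    have E3 : ∀ i j, aeval (![(-1:k), -1, -2]) (Θ i j) = Matrix.of ![![(-2:k),2,0],![-1,1,1]] i j := by
      intro i j; fin_cases i <;> fin_cases j <;> simp [hTh] <;> norm_num
    simp only [E1, E2, E3]
    have R2 : ∀ j, Matrix.of ![![(0:k),0,0],![-1,-1,1]] 0 j = 0 := by
      intro j; fin_cases j <;> norm_num
    have R30 : ∀ j, Matrix.of ![![(-2:k),2,0],![-1,1,1]] 0 j
        = Matrix.of ![![(0:k),0,-2],![1,-1,-1]] 0 j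
          - 2 * Matrix.of ![![(0:k),0,-2],![1,-1,-1]] 1 j := by
      intro j; fin_cases j <;> norm_num
    have R31 : ∀ j, Matrix.of ![![(-2:k),2,0],![-1,1,1]] 1 j
        = - Matrix.of ![![(0:k),0,-2],![1,-1,-1]] 1 j := by
      intro j; fin_cases j <;> norm_num
    have c1 : ![(-1:k), 1, 0] 2 = 0 := rfl
    have c2 : ![(-1:k), -1, -2] 2 = -2 := rfl
    rcases h2 (a 0) with ha0 | ha0 <;> rcases h2 (a 1) with ha1 | ha1 <;>
      rw [ha0, ha1] <;> simp only [R2, R30, R31] <;> norm_num <;> simp only [c1, c2] <;> ring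
  -- the main vanishing statement on J * I
  have hspan : J * I = Ideal.span
      ((Set.range g) * (Set.range g ∪ {d | ∃ (f : Fin 2 → Fin 2) (g' : Fin 2 → Fin 3),
        d = (Θ.submatrix f g').det})) := by
    rw [hI, hJ, minorsIdeal, ← Ideal.span_union, Ideal.span_mul_span']
  have hmain : ∀ q ∈ J * I, ∀ p : MvPolynomial (Fin 3) k,
      Phi9 k (homogeneousComponent 4 (p * q)) = 0 := by
    rw [hspan]
    intro q hq
    induction hq using Submodule.span_induction with
    | mem x hx =>
      obtain ⟨s, hs, t, ht, rfl⟩ := hx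
      obtain ⟨i, rfl⟩ := hs
      suffices hst : IsHomogeneous (g i * t) 4 ∧ Phi9 k (g i * t) = 0 by
        intro p
        rw [aluffi_hc_mul hst.1 p, map_smul, hst.2, smul_zero]
      rcases ht with ⟨j, rfl⟩ | ⟨a, b, rfl⟩
      · constructor
        · exact (hgh i).mul (hgh j)
        · rcases h2 i with rfl | rfl
          · rw [hg0]; exact hPhiG1 _
          · rcases h2 j with rfl | rfl
            · rw [hg1, hg0]; simp [Phi9]; try ring
            · rw [hg1]; simp [Phi9]; try ring
      · constructor
        · have hdet2 : IsHomogeneous ((Θ.submatrix a b).det) 2 := by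
            rw [Matrix.det_fin_two]
            simp only [Matrix.submatrix_apply]
            exact ((hThH _ _).mul (hThH _ _)).sub ((hThH _ _).mul (hThH _ _))
          exact (hgh i).mul hdet2
        · rcases h2 i with rfl | rfl
          · rw [hg0]; exact hPhiG1 _
          · rw [hg1]; exact hPhiDet a b
    | zero => intro p; rw [mul_zero, map_zero, map_zero]
    | add x y hx hy ihx ihy =>
      intro p
      rw [mul_add, map_add, map_add, ihx p, ihy p, add_zero]
    | smul a x hx ih =>
      intro p
      rw [smul_eq_mul, ← mul_assoc]
      exact ih (p * a)
  -- conclude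
  have hH4 : IsHomogeneous ((X 1 * X 1) * (X 2 * X 2) - (X 1 * X 2) * (X 2 * X 2)
      : MvPolynomial (Fin 3) k) 4 :=
    ((hXX 1 1).mul (hXX 2 2)).sub ((hXX 1 2).mul (hXX 2 2))
  have hHmem : ((X 1 * X 1) * (X 2 * X 2) - (X 1 * X 2) * (X 2 * X 2) : MvPolynomial (Fin 3) k)
      ∈ J * I := hle (Submodule.mem_inf.mpr ⟨hHJ, hHI2⟩)
  have hzero := hmain _ hHmem 1
  rw [aluffi_hc_mul hH4 1, map_one, one_smul] at hzero
  have hval : Phi9 k ((X 1 * X 1) * (X 2 * X 2) - (X 1 * X 2) * (X 2 * X 2)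
      : MvPolynomial (Fin 3) k) = -4 := by
    simp [Phi9]; try ring
  rw [hval] at hzero
  exact absurd hzero (by norm_num)
end

section
/- The ideal I = (xy - xz, xz - yz, xz + yz - z^2, -xy + y^2 - yz, -x^2 + xy + xz) ⊂ k[x,y,z] is (x,y,z)-primary, i.e., has height 3, and is minimally generated by 5 quadrics. -/
open MvPolynomial

section Stmt10Aux

variable {k : Type*} [Field k]

/-- The "Hessian at 0" linear map. -/
noncomputable def stmt10Phi (k : Type*) [Field k] :
    MvPolynomial (Fin 3) k →ₗ[k] (Fin 3 → Fin 3 → k) :=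
  LinearMap.pi fun i => LinearMap.pi fun j =>
    (aeval (0 : Fin 3 → k)).toLinearMap ∘ₗ
      ((pderiv j).toLinearMap ∘ₗ (pderiv i).toLinearMap)

lemma stmt10Phi_apply (p : MvPolynomial (Fin 3) k) (i j : Fin 3) :
    stmt10Phi k p i j = aeval (0 : Fin 3 → k) (pderiv j (pderiv i p)) := rfl

lemma stmt10Phi_mul (p f : MvPolynomial (Fin 3) k)
    (h0 : aeval (0 : Fin 3 → k) f = 0)
    (h1 : ∀ i, aeval (0 : Fin 3 → k) (pderiv i f) = 0) :
    stmt10Phi k (p * f) = aeval (0 : Fin 3 → k) p • stmt10Phi k f := by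
  funext i j
  simp only [stmt10Phi_apply, Pi.smul_apply, smul_eq_mul, pderiv_mul, map_add, map_mul,
    h0, h1, mul_zero, zero_mul, add_zero, zero_add]

end Stmt10Aux

set_option maxHeartbeats 1000000

/-- The ideal
`I = (xy - xz, xz - yz, xz + yz - z², -xy + y² - yz, -x² + xy + xz) ⊂ k[x,y,z]`
is `(x,y,z)`-primary (its radical is the irrelevant maximal ideal, so it has height 3)
and it is minimally generated by 5 quadrics (no 4 elements generate it). -/
theorem stmt_10 {k : Type*} [Field k] [CharZero k]
    (I : Ideal (MvPolynomial (Fin 3) k))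
    (hI : I = Ideal.span {X 0 * X 1 - X 0 * X 2, X 0 * X 2 - X 1 * X 2,
      X 0 * X 2 + X 1 * X 2 - X 2 ^ 2, -(X 0 * X 1) + X 1 ^ 2 - X 1 * X 2,
      -(X 0 ^ 2) + X 0 * X 1 + X 0 * X 2}) :
    I.IsPrimary ∧
    I.radical = Ideal.span {X 0, X 1, X 2} ∧
    ¬ ∃ s : Finset (MvPolynomial (Fin 3) k), s.card ≤ 4 ∧ Ideal.span (s : Set _) = I := by
  classical
  -- the maximal ideal
  have hm_max : (Ideal.span {X 0, X 1, X 2} : Ideal (MvPolynomial (Fin 3) k)).IsMaximal := by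
    have hset : ({X 0, X 1, X 2} : Set (MvPolynomial (Fin 3) k)) = X '' Set.univ := by
      ext p
      simp only [Set.image_univ, Set.mem_range, Set.mem_insert_iff, Set.mem_singleton_iff]
      constructor
      · rintro (rfl | rfl | rfl)
        exacts [⟨0, rfl⟩, ⟨1, rfl⟩, ⟨2, rfl⟩]
      · rintro ⟨i, rfl⟩
        fin_cases i <;> simp
    have hker : (Ideal.span {X 0, X 1, X 2} : Ideal (MvPolynomial (Fin 3) k)) =
        RingHom.ker (eval (0 : Fin 3 → k)) := by
      ext f
      rw [hset, mem_ideal_span_X_image]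
      simp only [RingHom.mem_ker, Set.mem_univ, true_and, eval_zero, constantCoeff_eq]
      constructor
      · intro h
        by_contra hc
        obtain ⟨i, hi⟩ := h 0 (mem_support_iff.2 hc)
        simp at hi
      · intro h m hm
        have hm0 : m ≠ 0 := by rintro rfl; exact mem_support_iff.1 hm h
        obtain ⟨i, hi⟩ := Finsupp.ne_iff.1 hm0
        exact ⟨i, by simpa using hi⟩
    rw [hker]
    exact RingHom.ker_isMaximal_of_surjective _ fun a => ⟨C a, eval_C a⟩
  -- generator memberships
  have hg1 : (X 0 * X 1 - X 0 * X 2 : MvPolynomial (Fin 3) k) ∈ I :=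
    hI ▸ Ideal.subset_span (by simp)
  have hg2 : (X 0 * X 2 - X 1 * X 2 : MvPolynomial (Fin 3) k) ∈ I :=
    hI ▸ Ideal.subset_span (by simp)
  have hg3 : (X 0 * X 2 + X 1 * X 2 - X 2 ^ 2 : MvPolynomial (Fin 3) k) ∈ I :=
    hI ▸ Ideal.subset_span (by simp)
  have hg4 : (-(X 0 * X 1) + X 1 ^ 2 - X 1 * X 2 : MvPolynomial (Fin 3) k) ∈ I :=
    hI ▸ Ideal.subset_span (by simp)
  have hg5 : (-(X 0 ^ 2) + X 0 * X 1 + X 0 * X 2 : MvPolynomial (Fin 3) k) ∈ I :=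
    hI ▸ Ideal.subset_span (by simp)
  -- cubes of the variables lie in I
  have hx3 : (X 0 : MvPolynomial (Fin 3) k) ^ 3 ∈ I := by
    have h : (X 0 : MvPolynomial (Fin 3) k) ^ 3 =
        (X 0 - 2 * X 2) * (X 0 * X 1 - X 0 * X 2) +
        (2 * X 0) * (X 0 * X 2 + X 1 * X 2 - X 2 ^ 2) +
        (-(X 0)) * (-(X 0 ^ 2) + X 0 * X 1 + X 0 * X 2) := by ring
    rw [h]
    exact add_mem (add_mem (I.mul_mem_left _ hg1) (I.mul_mem_left _ hg3)) (I.mul_mem_left _ hg5)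
  have hy3 : (X 1 : MvPolynomial (Fin 3) k) ^ 3 ∈ I := by
    have h : (X 1 : MvPolynomial (Fin 3) k) ^ 3 =
        (X 1 - 2 * X 2) * (X 0 * X 1 - X 0 * X 2) +
        (-(2 * X 0) - X 1) * (X 0 * X 2 - X 1 * X 2) +
        (2 * X 0) * (X 0 * X 2 + X 1 * X 2 - X 2 ^ 2) +
        (X 1) * (-(X 0 * X 1) + X 1 ^ 2 - X 1 * X 2) := by ring
    rw [h]
    exact add_mem (add_mem (add_mem (I.mul_mem_left _ hg1) (I.mul_mem_left _ hg2))
      (I.mul_mem_left _ hg3)) (I.mul_mem_left _ hg4)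
  have hz3 : (X 2 : MvPolynomial (Fin 3) k) ^ 3 ∈ I := by
    have h : (X 2 : MvPolynomial (Fin 3) k) ^ 3 =
        (-(4 * X 2)) * (X 0 * X 1 - X 0 * X 2) +
        (-(2 * X 0) - X 2) * (X 0 * X 2 - X 1 * X 2) +
        (2 * X 0 - X 2) * (X 0 * X 2 + X 1 * X 2 - X 2 ^ 2) := by ring
    rw [h]
    exact add_mem (add_mem (I.mul_mem_left _ hg1) (I.mul_mem_left _ hg2)) (I.mul_mem_left _ hg3)
  -- the radical
  have hrad : I.radical = Ideal.span {X 0, X 1, X 2} := by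
    apply le_antisymm
    · rw [hm_max.isPrime.radical_le_iff, hI, Ideal.span_le]
      rintro p (rfl | rfl | rfl | rfl | rfl)
      · have h : (X 0 * X 1 - X 0 * X 2 : MvPolynomial (Fin 3) k) = (X 1 - X 2) * X 0 := by ring
        rw [h]
        exact Ideal.mul_mem_left _ _ (Ideal.subset_span (by simp))
      · have h : (X 0 * X 2 - X 1 * X 2 : MvPolynomial (Fin 3) k) = (X 0 - X 1) * X 2 := by ring
        rw [h]
        exact Ideal.mul_mem_left _ _ (Ideal.subset_span (by simp))
      · have h : (X 0 * X 2 + X 1 * X 2 - X 2 ^ 2 : MvPolynomial (Fin 3) k) =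
            (X 0 + X 1 - X 2) * X 2 := by ring
        rw [h]
        exact Ideal.mul_mem_left _ _ (Ideal.subset_span (by simp))
      · have h : (-(X 0 * X 1) + X 1 ^ 2 - X 1 * X 2 : MvPolynomial (Fin 3) k) =
            (-(X 0) + X 1 - X 2) * X 1 := by ring
        rw [h]
        exact Ideal.mul_mem_left _ _ (Ideal.subset_span (by simp))
      · have h : (-(X 0 ^ 2) + X 0 * X 1 + X 0 * X 2 : MvPolynomial (Fin 3) k) =
            (-(X 0) + X 1 + X 2) * X 0 := by ring
        rw [h]
        exact Ideal.mul_mem_left _ _ (Ideal.subset_span (by simp))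
    · rw [Ideal.span_le]
      rintro p (rfl | rfl | rfl)
      · exact ⟨3, hx3⟩
      · exact ⟨3, hy3⟩
      · exact ⟨3, hz3⟩
  refine ⟨Ideal.isPrimary_of_isMaximal_radical (hrad ▸ hm_max), hrad, ?_⟩
  -- minimality
  rintro ⟨s, hcard, hspan⟩
  -- every element of I vanishes to order ≥ 2 at 0
  have hvan : ∀ f ∈ I, aeval (0 : Fin 3 → k) f = 0 ∧
      ∀ i, aeval (0 : Fin 3 → k) (pderiv i f) = 0 := by
    intro f hf
    rw [hI] at hf
    induction hf using Submodule.span_induction with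
    | mem x h =>
      simp only [Set.mem_insert_iff, Set.mem_singleton_iff] at h
      rcases h with rfl | rfl | rfl | rfl | rfl <;>
        exact ⟨by simp, fun i => by simp [pderiv_mul, pderiv_pow]⟩
    | zero => exact ⟨by simp only [map_zero], fun i => by simp only [map_zero]⟩
    | add x y hx hy ihx ihy =>
      exact ⟨by simp only [map_add, ihx.1, ihy.1, add_zero],
        fun i => by simp only [map_add, ihx.2 i, ihy.2 i, add_zero]⟩
    | smul a x hx ih =>
      refine ⟨by simp only [smul_eq_mul, map_mul, ih.1, mul_zero], fun i => ?_⟩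
      simp only [smul_eq_mul, pderiv_mul, map_add, map_mul, ih.1, ih.2 i, mul_zero,
        zero_mul, add_zero, zero_add]
  -- the 5 generators as a family
  set g : Fin 5 → MvPolynomial (Fin 3) k :=
    ![X 0 * X 1 - X 0 * X 2, X 0 * X 2 - X 1 * X 2, X 0 * X 2 + X 1 * X 2 - X 2 ^ 2,
      -(X 0 * X 1) + X 1 ^ 2 - X 1 * X 2, -(X 0 ^ 2) + X 0 * X 1 + X 0 * X 2] with hg
  have hgI : ∀ j, g j ∈ I := by
    intro j
    rw [hI]
    apply Ideal.subset_span
    fin_cases j <;> simp [hg]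
  set W : Submodule k (Fin 3 → Fin 3 → k) :=
    Submodule.span k ↑(s.image (stmt10Phi k)) with hW
  have hgW : ∀ j, stmt10Phi k (g j) ∈ W := by
    intro j
    have hmem : g j ∈ Ideal.span (↑s : Set (MvPolynomial (Fin 3) k)) := by
      rw [hspan]; exact hgI j
    obtain ⟨q, -, hq⟩ := Submodule.mem_span_finset.1 hmem
    rw [← hq, map_sum]
    apply Submodule.sum_mem
    intro x hx
    obtain ⟨h0, h1⟩ := hvan x (hspan ▸ Ideal.subset_span hx)
    rw [smul_eq_mul, stmt10Phi_mul _ _ h0 h1]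
    exact Submodule.smul_mem _ _
      (Submodule.subset_span (Finset.mem_coe.2 (Finset.mem_image_of_mem _ hx)))
  have hind : LinearIndependent k fun j => stmt10Phi k (g j) := by
    rw [Fintype.linearIndependent_iff]
    intro c hc
    have e00 := congrFun (congrFun hc 0) 0
    have e11 := congrFun (congrFun hc 1) 1
    have e22 := congrFun (congrFun hc 2) 2
    have e01 := congrFun (congrFun hc 0) 1
    have e02 := congrFun (congrFun hc 0) 2
    simp only [Finset.sum_apply, Pi.smul_apply, Pi.zero_apply, smul_eq_mul,
      Fin.sum_univ_five, hg, Matrix.cons_val_zero, Matrix.cons_val_one, Matrix.head_cons,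
      Matrix.cons_val_two, Matrix.tail_cons, Matrix.cons_val_three, Matrix.cons_val_four,
      stmt10Phi_apply] at e00 e11 e22 e01 e02
    norm_num (config := { decide := true }) [pderiv_mul, pderiv_X, Pi.single_apply, pow_two,
      map_ofNat] at e00 e11 e22 e01 e02
    have h0 : c 0 = 0 := by linear_combination e01 + e11 - e00
    have h1 : c 1 = 0 := by linear_combination e02 + e01 + e11 - 2 * e00 - e22
    intro j
    fin_cases j <;> assumption
  have h5 : (5 : ℕ) ≤ Module.finrank k W := by
    have hle : Submodule.span k (Set.range fun j => stmt10Phi k (g j)) ≤ W :=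
      Submodule.span_le.2 (by rintro _ ⟨j, rfl⟩; exact hgW j)
    have := Submodule.finrank_mono hle
    rwa [finrank_span_eq_card hind, Fintype.card_fin] at this
  have h4 : Module.finrank k W ≤ 4 := by
    have h := finrank_span_finset_le_card (R := k) (s.image (stmt10Phi k))
    rw [Set.finrank] at h
    exact h.trans (Finset.card_image_le.trans hcard)
  omega
end

section
/- Let J = (x_0·x_2, x_1·x_2, x_0·x_1·(x_0-x_1)) ⊂ k[x_0,x_1,x_2] and let I = (x_0^3, x_0^2·x_1, x_0·x_1^2, x_1^3, x_0·x_2, x_1·x_2, x_2^2) be its Jacobian ideal. Then the pair (J, I) is Aluffi torsion-free: J ∩ I^t ⊆ J·I^{t-1} for all t ≥ 2. -/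
open MvPolynomial Finsupp

namespace Stmt13


variable {k : Type*} [Field k]

/-- The ideal spanned by monomials whose exponent vector satisfies `Q`. -/
noncomputable def T (k : Type*) [Field k] (Q : (Fin 3 →₀ ℕ) → Prop) : Ideal (MvPolynomial (Fin 3) k) :=
  Ideal.span {x | ∃ μ, Q μ ∧ x = monomial μ (1 : k)}

theorem monomial_mem_T {Q : (Fin 3 →₀ ℕ) → Prop} (r : k) {μ : Fin 3 →₀ ℕ} (h : Q μ) :
    (monomial μ r : MvPolynomial (Fin 3) k) ∈ T k Q := by
  have : (monomial μ r : MvPolynomial (Fin 3) k) = C r * monomial μ 1 := by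
    rw [C_mul_monomial, mul_one]
  rw [this]
  exact Ideal.mul_mem_left _ _ (Ideal.subset_span ⟨μ, h, rfl⟩)

theorem T_le {Q : (Fin 3 →₀ ℕ) → Prop} {A : Ideal (MvPolynomial (Fin 3) k)}
    (h : ∀ μ, Q μ → (monomial μ (1 : k) : MvPolynomial (Fin 3) k) ∈ A) : T k Q ≤ A := by
  rw [T, Ideal.span_le]
  rintro x ⟨μ, hμ, rfl⟩
  exact h μ hμ

theorem mem_T_of_support {Q : (Fin 3 →₀ ℕ) → Prop} {p : MvPolynomial (Fin 3) k}
    (h : ∀ μ ∈ p.support, Q μ) : p ∈ T k Q := by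
  rw [← support_sum_monomial_coeff p]
  exact Ideal.sum_mem _ fun μ hμ => monomial_mem_T _ (h μ hμ)

theorem support_of_mem_T {Q : (Fin 3 →₀ ℕ) → Prop} (hQ : ∀ μ ν, Q μ → Q (μ + ν))
    {p : MvPolynomial (Fin 3) k} (hp : p ∈ T k Q) : ∀ μ ∈ p.support, Q μ := by
  classical
  refine Submodule.span_induction ?_ ?_ ?_ ?_ hp
  · rintro x ⟨μ, hμ, rfl⟩ ν hν
    rw [support_monomial, if_neg (one_ne_zero' k)] at hν
    rw [Finset.mem_singleton] at hν
    subst hν; exact hμ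
  · simp
  · intro x y _ _ hx hy μ hμ
    rcases Finset.mem_union.mp (MvPolynomial.support_add hμ) with h | h
    · exact hx μ h
    · exact hy μ h
  · intro r x _ hx μ hμ
    rw [smul_eq_mul] at hμ
    obtain ⟨ν, hν, μ', hμ', rfl⟩ := Finset.mem_add.mp (support_mul r x hμ)
    rw [add_comm]
    exact hQ μ' ν (hx μ' hμ')

theorem T_mul_le {Q Q' Q'' : (Fin 3 →₀ ℕ) → Prop}
    (hQ : ∀ μ ν, Q μ → Q (μ + ν)) (hQ' : ∀ μ ν, Q' μ → Q' (μ + ν))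
    (h : ∀ μ ν, Q μ → Q' ν → Q'' (μ + ν)) : T k Q * T k Q' ≤ T k Q'' := by
  rw [Ideal.mul_le]
  intro r hr s hs
  apply mem_T_of_support
  intro μ hμ
  obtain ⟨ν, hν, μ', hμ', rfl⟩ := Finset.mem_add.mp (support_mul r s hμ)
  exact h ν μ' (support_of_mem_T hQ hr ν hν) (support_of_mem_T hQ' hs μ' hμ')

theorem monomial_split {μ σ : Fin 3 →₀ ℕ} (h : σ ≤ μ) :
    (monomial μ (1 : k) : MvPolynomial (Fin 3) k) = monomial σ 1 * monomial (μ - σ) 1 := by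
  rw [monomial_mul, one_mul, add_tsub_cancel_of_le h]




/-- If `q` is `w`-homogeneous of degree `m` and every monomial of `q*v` has weight `≥ n`,
then every monomial of `v` has weight `≥ n - m`. -/
theorem mul_support_bound {w : (Fin 3 →₀ ℕ) → ℕ} (hw : ∀ μ ν, w (μ + ν) = w μ + w ν)
    {q v : MvPolynomial (Fin 3) k} (hq0 : q ≠ 0) {m n : ℕ}
    (hqm : ∀ μ ∈ q.support, w μ = m)
    (h : ∀ μ ∈ (q * v).support, n ≤ w μ) :
    ∀ μ ∈ v.support, n ≤ m + w μ := by
  classical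
  by_cases hv : v = 0
  · simp [hv]
  have hsupp : v.support.Nonempty := MvPolynomial.support_nonempty.mpr hv
  have hne : (v.support.image w).Nonempty := hsupp.image w
  set d := (v.support.image w).min' hne with hd
  have hdle : ∀ μ ∈ v.support, d ≤ w μ := fun μ hμ =>
    Finset.min'_le _ _ (Finset.mem_image_of_mem w hμ)
  obtain ⟨μ₀, hμ₀, hwμ₀⟩ := Finset.mem_image.mp ((v.support.image w).min'_mem hne)
  -- it suffices to prove n ≤ m + d
  suffices hnd : n ≤ m + d by
    intro μ hμ; exact hnd.trans (by have := hdle μ hμ; omega)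
  set vd : MvPolynomial (Fin 3) k :=
    ∑ μ ∈ v.support.filter (fun μ => w μ = d), monomial μ (coeff μ v) with hvd
  have hcoeff_vd : ∀ κ, coeff κ vd = if w κ = d then coeff κ v else 0 := by
    intro κ
    rw [hvd]
    rw [coeff_sum]
    simp only [coeff_monomial]
    rw [Finset.sum_ite_eq' (v.support.filter (fun μ => w μ = d)) κ (fun μ => coeff μ v)]
    by_cases h1 : w κ = d
    · by_cases h2 : κ ∈ v.support
      · simp [h1, h2]
      · rw [MvPolynomial.notMem_support_iff] at h2
        simp [h1, h2]
    · simp [h1]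
  have hvd0 : vd ≠ 0 := by
    intro h0
    have := hcoeff_vd μ₀
    rw [h0] at this
    simp [hwμ₀] at this
    exact (MvPolynomial.mem_support_iff.mp hμ₀) (this hd.symm).symm
  have hsupp_vd : ∀ κ ∈ vd.support, w κ = d := by
    intro κ hκ
    by_contra hne'
    exact (MvPolynomial.mem_support_iff.mp hκ) (by rw [hcoeff_vd κ, if_neg hne'])
  have hsupp_v' : ∀ κ ∈ (v - vd).support, d + 1 ≤ w κ := by
    intro κ hκ
    have hc : coeff κ (v - vd) ≠ 0 := MvPolynomial.mem_support_iff.mp hκ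
    rw [coeff_sub, hcoeff_vd κ] at hc
    by_cases h1 : w κ = d
    · simp [h1] at hc
    · have hκv : κ ∈ v.support := by
        rw [MvPolynomial.mem_support_iff]; intro h0; rw [h0] at hc; simp at hc
      have := hdle κ hκv
      omega
  have hqvd0 : q * vd ≠ 0 := mul_ne_zero hq0 hvd0
  obtain ⟨μ', hμ'⟩ := MvPolynomial.support_nonempty.mpr hqvd0
  have hwμ' : w μ' = m + d := by
    obtain ⟨σ, hσ, τ, hτ, rfl⟩ := Finset.mem_add.mp (support_mul q vd hμ')
    rw [hw, hqm σ hσ, hsupp_vd τ hτ]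
  have hcv' : coeff μ' (q * (v - vd)) = 0 := by
    by_contra hc
    obtain ⟨σ, hσ, τ, hτ, hst⟩ := Finset.mem_add.mp
      (support_mul q (v - vd) (MvPolynomial.mem_support_iff.mpr hc))
    have := hsupp_v' τ hτ
    rw [← hst, hw, hqm σ hσ] at hwμ'
    omega
  have hsum : coeff μ' (q * v) = coeff μ' (q * vd) := by
    have : q * v = q * vd + q * (v - vd) := by ring
    rw [this, coeff_add, hcv', add_zero]
  have hμ'qv : μ' ∈ (q * v).support := by
    rw [MvPolynomial.mem_support_iff, hsum]
    exact MvPolynomial.mem_support_iff.mp hμ'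
  have := h μ' hμ'qv
  omega


local notation "R" => MvPolynomial (Fin 3) k
/-- exponent predicate for `I^t` -/
def Qp (t : ℕ) (μ : Fin 3 →₀ ℕ) : Prop :=
  3 * t ≤ μ 0 + μ 1 + 2 * μ 2 ∧ 2 * t ≤ μ 0 + μ 1 + μ 2

theorem Qp_mono (t : ℕ) : ∀ μ ν, Qp t μ → Qp t (μ + ν) := by
  intro μ ν h
  simp only [Qp, Finsupp.add_apply] at *
  omega

theorem X_eq (i : Fin 3) : (X i : R) = monomial (Finsupp.single i 1) 1 := by
  rw [← pow_one (X i : R), X_pow_eq_monomial]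

theorem g1_eq : (X 0 ^ 3 : R) = monomial (single 0 3) 1 := X_pow_eq_monomial
theorem g2_eq : (X 0 ^ 2 * X 1 : R) = monomial (single 0 2 + single 1 1) 1 := by
  rw [X_pow_eq_monomial, X_eq, monomial_mul, one_mul]
theorem g3_eq : (X 0 * X 1 ^ 2 : R) = monomial (single 0 1 + single 1 2) 1 := by
  rw [X_pow_eq_monomial, X_eq, monomial_mul, one_mul]
theorem g4_eq : (X 1 ^ 3 : R) = monomial (single 1 3) 1 := X_pow_eq_monomial
theorem g5_eq : (X 0 * X 2 : R) = monomial (single 0 1 + single 2 1) 1 := by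
  rw [X_eq, X_eq, monomial_mul, one_mul]
theorem g6_eq : (X 1 * X 2 : R) = monomial (single 1 1 + single 2 1) 1 := by
  rw [X_eq, X_eq, monomial_mul, one_mul]
theorem g7_eq : (X 2 ^ 2 : R) = monomial (single 2 2) 1 := X_pow_eq_monomial

theorem I_le_T1 {I : Ideal R}
    (hI : I = Ideal.span {X 0 ^ 3, X 0 ^ 2 * X 1, X 0 * X 1 ^ 2, X 1 ^ 3,
      X 0 * X 2, X 1 * X 2, X 2 ^ 2}) : I ≤ T k (Qp 1) := by
  rw [hI, Ideal.span_le]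
  rintro x hx
  simp only [Set.mem_insert_iff, Set.mem_singleton_iff] at hx
  rcases hx with rfl | rfl | rfl | rfl | rfl | rfl | rfl
  · rw [g1_eq]; exact monomial_mem_T _ (by simp [Qp, single_apply])
  · rw [g2_eq]; exact monomial_mem_T _ (by simp [Qp, Finsupp.add_apply, single_apply])
  · rw [g3_eq]; exact monomial_mem_T _ (by simp [Qp, Finsupp.add_apply, single_apply])
  · rw [g4_eq]; exact monomial_mem_T _ (by simp [Qp, single_apply])
  · rw [g5_eq]; exact monomial_mem_T _ (by simp [Qp, Finsupp.add_apply, single_apply])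
  · rw [g6_eq]; exact monomial_mem_T _ (by simp [Qp, Finsupp.add_apply, single_apply])
  · rw [g7_eq]; exact monomial_mem_T _ (by simp [Qp, single_apply])

theorem pow_eq {I : Ideal R}
    (hI : I = Ideal.span {X 0 ^ 3, X 0 ^ 2 * X 1, X 0 * X 1 ^ 2, X 1 ^ 3,
      X 0 * X 2, X 1 * X 2, X 2 ^ 2}) : ∀ t : ℕ, I ^ t = T k (Qp t) := by
  intro t
  induction t with
  | zero =>
    rw [pow_zero, Ideal.one_eq_top]
    refine le_antisymm (fun p _ => mem_T_of_support fun μ _ => by simp [Qp]) le_top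
  | succ t ih =>
    rw [pow_succ]
    apply le_antisymm
    · calc I ^ t * I ≤ T k (Qp t) * T k (Qp 1) := Ideal.mul_mono ih.le (I_le_T1 hI)
        _ ≤ T k (Qp (t + 1)) := T_mul_le (Qp_mono t) (Qp_mono 1)
            (by intro μ ν h h'; simp only [Qp, Finsupp.add_apply] at *; omega)
    · apply T_le
      intro μ hμ
      obtain ⟨hd1, hd2⟩ := hμ
      have key : ∀ σ : Fin 3 →₀ ℕ, σ ≤ μ → (monomial σ (1:k) : R) ∈ I → Qp t (μ - σ) →
          (monomial μ (1:k) : R) ∈ I ^ t * I := by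
        intro σ hle hσ hν
        rw [monomial_split hle]
        rw [mul_comm]
        exact Ideal.mul_mem_mul hσ (ih.ge (monomial_mem_T _ hν))
      have hgen : ∀ g ∈ ({X 0 ^ 3, X 0 ^ 2 * X 1, X 0 * X 1 ^ 2, X 1 ^ 3,
          X 0 * X 2, X 1 * X 2, X 2 ^ 2} : Set R), g ∈ I := by
        intro g hg; rw [hI]; exact Ideal.subset_span hg
      have m1 : (monomial (single 0 3) (1:k) : R) ∈ I := by rw [← g1_eq]; exact hgen (X 0 ^ 3) (by simp)
      have m2 : (monomial (single 0 2 + single 1 1) (1:k) : R) ∈ I :=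
        by rw [← g2_eq]; exact hgen (X 0 ^ 2 * X 1) (by simp)
      have m3 : (monomial (single 0 1 + single 1 2) (1:k) : R) ∈ I :=
        by rw [← g3_eq]; exact hgen (X 0 * X 1 ^ 2) (by simp)
      have m4 : (monomial (single 1 3) (1:k) : R) ∈ I := by rw [← g4_eq]; exact hgen (X 1 ^ 3) (by simp)
      have m5 : (monomial (single 0 1 + single 2 1) (1:k) : R) ∈ I :=
        by rw [← g5_eq]; exact hgen (X 0 * X 2) (by simp)
      have m6 : (monomial (single 1 1 + single 2 1) (1:k) : R) ∈ I :=
        by rw [← g6_eq]; exact hgen (X 1 * X 2) (by simp)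
      have m7 : (monomial (single 2 2) (1:k) : R) ∈ I := by rw [← g7_eq]; exact hgen (X 2 ^ 2) (by simp)
      by_cases h2 : μ 2 = 0
      · -- factor out a cubic in x₀, x₁
        by_cases h0a : 3 ≤ μ 0
        · refine key (single 0 3) ?_ m1 ?_
          · rw [Finsupp.le_def]; intro i; fin_cases i <;> simp [single_apply] <;> omega
          · simp [Qp, tsub_apply, single_apply]; omega
        · by_cases h0b : μ 0 = 2
          · refine key (single 0 2 + single 1 1) ?_ m2 ?_
            · rw [Finsupp.le_def]; intro i; fin_cases i <;>
                simp [Finsupp.add_apply, single_apply] <;> omega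
            · simp [Qp, tsub_apply, Finsupp.add_apply, single_apply]; omega
          · by_cases h0c : μ 0 = 1
            · refine key (single 0 1 + single 1 2) ?_ m3 ?_
              · rw [Finsupp.le_def]; intro i; fin_cases i <;>
                  simp [Finsupp.add_apply, single_apply] <;> omega
              · simp [Qp, tsub_apply, Finsupp.add_apply, single_apply]; omega
            · refine key (single 1 3) ?_ m4 ?_
              · rw [Finsupp.le_def]; intro i; fin_cases i <;> simp [single_apply] <;> omega
              · simp [Qp, tsub_apply, single_apply]; omega
      · by_cases h0 : 1 ≤ μ 0
        · refine key (single 0 1 + single 2 1) ?_ m5 ?_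
          · rw [Finsupp.le_def]; intro i; fin_cases i <;>
              simp [Finsupp.add_apply, single_apply] <;> omega
          · simp [Qp, tsub_apply, Finsupp.add_apply, single_apply]; omega
        · by_cases h1 : 1 ≤ μ 1
          · refine key (single 1 1 + single 2 1) ?_ m6 ?_
            · rw [Finsupp.le_def]; intro i; fin_cases i <;>
                simp [Finsupp.add_apply, single_apply] <;> omega
            · simp [Qp, tsub_apply, Finsupp.add_apply, single_apply]; omega
          · refine key (single 2 2) ?_ m7 ?_
            · rw [Finsupp.le_def]; intro i; fin_cases i <;> simp [single_apply] <;> omega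
            · simp [Qp, tsub_apply, single_apply]; omega





noncomputable def phi (k : Type*) [Field k] : MvPolynomial (Fin 3) k →ₐ[k] MvPolynomial (Fin 3) k :=
  aeval (fun i => if i = 2 then 0 else X i)

theorem phi_X0 : phi k (X 0) = X 0 := by simp [phi]
theorem phi_X1 : phi k (X 1) = X 1 := by simp [phi]
theorem phi_X2 : phi k (X 2) = 0 := by simp [phi]

theorem phi_monomial (μ : Fin 3 →₀ ℕ) :
    phi k (monomial μ (1 : k)) = if μ 2 = 0 then monomial μ 1 else 0 := by
  classical
  rw [phi, aeval_monomial, map_one, one_mul, Finsupp.prod]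
  by_cases h : μ 2 = 0
  · rw [if_pos h]
    have h2 : (2 : Fin 3) ∉ μ.support := by rw [Finsupp.notMem_support_iff]; exact h
    have : ∀ i ∈ μ.support, (if i = (2:Fin 3) then (0:R) else X i) ^ μ i = X i ^ μ i := by
      intro i hi
      rw [if_neg (by rintro rfl; exact h2 hi)]
    rw [Finset.prod_congr rfl this, prod_X_pow_eq_monomial]
  · rw [if_neg h]
    have h2 : (2 : Fin 3) ∈ μ.support := Finsupp.mem_support_iff.mpr h
    apply Finset.prod_eq_zero h2
    rw [if_pos rfl, zero_pow h]

theorem sub_phi_mem (p : R) : p - phi k p ∈ Ideal.span {(X 2 : R)} := by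
  induction p using MvPolynomial.induction_on with
  | C a => rw [phi, aeval_C]; simp
  | add p q hp hq =>
    have : p + q - phi k (p + q) = (p - phi k p) + (q - phi k q) := by
      rw [map_add]; ring
    rw [this]; exact add_mem hp hq
  | mul_X p i hp =>
    rw [map_mul]
    by_cases hi : i = 2
    · subst hi
      rw [phi_X2, mul_zero, sub_zero]
      exact Ideal.mul_mem_left _ _ (Ideal.subset_span rfl)
    · have hXi : phi k (X i) = X i := by
        rw [phi, aeval_X, if_neg hi]
      rw [hXi]
      have : p * X i - phi k p * X i = (p - phi k p) * X i := by ring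
      rw [this]
      exact Ideal.mul_mem_right _ _ hp

noncomputable def fP (k : Type*) [Field k] : MvPolynomial (Fin 3) k :=
  X 0 * X 1 * (X 0 - X 1)

theorem g2_eq' : (X 0 ^ 2 * X 1 : R) = monomial (single 0 2 + single 1 1) 1 := by
  rw [X_pow_eq_monomial, ← pow_one (X 1 : R), X_pow_eq_monomial, monomial_mul, one_mul]
theorem g3_eq' : (X 0 * X 1 ^ 2 : R) = monomial (single 0 1 + single 1 2) 1 := by
  rw [X_pow_eq_monomial, ← pow_one (X 0 : R), X_pow_eq_monomial, monomial_mul, one_mul]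

theorem fP_eq : fP k = monomial (single 0 2 + single 1 1) 1 - monomial (single 0 1 + single 1 2) 1 := by
  rw [← g2_eq', ← g3_eq', fP]; ring

theorem fP_supp : ∀ μ ∈ (fP k).support, μ 0 + μ 1 = 3 ∧ μ 2 = 0 := by
  classical
  intro μ hμ
  rw [fP_eq, sub_eq_add_neg] at hμ
  have hμ' := MvPolynomial.support_add hμ
  rw [Finset.mem_union] at hμ'
  have hneg : (-(monomial (single 0 1 + single 1 2) 1 : R)) =
      monomial (single 0 1 + single 1 2) (-1 : k) := by
    rw [← map_neg]
  rcases hμ' with h | h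
  · rw [support_monomial, if_neg (one_ne_zero' k), Finset.mem_singleton] at h
    subst h
    constructor <;> simp [Finsupp.add_apply, single_apply]
  · rw [hneg, support_monomial, if_neg (neg_ne_zero.mpr (one_ne_zero' k)),
      Finset.mem_singleton] at h
    subst h
    constructor <;> simp [Finsupp.add_apply, single_apply]

theorem fP_ne : fP k ≠ 0 := by
  intro h0
  have h1 : coeff (single 0 2 + single 1 1) (fP k) = 1 := by
    rw [fP_eq, coeff_sub, coeff_monomial, coeff_monomial, if_pos rfl, if_neg ?_, sub_zero]
    intro hc
    have := DFunLike.congr_fun hc (0 : Fin 3)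
    simp [Finsupp.add_apply, single_apply] at this
  rw [h0] at h1
  simp at h1


/-- exponent predicate for the residual ideal `(x₀,x₁)^{3t} + (x₂^{2t})` -/
def Qb (t : ℕ) (μ : Fin 3 →₀ ℕ) : Prop := 3 * t ≤ μ 0 + μ 1 ∨ 2 * t ≤ μ 2

theorem Qb_mono (t : ℕ) : ∀ μ ν, Qb t μ → Qb t (μ + ν) := by
  intro μ ν h
  simp only [Qb, Finsupp.add_apply] at *
  omega

theorem mem_J_g5 {J : Ideal R}
    (hJ : J = Ideal.span {X 0 * X 2, X 1 * X 2, X 0 * X 1 * (X 0 - X 1)}) :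
    (monomial (single 0 1 + single 2 1) (1:k) : R) ∈ J := by
  rw [← g5_eq, hJ]; exact Ideal.subset_span (by simp)

theorem mem_J_g6 {J : Ideal R}
    (hJ : J = Ideal.span {X 0 * X 2, X 1 * X 2, X 0 * X 1 * (X 0 - X 1)}) :
    (monomial (single 1 1 + single 2 1) (1:k) : R) ∈ J := by
  rw [← g6_eq, hJ]; exact Ideal.subset_span (by simp)

/-- Key decomposition: `I^(t+2) ⊆ J·I^(t+1) + (x₀,x₁)^{3(t+2)} + (x₂^{2(t+2)})`. -/
theorem F2 {J I : Ideal R}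
    (hJ : J = Ideal.span {X 0 * X 2, X 1 * X 2, X 0 * X 1 * (X 0 - X 1)})
    (hI : I = Ideal.span {X 0 ^ 3, X 0 ^ 2 * X 1, X 0 * X 1 ^ 2, X 1 ^ 3,
      X 0 * X 2, X 1 * X 2, X 2 ^ 2}) (t : ℕ) :
    T k (Qp (t + 2)) ≤ J * I ^ (t + 1) ⊔ T k (Qb (t + 2)) := by
  apply T_le
  rintro μ ⟨hd1, hd2⟩
  by_cases hA : 3 * (t + 2) ≤ μ 0 + μ 1
  · exact Submodule.mem_sup_right (monomial_mem_T _ (Or.inl hA))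
  by_cases hB : 2 * (t + 2) ≤ μ 2
  · exact Submodule.mem_sup_right (monomial_mem_T _ (Or.inr hB))
  have hμ2 : 1 ≤ μ 2 := by omega
  have hμ01 : 1 ≤ μ 0 + μ 1 := by omega
  apply Submodule.mem_sup_left
  by_cases h0 : 1 ≤ μ 0
  · have hle : single 0 1 + single 2 1 ≤ μ := by
      rw [Finsupp.le_def]; intro i; fin_cases i <;> simp [Finsupp.add_apply, single_apply] <;> omega
    rw [monomial_split hle]
    refine Ideal.mul_mem_mul (mem_J_g5 hJ) ((pow_eq hI (t+1)).ge (monomial_mem_T _ ?_))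
    simp only [Qp, tsub_apply, Finsupp.add_apply, single_apply]
    simp
    omega
  · have h1 : 1 ≤ μ 1 := by omega
    have hle : single 1 1 + single 2 1 ≤ μ := by
      rw [Finsupp.le_def]; intro i; fin_cases i <;> simp [Finsupp.add_apply, single_apply] <;> omega
    rw [monomial_split hle]
    refine Ideal.mul_mem_mul (mem_J_g6 hJ) ((pow_eq hI (t+1)).ge (monomial_mem_T _ ?_))
    simp only [Qp, tsub_apply, Finsupp.add_apply, single_apply]
    simp
    omega

/-- Final absorption: monomials divisible by `x₂` and by `x₀` or `x₁`, and lying deep enough,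
belong to `J·I^(t+1)`. -/
theorem FIN {J I : Ideal R}
    (hJ : J = Ideal.span {X 0 * X 2, X 1 * X 2, X 0 * X 1 * (X 0 - X 1)})
    (hI : I = Ideal.span {X 0 ^ 3, X 0 ^ 2 * X 1, X 0 * X 1 ^ 2, X 1 ^ 3,
      X 0 * X 2, X 1 * X 2, X 2 ^ 2}) (t : ℕ) :
    T k (fun μ => 1 ≤ μ 2 ∧ 1 ≤ μ 0 + μ 1 ∧ (3 * (t + 2) ≤ μ 0 + μ 1 ∨ 2 * (t + 2) ≤ μ 2))
      ≤ J * I ^ (t + 1) := by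
  apply T_le
  rintro μ ⟨hμ2, hμ01, hcase⟩
  by_cases h0 : 1 ≤ μ 0
  · have hle : single 0 1 + single 2 1 ≤ μ := by
      rw [Finsupp.le_def]; intro i; fin_cases i <;> simp [Finsupp.add_apply, single_apply] <;> omega
    rw [monomial_split hle]
    refine Ideal.mul_mem_mul (mem_J_g5 hJ) ((pow_eq hI (t+1)).ge (monomial_mem_T _ ?_))
    simp only [Qp, tsub_apply, Finsupp.add_apply, single_apply]
    simp
    omega
  · have h1 : 1 ≤ μ 1 := by omega
    have hle : single 1 1 + single 2 1 ≤ μ := by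
      rw [Finsupp.le_def]; intro i; fin_cases i <;> simp [Finsupp.add_apply, single_apply] <;> omega
    rw [monomial_split hle]
    refine Ideal.mul_mem_mul (mem_J_g6 hJ) ((pow_eq hI (t+1)).ge (monomial_mem_T _ ?_))
    simp only [Qp, tsub_apply, Finsupp.add_apply, single_apply]
    simp
    omega

end Stmt13

/-- For `J = (x₀x₂, x₁x₂, x₀x₁(x₀-x₁)) ⊂ k[x₀,x₁,x₂]` (the ideal of four points
of `ℙ²` in hyperplane linear position) and its Jacobian ideal
`I = (x₀³, x₀²x₁, x₀x₁², x₁³, x₀x₂, x₁x₂, x₂²)`, the pair `(J, I)` is Aluffi torsion-free: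
`J ∩ Iᵗ ⊆ J·I^{t-1}` for all `t ≥ 2`. -/
theorem stmt_13 {k : Type*} [Field k]
    (J I : Ideal (MvPolynomial (Fin 3) k))
    (hJ : J = Ideal.span {X 0 * X 2, X 1 * X 2, X 0 * X 1 * (X 0 - X 1)})
    (hI : I = Ideal.span {X 0 ^ 3, X 0 ^ 2 * X 1, X 0 * X 1 ^ 2, X 1 ^ 3,
      X 0 * X 2, X 1 * X 2, X 2 ^ 2}) :
    ∀ t : ℕ, 2 ≤ t → J ⊓ I ^ t ≤ J * I ^ (t - 1) := by
  classical
  open Stmt13 in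
  intro t ht
  obtain ⟨s, rfl⟩ : ∃ s, t = s + 2 := ⟨t - 2, by omega⟩
  have hts : s + 2 - 1 = s + 1 := rfl
  rw [hts]
  intro g hg
  obtain ⟨hgJ, hgI⟩ := Submodule.mem_inf.mp hg
  -- decompose g using F2
  have hgT : g ∈ T k (Qp (s + 2)) := (pow_eq (k := k) hI (s + 2)).le hgI
  obtain ⟨u, hu, b, hbB, rfl⟩ := Submodule.mem_sup.mp (F2 hJ hI s hgT)
  have huJ : u ∈ J := Ideal.mul_le_left hu
  have hbJ : b ∈ J := by
    have := sub_mem hgJ huJ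
    simpa using this
  -- representation of b in J
  have hbJ' : b ∈ Ideal.span {X 0 * X 2, X 1 * X 2, X 0 * X 1 * (X 0 - X 1)} := hJ ▸ hbJ
  obtain ⟨x1, z1, hz1, hb1⟩ := Ideal.mem_span_insert.mp hbJ'
  obtain ⟨x2, z2, hz2, hz1e⟩ := Ideal.mem_span_insert.mp hz1
  obtain ⟨x3, hz2e⟩ := Ideal.mem_span_singleton'.mp hz2
  have hbrep : b = x1 * (X 0 * X 2) + (x2 * (X 1 * X 2) + x3 * fP k) := by
    rw [hb1, hz1e, ← hz2e]; rfl
  -- apply phi (the substitution x₂ ↦ 0)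
  have hφb : phi k b = fP k * phi k x3 := by
    rw [hbrep]
    simp only [map_add, map_mul, phi_X0, phi_X1, phi_X2, mul_zero, zero_mul, add_zero, zero_add]
    have hφf : phi k (fP k) = fP k := by
      rw [fP]
      simp only [map_mul, map_sub, phi_X0, phi_X1]
    rw [hφf]; ring
  -- phi b lands in (x₀,x₁)^{3(s+2)}
  have hφbT : phi k b ∈ T k (fun μ => 3 * (s + 2) ≤ μ 0 + μ 1) := by
    have hmap := Ideal.mem_map_of_mem (phi k) hbB
    have hle : Ideal.map (phi k) (T k (Qb (s + 2))) ≤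
        T k (fun μ => 3 * (s + 2) ≤ μ 0 + μ 1) := by
      rw [T, Ideal.map_span, Ideal.span_le]
      rintro y ⟨x, ⟨μ, hμ, rfl⟩, rfl⟩
      show phi k (monomial μ 1) ∈ _
      rw [phi_monomial]
      split_ifs with h2
      · refine monomial_mem_T _ ?_
        rcases hμ with h | h
        · exact h
        · omega
      · exact Ideal.zero_mem _
    exact hle hmap
  have hφbsupp : ∀ μ ∈ (fP k * phi k x3).support, 3 * (s + 2) ≤ μ 0 + μ 1 := by
    rw [← hφb]
    exact support_of_mem_T (by intro μ ν h; simp only [Finsupp.add_apply] at *; omega) hφbT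
  -- so phi x3 is deep in (x₀,x₁), hence in I^(s+1)
  have hx3supp := mul_support_bound (w := fun μ => μ 0 + μ 1)
    (by intro μ ν; simp [Finsupp.add_apply]; ring) fP_ne
    (fun μ hμ => (fP_supp μ hμ).1) hφbsupp
  have hφx3 : phi k x3 ∈ I ^ (s + 1) := by
    refine (pow_eq hI (s + 1)).ge (mem_T_of_support fun μ hμ => ?_)
    have h2 : 3 * (s + 2) ≤ 3 + (μ 0 + μ 1) := hx3supp μ hμ
    exact ⟨by omega, by omega⟩
  have hfJ : fP k ∈ J := by
    rw [hJ, fP]; exact Ideal.subset_span (by simp)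
  have hfφ : fP k * phi k x3 ∈ J * I ^ (s + 1) := Ideal.mul_mem_mul hfJ hφx3
  have hfφT : fP k * phi k x3 ∈ T k (Qb (s + 2)) :=
    mem_T_of_support fun μ hμ => Or.inl (hφbsupp μ hμ)
  have hfφJ : fP k * phi k x3 ∈ J := Ideal.mul_le_left hfφ
  -- b - phi b is divisible by x₂
  obtain ⟨h, hch⟩ := Ideal.mem_span_singleton.mp (sub_phi_mem b)
  have hbeq : b = X 2 * h + fP k * phi k x3 := by
    rw [← hφb, ← hch]; ring
  have hchJ : X 2 * h ∈ J := by
    have := sub_mem hbJ hfφJ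
    rw [hbeq] at this
    simpa using this
  have hchB : X 2 * h ∈ T k (Qb (s + 2)) := by
    have := sub_mem hbB hfφT
    rw [hbeq] at this
    simpa using this
  -- from x₂h ∈ J, deduce h is in (x₀, x₁)
  have hchJ' : X 2 * h ∈ Ideal.span {X 0 * X 2, X 1 * X 2, X 0 * X 1 * (X 0 - X 1)} :=
    hJ ▸ hchJ
  obtain ⟨y1, w1, hw1, hrep1⟩ := Ideal.mem_span_insert.mp hchJ'
  obtain ⟨y2, w2, hw2, hw1e⟩ := Ideal.mem_span_insert.mp hw1
  obtain ⟨y3, hw2e⟩ := Ideal.mem_span_singleton'.mp hw2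
  have hrep : X 2 * h = y1 * (X 0 * X 2) + (y2 * (X 1 * X 2) + y3 * fP k) := by
    rw [hrep1, hw1e, ← hw2e]; rfl
  have hfy3supp : ∀ μ ∈ (fP k * y3).support, 1 ≤ μ 2 := by
    have hfy3 : fP k * y3 = X 2 * (h - y1 * X 0 - y2 * X 1) := by
      linear_combination -hrep
    rw [hfy3]
    intro μ hμ
    obtain ⟨ν, hν, τ, hτ, rfl⟩ := Finset.mem_add.mp
      (support_mul (X 2) (h - y1 * X 0 - y2 * X 1) hμ)
    have hν' : ν = single 2 1 := by
      rw [X_eq, support_monomial, if_neg (one_ne_zero' k), Finset.mem_singleton] at hν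
      exact hν
    subst hν'
    simp [Finsupp.add_apply, single_apply]
  have hy3supp := mul_support_bound (w := fun μ => μ 2)
    (by intro μ ν; simp [Finsupp.add_apply]) fP_ne
    (fun μ hμ => (fP_supp μ hμ).2) hfy3supp
  have hy3dvd : ∃ y3', y3 = X 2 * y3' := by
    have : y3 ∈ Ideal.span {(X 2 : MvPolynomial (Fin 3) k)} := by
      have hT : y3 ∈ T k (fun μ => 1 ≤ μ 2) :=
        mem_T_of_support fun μ hμ => by have h2 : (1:ℕ) ≤ 0 + μ 2 := hy3supp μ hμ; omega
      refine T_le (fun μ hμ => ?_) hT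
      have hle : single 2 1 ≤ μ := by
        rw [Finsupp.le_def]; intro i; fin_cases i <;> simp [single_apply] <;> omega
      rw [Ideal.mem_span_singleton]
      exact ⟨monomial (μ - single 2 1) 1, by rw [X_eq, ← monomial_split hle]⟩
    exact Ideal.mem_span_singleton'.mp this |>.imp fun a ha => by rw [← ha]; ring
  obtain ⟨y3', rfl⟩ := hy3dvd
  have hcancel : h = y1 * X 0 + y2 * X 1 + y3' * fP k := by
    have hX2 : (X 2 : MvPolynomial (Fin 3) k) ≠ 0 := X_ne_zero 2
    apply mul_left_cancel₀ hX2
    rw [hrep]; ring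
  -- support facts about h
  have hhd3 : ∀ μ ∈ h.support, 1 ≤ μ 0 + μ 1 := by
    intro μ hμ
    rw [hcancel] at hμ
    rcases Finset.mem_union.mp (MvPolynomial.support_add hμ) with hμ' | hμ'
    · rcases Finset.mem_union.mp (MvPolynomial.support_add hμ') with hμ'' | hμ''
      · obtain ⟨ν, hν, τ, hτ, rfl⟩ := Finset.mem_add.mp (support_mul y1 (X 0) hμ'')
        have hτ' : τ = single 0 1 := by
          rw [X_eq, support_monomial, if_neg (one_ne_zero' k), Finset.mem_singleton] at hτ
          exact hτ
        subst hτ'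
        simp [Finsupp.add_apply, single_apply]
        omega
      · obtain ⟨ν, hν, τ, hτ, rfl⟩ := Finset.mem_add.mp (support_mul y2 (X 1) hμ'')
        have hτ' : τ = single 1 1 := by
          rw [X_eq, support_monomial, if_neg (one_ne_zero' k), Finset.mem_singleton] at hτ
          exact hτ
        subst hτ'
        simp [Finsupp.add_apply, single_apply]
        omega
    · obtain ⟨ν, hν, τ, hτ, rfl⟩ := Finset.mem_add.mp (support_mul y3' (fP k) hμ')
      have := (fP_supp τ hτ).1
      simp only [Finsupp.add_apply]
      omega
  have hhQb : ∀ μ ∈ h.support,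
      3 * (s + 2) ≤ μ 0 + μ 1 ∨ 2 * (s + 2) ≤ μ 2 + 1 := by
    intro μ hμ
    have hmem : (single 2 1 + μ) ∈ (X 2 * h).support := by
      rw [MvPolynomial.mem_support_iff, coeff_X_mul]
      exact MvPolynomial.mem_support_iff.mp hμ
    have := support_of_mem_T (Qb_mono (s + 2)) hchB _ hmem
    rcases this with h' | h'
    · left; simpa [Finsupp.add_apply, single_apply] using h'
    · right; simp only [Finsupp.add_apply, single_apply] at h'; simp at h'; omega
  -- combine and finish
  have hhT : h ∈ T k (fun μ => 1 ≤ μ 0 + μ 1 ∧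
      (3 * (s + 2) ≤ μ 0 + μ 1 ∨ 2 * (s + 2) ≤ μ 2 + 1)) :=
    mem_T_of_support fun μ hμ => ⟨hhd3 μ hμ, hhQb μ hμ⟩
  have hX2T : (X 2 : MvPolynomial (Fin 3) k) ∈ T k (fun μ => 1 ≤ μ 2) := by
    rw [X_eq]
    exact monomial_mem_T _ (by simp [single_apply])
  have hchF : X 2 * h ∈ T k (fun μ => 1 ≤ μ 2 ∧ 1 ≤ μ 0 + μ 1 ∧
      (3 * (s + 2) ≤ μ 0 + μ 1 ∨ 2 * (s + 2) ≤ μ 2)) := by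
    refine T_mul_le (Q := fun μ => 1 ≤ μ 2)
      (Q' := fun μ => 1 ≤ μ 0 + μ 1 ∧ (3 * (s + 2) ≤ μ 0 + μ 1 ∨ 2 * (s + 2) ≤ μ 2 + 1))
      ?_ ?_ ?_ (Ideal.mul_mem_mul hX2T hhT)
    · intro μ ν hQ; simp only [Finsupp.add_apply] at *; omega
    · intro μ ν hQ; simp only [Finsupp.add_apply] at *; omega
    · intro μ ν hQ hQ'; simp only [Finsupp.add_apply] at *; omega
  have hchFin : X 2 * h ∈ J * I ^ (s + 1) := (FIN (k := k) hJ hI s) hchF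
  have hbfin : b ∈ J * I ^ (s + 1) := by
    rw [hbeq]
    exact add_mem hchFin hfφ
  exact add_mem hu hbfin
end

section
/- Let n ≥ 3 and let J' ⊂ k[x_0,...,x_n] be the ideal generated by {x_i·x_j - x_{n-2}·x_{n-1} : 0 ≤ i < j ≤ n-1} ∪ {x_i·x_n : 0 ≤ i ≤ n-1}. Then J' equals the defining ideal of the n+2 points of P^n consisting of the coordinate points e_0,...,e_{n-1} of the hyperplane x_n = 0, the point [1:1:...:1:0], and the point [0:...:0:1]. -/
open MvPolynomial

/-- The ideal of a point of `ℙⁿ` with coordinate vector `p`: the ideal generated by the linear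
forms vanishing at `p`. -/
noncomputable def pointIdeal {k : Type*} [Field k] {n : ℕ} (p : Fin (n + 1) → k) :
    Ideal (MvPolynomial (Fin (n + 1)) k) :=
  Ideal.span {ℓ | ℓ.IsHomogeneous 1 ∧ eval p ℓ = 0}

section Aux

variable {k : Type*} [Field k] {n : ℕ}

private lemma aeval_monomial_scaled {σ : Type*} (p : σ → k) (i₀ : σ)
    (d : σ →₀ ℕ) (c : k) :
    aeval (fun j => C (p j) * X i₀) (monomial d c)
      = C (c * ∏ i ∈ d.support, p i ^ d i) * (X i₀ : MvPolynomial σ k) ^ d.degree := by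
  rw [aeval_monomial]
  have : (d.prod fun j e => (C (p j) * X i₀ : MvPolynomial σ k) ^ e)
      = (∏ i ∈ d.support, (C (p i) ^ d i : MvPolynomial σ k)) * X i₀ ^ d.degree := by
    rw [Finsupp.prod, Finsupp.degree_apply]
    rw [← Finset.prod_pow_eq_pow_sum, ← Finset.prod_mul_distrib]
    exact Finset.prod_congr rfl fun i _ => mul_pow _ _ _
  rw [this]
  simp only [algebraMap_eq, map_mul, map_prod, map_pow]
  ring

private lemma aeval_homog_one {σ : Type*} (p : σ → k) (i₀ : σ)
    {ℓ : MvPolynomial σ k} (hℓ : ℓ.IsHomogeneous 1) :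
    aeval (fun j => C (p j) * X i₀) ℓ = C (eval p ℓ) * X i₀ := by
  conv_lhs => rw [← support_sum_monomial_coeff ℓ]
  rw [map_sum, eval_eq, map_sum, Finset.sum_mul]
  refine Finset.sum_congr rfl fun d hd => ?_
  rw [aeval_monomial_scaled]
  have hdeg : d.degree = 1 := by
    have := hℓ (mem_support_iff.mp hd)
    rw [Finsupp.degree_eq_weight_one]; exact this
  rw [hdeg, pow_one]

private lemma sub_aeval_mem {σ : Type*}
    (g : σ → MvPolynomial σ k) (f : MvPolynomial σ k) :
    f - aeval g f ∈ Ideal.span (Set.range fun j => X j - g j) := by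
  induction f using MvPolynomial.induction_on with
  | C a => simp [aeval_C, algebraMap_eq]
  | add p q hp hq =>
      rw [map_add]
      have : p + q - (aeval g p + aeval g q) = (p - aeval g p) + (q - aeval g q) := by ring
      rw [this]; exact add_mem hp hq
  | mul_X p i hp =>
      have : p * X i - aeval g (p * X i) = (p - aeval g p) * X i + aeval g p * (X i - g i) := by
        rw [map_mul, aeval_X]; ring
      rw [this]
      exact add_mem (Ideal.mul_mem_right _ _ hp)
        (Ideal.mul_mem_left _ _ (Ideal.subset_span ⟨i, rfl⟩))

/-- Kernel characterization of the point ideal. -/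
lemma mem_pointIdeal_iff {p : Fin (n + 1) → k} {i₀ : Fin (n + 1)}
    (hp : p i₀ = 1) (f : MvPolynomial (Fin (n + 1)) k) :
    f ∈ pointIdeal p ↔ aeval (fun j => C (p j) * X i₀) f = 0 := by
  constructor
  · intro hf
    have : pointIdeal p ≤ RingHom.ker (aeval (R := k) (fun j => C (p j) * X i₀) :
        MvPolynomial (Fin (n + 1)) k →ₐ[k] MvPolynomial (Fin (n + 1)) k).toRingHom := by
      rw [pointIdeal, Ideal.span_le]
      rintro ℓ ⟨h1, h2⟩
      simp only [SetLike.mem_coe, RingHom.mem_ker, AlgHom.toRingHom_eq_coe, RingHom.coe_coe]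
      rw [aeval_homog_one p i₀ h1, h2, map_zero, zero_mul]
    exact this hf
  · intro hf
    have h2 := sub_aeval_mem (fun j => C (p j) * X i₀) f
    rw [hf, sub_zero] at h2
    refine Ideal.span_mono ?_ h2
    rintro g ⟨j, rfl⟩
    refine ⟨(isHomogeneous_X _ _).sub ((isHomogeneous_X _ _).C_mul _), ?_⟩
    simp [hp]

lemma constantCoeff_eq_zero_of_mem_pointIdeal {p : Fin (n + 1) → k}
    {f : MvPolynomial (Fin (n + 1)) k} (hf : f ∈ pointIdeal p) : constantCoeff f = 0 := by
  rw [← eval_zero]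
  have hle : pointIdeal p ≤ RingHom.ker (eval (0 : Fin (n + 1) → k)) := by
    rw [pointIdeal, Ideal.span_le]
    rintro ℓ ⟨h1, _⟩
    simp only [SetLike.mem_coe, RingHom.mem_ker]
    rw [eval_zero]
    by_contra hc
    have h0 := h1 (show coeff 0 ℓ ≠ 0 by rwa [constantCoeff_eq] at hc)
    rw [map_zero] at h0
    exact one_ne_zero h0.symm
  exact hle hf

private lemma L3 (hn : 3 ≤ n) (J : Ideal (MvPolynomial (Fin (n + 1)) k))
    (hgen1 : ∀ a b : Fin (n + 1), a ≠ b → (a : ℕ) ≤ n - 1 → (b : ℕ) ≤ n - 1 →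
      X a * X b - X (⟨n - 2, Nat.lt_succ_of_le (Nat.sub_le n 2)⟩ : Fin (n + 1)) * X (⟨n - 1, Nat.lt_succ_of_le (Nat.sub_le n 1)⟩ : Fin (n + 1)) ∈ J)
    (l : Fin (n + 1)) (hl : (l : ℕ) ≤ n - 1) :
    X (⟨n - 2, Nat.lt_succ_of_le (Nat.sub_le n 2)⟩ : Fin (n + 1)) * X (⟨n - 1, Nat.lt_succ_of_le (Nat.sub_le n 1)⟩ : Fin (n + 1)) * X l -
      X (⟨n - 2, Nat.lt_succ_of_le (Nat.sub_le n 2)⟩ : Fin (n + 1)) * X (⟨n - 1, Nat.lt_succ_of_le (Nat.sub_le n 1)⟩ : Fin (n + 1)) *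
        X (⟨n - 1, Nat.lt_succ_of_le (Nat.sub_le n 1)⟩ : Fin (n + 1)) ∈ J := by
  set P : Fin (n + 1) := ⟨n - 2, Nat.lt_succ_of_le (Nat.sub_le n 2)⟩ with hP
  set Q : Fin (n + 1) := ⟨n - 1, Nat.lt_succ_of_le (Nat.sub_le n 1)⟩ with hQ
  have hPv : (P : ℕ) = n - 2 := rfl
  have hQv : (Q : ℕ) = n - 1 := rfl
  set O : Fin (n + 1) := ⟨0, by omega⟩ with hO
  have hPQ : P ≠ Q := Fin.ne_of_val_ne (by omega)
  have h0P : O ≠ P := Fin.ne_of_val_ne (show (0:ℕ) ≠ n - 2 by omega)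
  have h0Q : O ≠ Q := Fin.ne_of_val_ne (show (0:ℕ) ≠ n - 1 by omega)
  by_cases hlQ : l = Q
  · rw [hlQ, sub_self]; exact J.zero_mem
  by_cases hlP : l = P
  · rw [hlP]
    have h1 := hgen1 O Q h0Q (show (0:ℕ) ≤ n-1 by omega) (by omega)
    have h2 := hgen1 O P h0P (show (0:ℕ) ≤ n-1 by omega) (by omega)
    have key : (X P * X Q * X P - X P * X Q * X Q : MvPolynomial (Fin (n+1)) k)
        = (X O * X P - X P * X Q) * X Q
          - X P * (X O * X Q - X P * X Q) := by ring
    rw [key]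
    exact sub_mem (J.mul_mem_right _ h2) (J.mul_mem_left _ h1)
  · have h1 := hgen1 l P (fun h => hlP h) hl (by omega)
    have key : (X P * X Q * X l - X P * X Q * X Q : MvPolynomial (Fin (n+1)) k)
        = X Q * (X l * X P - X P * X Q) := by ring
    rw [key]
    exact J.mul_mem_left _ h1

private lemma LL (hn : 3 ≤ n) (J : Ideal (MvPolynomial (Fin (n + 1)) k))
    (hgen1 : ∀ a b : Fin (n + 1), a ≠ b → (a : ℕ) ≤ n - 1 → (b : ℕ) ≤ n - 1 →
      X a * X b - X (⟨n - 2, Nat.lt_succ_of_le (Nat.sub_le n 2)⟩ : Fin (n + 1)) * X (⟨n - 1, Nat.lt_succ_of_le (Nat.sub_le n 1)⟩ : Fin (n + 1)) ∈ J)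
    (s : Multiset (Fin (n + 1))) (hs : ∀ j ∈ s, (j : ℕ) ≤ n - 1) :
    X (⟨n - 2, Nat.lt_succ_of_le (Nat.sub_le n 2)⟩ : Fin (n + 1)) * X (⟨n - 1, Nat.lt_succ_of_le (Nat.sub_le n 1)⟩ : Fin (n + 1)) *
        (s.map (X : Fin (n+1) → MvPolynomial (Fin (n+1)) k)).prod -
      X (⟨n - 2, Nat.lt_succ_of_le (Nat.sub_le n 2)⟩ : Fin (n + 1)) * X (⟨n - 1, Nat.lt_succ_of_le (Nat.sub_le n 1)⟩ : Fin (n + 1)) ^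
        (Multiset.card s + 1) ∈ J := by
  set P : Fin (n + 1) := ⟨n - 2, Nat.lt_succ_of_le (Nat.sub_le n 2)⟩
  set Q : Fin (n + 1) := ⟨n - 1, Nat.lt_succ_of_le (Nat.sub_le n 1)⟩
  revert hs
  induction s using Multiset.induction with
  | empty => intro _; simp
  | cons l t ih =>
      intro hs
      have hl : (l : ℕ) ≤ n - 1 := hs l (Multiset.mem_cons_self _ _)
      have ht : ∀ j ∈ t, (j : ℕ) ≤ n - 1 := fun j hj => hs j (Multiset.mem_cons_of_mem hj)
      have h3 := L3 hn J hgen1 l hl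
      have hT := ih ht
      have key : X P * X Q * ((l ::ₘ t).map (X : Fin (n+1) → MvPolynomial (Fin (n+1)) k)).prod -
          X P * X Q ^ (Multiset.card (l ::ₘ t) + 1)
          = (X P * X Q * X l - X P * X Q * X Q) *
              (t.map (X : Fin (n+1) → MvPolynomial (Fin (n+1)) k)).prod
            + X Q * (X P * X Q * (t.map (X : Fin (n+1) → MvPolynomial (Fin (n+1)) k)).prod
                - X P * X Q ^ (Multiset.card t + 1)) := by
        rw [Multiset.map_cons, Multiset.prod_cons, Multiset.card_cons]
        ring
      rw [key]
      exact add_mem (J.mul_mem_right _ h3) (J.mul_mem_left _ hT)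

private lemma toMultiset_map_X_prod {σ : Type*} (d : σ →₀ ℕ) :
    ((Finsupp.toMultiset d).map (X : σ → MvPolynomial σ k)).prod = monomial d 1 := by
  induction d using Finsupp.induction with
  | zero => simp
  | single_add a m f ham hm ih =>
      rw [Finsupp.toMultiset_add, Multiset.map_add, Multiset.prod_add, ih,
        Finsupp.toMultiset_single, Multiset.nsmul_singleton, Multiset.map_replicate,
        Multiset.prod_replicate, monomial_single_add]

private lemma mixed_monomial (hn : 3 ≤ n) (J : Ideal (MvPolynomial (Fin (n + 1)) k))
    (hgen1 : ∀ a b : Fin (n + 1), a ≠ b → (a : ℕ) ≤ n - 1 → (b : ℕ) ≤ n - 1 →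
      X a * X b - X (⟨n - 2, Nat.lt_succ_of_le (Nat.sub_le n 2)⟩ : Fin (n + 1)) * X (⟨n - 1, Nat.lt_succ_of_le (Nat.sub_le n 1)⟩ : Fin (n + 1)) ∈ J)
    (d : Fin (n + 1) →₀ ℕ) (a b : Fin (n + 1)) (ha : a ∈ d.support) (hb : b ∈ d.support)
    (hab : a ≠ b) (hsup : ∀ j ∈ d.support, (j : ℕ) ≤ n - 1) :
    ∃ e : ℕ, monomial d (1 : k) -
      X (⟨n - 2, Nat.lt_succ_of_le (Nat.sub_le n 2)⟩ : Fin (n + 1)) * X (⟨n - 1, Nat.lt_succ_of_le (Nat.sub_le n 1)⟩ : Fin (n + 1)) ^ (e + 1) ∈ J := by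
  set P : Fin (n + 1) := ⟨n - 2, Nat.lt_succ_of_le (Nat.sub_le n 2)⟩
  set Q : Fin (n + 1) := ⟨n - 1, Nat.lt_succ_of_le (Nat.sub_le n 1)⟩
  set s := Finsupp.toMultiset d with hsdef
  have has : a ∈ s := (Finsupp.mem_toMultiset d a).2 ha
  have hbs : b ∈ s.erase a := Multiset.mem_erase_of_ne (Ne.symm hab) |>.2
    ((Finsupp.mem_toMultiset d b).2 hb)
  set t := (s.erase a).erase b with htdef
  have hs1 : s = a ::ₘ (s.erase a) := (Multiset.cons_erase has).symm
  have hs2 : s.erase a = b ::ₘ t := (Multiset.cons_erase hbs).symm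
  have ht : ∀ j ∈ t, (j : ℕ) ≤ n - 1 := fun j hj =>
    hsup j ((Finsupp.mem_toMultiset d j).1
      (Multiset.mem_of_mem_erase (Multiset.mem_of_mem_erase hj)))
  refine ⟨Multiset.card t, ?_⟩
  have hmon : monomial d (1 : k)
      = X a * X b * ((t.map (X : Fin (n+1) → MvPolynomial (Fin (n+1)) k)).prod) := by
    rw [← toMultiset_map_X_prod, ← hsdef, hs1, hs2]
    rw [Multiset.map_cons, Multiset.map_cons, Multiset.prod_cons, Multiset.prod_cons]
    ring
  rw [hmon]
  have key : (X a * X b * ((t.map (X : Fin (n+1) → MvPolynomial (Fin (n+1)) k)).prod)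
        - X P * X Q ^ (Multiset.card t + 1) : MvPolynomial (Fin (n+1)) k)
      = (X a * X b - X P * X Q) * (t.map (X : Fin (n+1) → MvPolynomial (Fin (n+1)) k)).prod
        + (X P * X Q * (t.map (X : Fin (n+1) → MvPolynomial (Fin (n+1)) k)).prod
            - X P * X Q ^ (Multiset.card t + 1)) := by ring
  rw [key]
  have h1 := hgen1 a b hab (hsup a ha) (hsup b hb)
  exact add_mem (J.mul_mem_right _ h1) (LL hn J hgen1 t ht)

end Aux

section Sigma

variable {k : Type*} [Field k] {m : ℕ}

/-- Substitution corresponding to the coordinate point `eᵢ`. -/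
noncomputable def sigma (i : Fin m) :
    MvPolynomial (Fin m) k →ₐ[k] MvPolynomial (Fin m) k :=
  aeval (fun j => if j = i then X i else 0)

lemma sigma_monomial_eq_zero {i : Fin m} {u : Fin m →₀ ℕ} {a : k}
    (b : Fin m) (hb : b ∈ u.support) (hbi : b ≠ i) :
    sigma i (monomial u a) = 0 := by
  rw [sigma, aeval_monomial, Finsupp.prod]
  rw [Finset.prod_eq_zero hb (by
    rw [if_neg hbi, zero_pow (Finsupp.mem_support_iff.mp hb)]), mul_zero]

lemma sigma_monomial_eq_self {i : Fin m} {u : Fin m →₀ ℕ} {a : k}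
    (h : u.support ⊆ {i}) : sigma i (monomial u a) = monomial u a := by
  rw [Finsupp.support_subset_singleton.mp h]
  rw [sigma, aeval_monomial, Finsupp.prod]
  rw [monomial_eq, Finsupp.prod]
  refine congrArg _ (Finset.prod_congr rfl fun j hj => ?_)
  have : j = i := Finset.mem_singleton.mp
    (h ((Finsupp.support_subset_singleton.mp h) ▸ hj))
  rw [if_pos this, this]

end Sigma

section NormalForm

variable {k : Type*} [Field k] {n : ℕ}

private lemma normal_form (hn : 3 ≤ n) (J : Ideal (MvPolynomial (Fin (n + 1)) k))
    (hgen1 : ∀ a b : Fin (n + 1), a ≠ b → (a : ℕ) ≤ n - 1 → (b : ℕ) ≤ n - 1 →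
      X a * X b - X (⟨n - 2, Nat.lt_succ_of_le (Nat.sub_le n 2)⟩ : Fin (n + 1)) * X (⟨n - 1, Nat.lt_succ_of_le (Nat.sub_le n 1)⟩ : Fin (n + 1)) ∈ J)
    (hgen2 : ∀ a : Fin (n + 1), (a : ℕ) ≤ n - 1 →
      X a * X (⟨n, Nat.lt_succ_self n⟩ : Fin (n + 1)) ∈ J)
    (f : MvPolynomial (Fin (n + 1)) k) :
    ∃ h ∈ Submodule.span k (Set.range fun e : ℕ =>
        (X (⟨n - 2, Nat.lt_succ_of_le (Nat.sub_le n 2)⟩ : Fin (n + 1)) * X (⟨n - 1, Nat.lt_succ_of_le (Nat.sub_le n 1)⟩ : Fin (n + 1)) ^ (e + 1)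
          : MvPolynomial (Fin (n + 1)) k)),
      f - (∑ i : Fin (n + 1), sigma i f) + n • C (constantCoeff f) - h ∈ J := by
  set P : Fin (n + 1) := ⟨n - 2, Nat.lt_succ_of_le (Nat.sub_le n 2)⟩
  set Q : Fin (n + 1) := ⟨n - 1, Nat.lt_succ_of_le (Nat.sub_le n 1)⟩
  set Z : Fin (n + 1) := ⟨n, Nat.lt_succ_self n⟩
  induction f using MvPolynomial.induction_on' with
  | add p q hp hq =>
      obtain ⟨h1, hm1, hj1⟩ := hp
      obtain ⟨h2, hm2, hj2⟩ := hq
      refine ⟨h1 + h2, add_mem hm1 hm2, ?_⟩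
      have : p + q - (∑ i : Fin (n + 1), sigma i (p + q))
            + n • C (constantCoeff (p + q)) - (h1 + h2)
          = (p - (∑ i : Fin (n + 1), sigma i p) + n • C (constantCoeff p) - h1)
            + (q - (∑ i : Fin (n + 1), sigma i q) + n • C (constantCoeff q) - h2) := by
        simp only [map_add, Finset.sum_add_distrib, smul_add]
        abel
      rw [this]
      exact add_mem hj1 hj2
  | monomial u a =>
      by_cases hu0 : u = 0
      · subst hu0
        refine ⟨0, Submodule.zero_mem _, ?_⟩
        have hs : ∀ i : Fin (n + 1), sigma i (monomial 0 a) = monomial 0 a :=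
          fun i => sigma_monomial_eq_self (by simp)
        simp only [hs, Finset.sum_const, Finset.card_univ, Fintype.card_fin]
        rw [constantCoeff_monomial, if_pos rfl]
        have : (monomial (R := k) (0 : Fin (n+1) →₀ ℕ) a) = C a := by rw [monomial_zero']
        rw [this, succ_nsmul]
        abel_nf
        exact J.zero_mem
      · have hne : u.support.Nonempty := Finsupp.support_nonempty_iff.mpr hu0
        have hcc : constantCoeff (monomial u a) = 0 := by
          rw [constantCoeff_monomial, if_neg hu0]
        by_cases hcard : u.support.card ≤ 1
        · obtain ⟨i₀, hi₀⟩ := hne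
          have hsub : u.support ⊆ {i₀} := by
            intro j hj
            rcases Finset.card_le_one.mp hcard j hj i₀ hi₀ with h
            simp [h]
          refine ⟨0, Submodule.zero_mem _, ?_⟩
          have hsum : (∑ i : Fin (n + 1), sigma i (monomial u a)) = monomial u a := by
            rw [Finset.sum_eq_single i₀]
            · exact sigma_monomial_eq_self hsub
            · intro i _ hii₀
              exact sigma_monomial_eq_zero i₀ hi₀ (fun h => hii₀ h.symm)
            · intro h; exact absurd (Finset.mem_univ i₀) h
          rw [hsum, hcc]
          simp
        · push_neg at hcard
          obtain ⟨a₀, ha₀, b₀, hb₀, hab₀⟩ := Finset.one_lt_card.mp hcard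
          have hsum : (∑ i : Fin (n + 1), sigma i (monomial u a)) = 0 := by
            refine Finset.sum_eq_zero fun i _ => ?_
            by_cases h : a₀ = i
            · exact sigma_monomial_eq_zero b₀ hb₀ (fun hb => hab₀ (h.trans hb.symm))
            · exact sigma_monomial_eq_zero a₀ ha₀ h
          by_cases hZ : Z ∈ u.support
          · set c₀ : Fin (n + 1) := if a₀ = Z then b₀ else a₀ with hc₀def
            have hc₀mem : c₀ ∈ u.support := by
              rw [hc₀def]; split <;> assumption
            have hc₀Z : c₀ ≠ Z := by
              rw [hc₀def]; split
              · rename_i h; exact fun hb => hab₀ (h ▸ hb ▸ rfl)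
              · assumption
            have hc₀le : (c₀ : ℕ) ≤ n - 1 := by
              have h1 : (c₀ : ℕ) < n + 1 := c₀.isLt
              have h2 : (c₀ : ℕ) ≠ n := fun h => hc₀Z (Fin.ext h)
              omega
            refine ⟨0, Submodule.zero_mem _, ?_⟩
            rw [hsum, hcc]
            simp only [map_zero, smul_zero, sub_zero, add_zero]
            set u' : Fin (n + 1) →₀ ℕ := u - Finsupp.single c₀ 1 - Finsupp.single Z 1
            have hu : u = Finsupp.single c₀ 1 + (Finsupp.single Z 1 + u') := by
              have h1 : u c₀ ≠ 0 := Finsupp.mem_support_iff.mp hc₀mem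
              have h2 : u Z ≠ 0 := Finsupp.mem_support_iff.mp hZ
              ext j
              simp only [Finsupp.add_apply, Finsupp.single_apply, Finsupp.tsub_apply, u']
              by_cases hj1 : c₀ = j
              · subst hj1
                rw [if_pos rfl, if_neg (fun h : Z = c₀ => hc₀Z h.symm)]
                omega
              · rw [if_neg hj1]
                by_cases hj2 : Z = j
                · subst hj2; rw [if_pos rfl]; omega
                · rw [if_neg hj2]; omega
            have : monomial u a = (X c₀ * X Z) * monomial u' a := by
              rw [hu, monomial_single_add, monomial_single_add, pow_one, pow_one, mul_assoc]
            rw [this]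
            exact Ideal.mul_mem_right _ _ (hgen2 c₀ hc₀le)
          · have hsup : ∀ j ∈ u.support, (j : ℕ) ≤ n - 1 := by
              intro j hj
              have h2 : (j : ℕ) ≠ n := fun h => hZ ((Fin.ext h : j = Z) ▸ hj)
              have := j.isLt; omega
            obtain ⟨e, he⟩ := mixed_monomial hn J hgen1 u a₀ b₀ ha₀ hb₀ hab₀ hsup
            refine ⟨a • (X P * X Q ^ (e + 1)), Submodule.smul_mem _ a
              (Submodule.subset_span ⟨e, rfl⟩), ?_⟩
            rw [hsum, hcc]
            simp only [map_zero, smul_zero, sub_zero, add_zero]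
            have : monomial u a - a • (X P * X Q ^ (e + 1))
                = C a * (monomial u (1 : k) - X P * X Q ^ (e + 1)) := by
              rw [mul_sub, C_mul_monomial, mul_one, smul_eq_C_mul]
            rw [this]
            exact Ideal.mul_mem_left _ _ he

end NormalForm


section Points

variable {k : Type*} [Field k] {n : ℕ}

private lemma quad_mem (p : Fin (n + 1) → k) (i₀ : Fin (n + 1)) (hp : p i₀ = 1)
    (a b c d : Fin (n + 1)) (h : p a * p b = p c * p d) :
    (X a * X b - X c * X d : MvPolynomial (Fin (n + 1)) k) ∈ pointIdeal p := by
  rw [mem_pointIdeal_iff hp]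
  simp only [map_sub, map_mul, aeval_X]
  have hC : (C (p a) * C (p b) : MvPolynomial (Fin (n + 1)) k) = C (p c) * C (p d) := by
    rw [← C_mul, ← C_mul, h]
  linear_combination (X i₀ * X i₀ : MvPolynomial (Fin (n + 1)) k) * hC

private lemma quad_mem0 (p : Fin (n + 1) → k) (i₀ : Fin (n + 1)) (hp : p i₀ = 1)
    (a b : Fin (n + 1)) (h : p a * p b = 0) :
    (X a * X b : MvPolynomial (Fin (n + 1)) k) ∈ pointIdeal p := by
  rw [mem_pointIdeal_iff hp]
  simp only [map_mul, aeval_X]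
  have hC : (C (p a) * C (p b) : MvPolynomial (Fin (n + 1)) k) = 0 := by
    rw [← C_mul, h, map_zero]
  linear_combination (X i₀ * X i₀ : MvPolynomial (Fin (n + 1)) k) * hC

end Points

/-- For `n ≥ 3`, the ideal
`J' = ({xᵢxⱼ - x_{n-2}x_{n-1} : 0 ≤ i < j ≤ n-1} ∪ {xᵢxₙ : 0 ≤ i ≤ n-1})` equals the defining
ideal of the `n+2` points of `ℙⁿ` consisting of the coordinate points `e₀,…,e_{n-1}` of the
hyperplane `xₙ = 0`, the point `[1:…:1:0]`, and the point `[0:…:0:1]`. -/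
theorem stmt_14 {k : Type*} [Field k] [IsAlgClosed k] (n : ℕ) (hn : 3 ≤ n)
    (J' : Ideal (MvPolynomial (Fin (n + 1)) k))
    (hJ' : J' = Ideal.span {f | (∃ i j : Fin (n + 1), i < j ∧ (j : ℕ) ≤ n - 1 ∧
        f = X i * X j -
          X (⟨n - 2, by omega⟩ : Fin (n + 1)) * X (⟨n - 1, by omega⟩ : Fin (n + 1))) ∨
      (∃ i : Fin (n + 1), (i : ℕ) ≤ n - 1 ∧ f = X i * X (⟨n, by omega⟩ : Fin (n + 1)))}) :
    J' = (⨅ i : {i : Fin (n + 1) // (i : ℕ) ≤ n - 1},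
            pointIdeal (fun j => if j = i.1 then (1 : k) else 0)) ⊓
         pointIdeal (fun j => if (j : ℕ) = n then (0 : k) else 1) ⊓
         pointIdeal (fun j => if (j : ℕ) = n then (1 : k) else 0) := by
  set P : Fin (n + 1) := ⟨n - 2, by omega⟩ with hPdef
  set Q : Fin (n + 1) := ⟨n - 1, by omega⟩ with hQdef
  set Z : Fin (n + 1) := ⟨n, by omega⟩ with hZdef
  set O : Fin (n + 1) := ⟨0, by omega⟩ with hOdef
  have hPQ : P ≠ Q := Fin.ne_of_val_ne (show n - 2 ≠ n - 1 by omega)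
  have hgen1 : ∀ a b : Fin (n + 1), a ≠ b → (a : ℕ) ≤ n - 1 → (b : ℕ) ≤ n - 1 →
      X a * X b - X P * X Q ∈ J' := by
    intro a b hab ha hb
    rw [hJ']
    rcases hab.lt_or_gt with h | h
    · exact Ideal.subset_span (Or.inl ⟨a, b, h, hb, rfl⟩)
    · rw [show (X a * X b : MvPolynomial (Fin (n + 1)) k) = X b * X a from mul_comm _ _]
      exact Ideal.subset_span (Or.inl ⟨b, a, h, ha, rfl⟩)
  have hgen2 : ∀ a : Fin (n + 1), (a : ℕ) ≤ n - 1 → X a * X Z ∈ J' := by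
    intro a ha
    rw [hJ']
    exact Ideal.subset_span (Or.inr ⟨a, ha, rfl⟩)
  have hforward : J' ≤ (⨅ i : {i : Fin (n + 1) // (i : ℕ) ≤ n - 1},
            pointIdeal (fun j => if j = i.1 then (1 : k) else 0)) ⊓
         pointIdeal (fun j => if (j : ℕ) = n then (0 : k) else 1) ⊓
         pointIdeal (fun j => if (j : ℕ) = n then (1 : k) else 0) := by
    rw [hJ', Ideal.span_le]
    rintro g hg
    have hzero : ∀ (m x y : Fin (n + 1)), x ≠ y →
        (if x = m then (1 : k) else 0) * (if y = m then 1 else 0) = 0 := by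
      intro m x y hxy
      split_ifs with h1 h2
      · exact absurd (h1.trans h2.symm) hxy
      all_goals ring
    have hu1 : ∀ x : Fin (n + 1), (x : ℕ) ≤ n - 1 →
        (if (x : ℕ) = n then (0 : k) else 1) = 1 := fun x hx => if_neg (by omega)
    have hv0 : ∀ x : Fin (n + 1), (x : ℕ) ≤ n - 1 →
        (if (x : ℕ) = n then (1 : k) else 0) = 0 := fun x hx => if_neg (by omega)
    have hPle : (P : ℕ) ≤ n - 1 := show n - 2 ≤ n - 1 by omega
    have hQle : (Q : ℕ) ≤ n - 1 := le_refl _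
    simp only [SetLike.mem_coe]
    refine Submodule.mem_inf.mpr ⟨Submodule.mem_inf.mpr ⟨?_, ?_⟩, ?_⟩
    · -- the coordinate points
      refine Submodule.mem_iInf _ |>.mpr fun m => ?_
      obtain ⟨i, j, hij, hjle, rfl⟩ | ⟨i, hile, rfl⟩ := hg
      · exact quad_mem (fun j => if j = m.1 then (1 : k) else 0) m.1 (if_pos rfl) i j P Q
          (by beta_reduce; rw [hzero m.1 i j (ne_of_lt hij), hzero m.1 P Q hPQ])
      · refine quad_mem0 (fun j => if j = m.1 then (1 : k) else 0) m.1 (if_pos rfl) i Z ?_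
        have hZm : Z ≠ m.1 := Fin.ne_of_val_ne (show n ≠ (m.1 : ℕ) by have := m.2; omega)
        beta_reduce
        rw [if_neg hZm, mul_zero]
    · -- the point [1:...:1:0]
      have hO1 : (if ((O : Fin (n + 1)) : ℕ) = n then (0 : k) else 1) = 1 :=
        if_neg (show ¬(0 = n) by omega)
      obtain ⟨i, j, hij, hjle, rfl⟩ | ⟨i, hile, rfl⟩ := hg
      · refine quad_mem (fun j => if (j : ℕ) = n then (0 : k) else 1) O hO1 i j P Q ?_
        beta_reduce
        rw [hu1 i (by have h' : (i : ℕ) < (j : ℕ) := hij; omega), hu1 j hjle, hu1 P hPle, hu1 Q hQle]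
      · refine quad_mem0 (fun j => if (j : ℕ) = n then (0 : k) else 1) O hO1 i Z ?_
        beta_reduce
        rw [if_pos (show ((Z : Fin (n+1)) : ℕ) = n from rfl), mul_zero]
    · -- the point [0:...:0:1]
      have hZ1 : (if ((Z : Fin (n + 1)) : ℕ) = n then (1 : k) else 0) = 1 := if_pos rfl
      obtain ⟨i, j, hij, hjle, rfl⟩ | ⟨i, hile, rfl⟩ := hg
      · refine quad_mem (fun j => if (j : ℕ) = n then (1 : k) else 0) Z hZ1 i j P Q ?_
        beta_reduce
        rw [hv0 j hjle, hv0 Q hQle, mul_zero, mul_zero]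
      · refine quad_mem0 (fun j => if (j : ℕ) = n then (1 : k) else 0) Z hZ1 i Z ?_
        beta_reduce
        rw [hv0 i hile, zero_mul]
  refine le_antisymm hforward ?_
  intro f hf
  obtain ⟨h12, hf3⟩ := Submodule.mem_inf.mp hf
  obtain ⟨hf1, hf2⟩ := Submodule.mem_inf.mp h12
  -- all coordinate substitutions kill f
  have hσ : ∀ i : Fin (n + 1), sigma i f = 0 := by
    intro i
    by_cases hi : (i : ℕ) ≤ n - 1
    · have hfi : f ∈ pointIdeal (fun j => if j = i then (1 : k) else 0) :=
        (Submodule.mem_iInf _).mp hf1 ⟨i, hi⟩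
      rw [mem_pointIdeal_iff (p := fun j => if j = i then (1 : k) else 0) (i₀ := i)
        (if_pos rfl)] at hfi
      have hmap : (fun j => (C (if j = i then (1 : k) else 0) * X i :
          MvPolynomial (Fin (n + 1)) k)) = (fun j => if j = i then X i else 0) := by
        funext j; split_ifs with hh <;> simp
      have : sigma (k := k) i = aeval (fun j => C (if j = i then (1 : k) else 0) * X i) := by
        rw [sigma, hmap]
      rw [this]
      exact hfi
    · have hiZ : i = Z := Fin.ext (by have := i.isLt; simp only [hZdef]; omega)
      rw [mem_pointIdeal_iff (p := fun j => if (j : ℕ) = n then (1 : k) else 0) (i₀ := Z)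
        (if_pos rfl)] at hf3
      have hmap : (fun j : Fin (n + 1) => (C (if (j : ℕ) = n then (1 : k) else 0) * X Z :
          MvPolynomial (Fin (n + 1)) k)) = (fun j => if j = Z then X Z else 0) := by
        funext j
        by_cases hh : j = Z
        · subst hh; rw [if_pos rfl, if_pos rfl, C_1, one_mul]
        · rw [if_neg (fun hc => hh (Fin.ext hc)), if_neg hh, C_0, zero_mul]
      have : sigma (k := k) Z = aeval (fun j : Fin (n + 1) => C (if (j : ℕ) = n then (1 : k) else 0) * X Z) := by
        rw [sigma, hmap]
      rw [hiZ, this]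
      exact hf3
  have hcc : constantCoeff f = 0 := constantCoeff_eq_zero_of_mem_pointIdeal hf3
  obtain ⟨h, hmem, hJ⟩ := normal_form hn J' hgen1 hgen2 f
  rw [Finset.sum_eq_zero (fun i _ => hσ i), hcc] at hJ
  simp only [map_zero, smul_zero, sub_zero, add_zero] at hJ
  -- hJ : f - h ∈ J'
  -- now show h = 0 using the substitution at [1:...:1:0]
  have hO1 : (if ((O : Fin (n + 1)) : ℕ) = n then (0 : k) else 1) = 1 :=
    if_neg (show ¬(0 = n) by omega)
  have hfu := (mem_pointIdeal_iff (p := fun j => if (j : ℕ) = n then (0 : k) else 1)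
    (i₀ := O) hO1 f).mp hf2
  have hfhu := (mem_pointIdeal_iff (p := fun j => if (j : ℕ) = n then (0 : k) else 1)
    (i₀ := O) hO1 (f - h)).mp
    (((Submodule.mem_inf.mp ((Submodule.mem_inf.mp (hforward hJ)).1)).2))
  have hhu : aeval (fun j : Fin (n + 1) => C (if (j : ℕ) = n then (0 : k) else 1) * X O) h
      = 0 := by
    have hsub : aeval (fun j : Fin (n + 1) => C (if (j : ℕ) = n then (0 : k) else 1) * X O) f -
        aeval (fun j : Fin (n + 1) => C (if (j : ℕ) = n then (0 : k) else 1) * X O) h = 0 := by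
      rw [← map_sub]; exact hfhu
    rw [hfu, zero_sub, neg_eq_zero] at hsub
    exact hsub
  -- the images of the spanning family are linearly independent monomials
  have hgen : ∀ e : ℕ, aeval (R := k)
      (fun j : Fin (n + 1) => C (if (j : ℕ) = n then (0 : k) else 1) * X O)
      (X P * X Q ^ (e + 1)) = X O ^ (e + 2) := by
    intro e
    rw [map_mul, map_pow, aeval_X, aeval_X,
      if_neg (show ¬((P : ℕ) = n) from show ¬(n - 2 = n) by omega),
      if_neg (show ¬((Q : ℕ) = n) from show ¬(n - 1 = n) by omega), C_1, one_mul,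
      ← pow_succ']
  obtain ⟨c, hc⟩ := Finsupp.mem_span_range_iff_exists_finsupp.mp hmem
  have hli : LinearIndependent k (fun e : ℕ => (X O ^ (e + 2) : MvPolynomial (Fin (n + 1)) k)) := by
    have hb := (basisMonomials (Fin (n + 1)) k).linearIndependent
    have hcomp := hb.comp (fun e : ℕ => Finsupp.single O (e + 2))
      (fun e₁ e₂ hh => by
        have := congrArg (fun g : Fin (n + 1) →₀ ℕ => g O) hh
        simp only [Finsupp.single_eq_same] at this
        omega)
    convert hcomp using 1
    case e'_5 => rfl
    case e'_7 => rfl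
    funext e
    rw [Function.comp_apply, coe_basisMonomials, X_pow_eq_monomial]
  have hc0 : c = 0 := by
    refine linearIndependent_iff.mp hli c ?_
    rw [Finsupp.linearCombination_apply]
    rw [← hc] at hhu
    rw [map_finsuppSum] at hhu
    simpa only [map_smul, ← hPdef, ← hQdef, hgen] using hhu
  have hh0 : h = 0 := by rw [← hc, hc0, Finsupp.sum_zero_index]
  rw [hh0, sub_zero] at hJ
  exact hJ
end

section
/- Let J = (xz - yz, xy - yz) ⊂ k[x,y,z] and I = (J, I_2(Θ)) its Jacobian ideal (an (x,y,z)-primary ideal minimally generated by 5 quadrics). Then the special fiber algebra k[I] ⊂ k[x,y,z] generated by the five quadrics has Krull dimension 3, i.e., the rational map P^2 ⇢ P^4 defined by the five quadrics has 2-dimensional image. -/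
open MvPolynomial

universe u v

section AuxiliaryLemmas

variable {F : Type u} [Field F]

lemma aux_totalDegree_aeval_le {F : Type*} [CommSemiring F] {n m : ℕ}
    (f : Fin n → MvPolynomial (Fin m) F) (D : ℕ) (hf : ∀ i, (f i).totalDegree ≤ D)
    (p : MvPolynomial (Fin n) F) :
    (aeval f p).totalDegree ≤ D * p.totalDegree := by
  conv_lhs => rw [p.as_sum, map_sum]
  refine (totalDegree_finset_sum _ _).trans (Finset.sup_le fun v hv => ?_)
  rw [aeval_monomial]
  refine (totalDegree_mul _ _).trans ?_
  have h1 : (algebraMap F (MvPolynomial (Fin m) F) (coeff v p)).totalDegree = 0 := by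
    rw [MvPolynomial.algebraMap_eq, totalDegree_C]
  rw [h1, zero_add]
  rw [Finsupp.prod]
  refine (totalDegree_finset_prod _ _).trans ?_
  have h2 : ∀ i ∈ v.support, ((f i) ^ (v i)).totalDegree ≤ v i * D := fun i _ =>
    (totalDegree_pow _ _).trans (Nat.mul_le_mul_left _ (hf i))
  refine (Finset.sum_le_sum h2).trans ?_
  rw [← Finset.sum_mul, Nat.mul_comm]
  refine Nat.mul_le_mul_left _ (le_trans ?_ (MvPolynomial.le_totalDegree hv))
  rw [Finsupp.sum]

lemma aux_coord_le_sum {m : ℕ} (v : Fin m →₀ ℕ) (i : Fin m) : v i ≤ v.sum fun _ e => e := by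
  by_cases h : v i = 0
  · simp [h]
  · rw [Finsupp.sum]
    exact Finset.single_le_sum (fun _ _ => Nat.zero_le _) (Finsupp.mem_support_iff.mpr h)

lemma aux_mem_span_monomials {F : Type*} [CommSemiring F] {m : ℕ} (N : ℕ)
    (p : MvPolynomial (Fin m) F) (hp : p.totalDegree ≤ N) :
    p ∈ Submodule.span F
      (Set.range fun g : Fin m → Fin (N+1) =>
        (monomial (Finsupp.equivFunOnFinite.symm fun i => ((g i : ℕ))) (1 : F) :
          MvPolynomial (Fin m) F)) := by
  rw [show p = ∑ v ∈ p.support, monomial v (coeff v p) from p.as_sum]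
  refine Submodule.sum_mem _ fun v hv => ?_
  have hmono : (monomial v (coeff v p) : MvPolynomial (Fin m) F)
      = (coeff v p) • monomial v (1 : F) := by
    rw [MvPolynomial.smul_monomial, smul_eq_mul, mul_one]
  rw [hmono]
  refine Submodule.smul_mem _ _ (Submodule.subset_span ?_)
  have hb : ∀ i, v i ≤ N := fun i =>
    le_trans (aux_coord_le_sum v i) (le_trans (MvPolynomial.le_totalDegree hv) hp)
  refine ⟨fun i => ⟨v i, Nat.lt_succ_of_le (hb i)⟩, ?_⟩
  show (monomial (Finsupp.equivFunOnFinite.symm fun i =>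
      (((⟨v i, Nat.lt_succ_of_le (hb i)⟩ : Fin (N+1)) : ℕ)))) (1:F) = (monomial v) 1
  congr 1
  have h : (fun i => (((⟨v i, Nat.lt_succ_of_le (hb i)⟩ : Fin (N+1)) : ℕ))) = ⇑v := rfl
  rw [h]
  rw [Finsupp.equivFunOnFinite_symm_coe v]

set_option maxHeartbeats 1000000 in
lemma aux_not_indep4 {F : Type*} [Field F] (f : Fin 4 → MvPolynomial (Fin 3) F) :
    ¬ AlgebraicIndependent F f := by
  classical
  intro h
  have hinj : Function.Injective (aeval f : MvPolynomial (Fin 4) F →ₐ[F] _) := h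
  set D : ℕ := (Finset.univ.sup fun i => (f i).totalDegree) + 1 with hD
  have hfD : ∀ i, (f i).totalDegree ≤ D := by
    intro i
    rw [hD]
    have : (f i).totalDegree ≤ Finset.univ.sup fun j => (f j).totalDegree :=
      Finset.le_sup (f := fun j => (f j).totalDegree) (Finset.mem_univ i)
    omega
  set d : ℕ := (4*D+1)^3 with hd
  set N : ℕ := D * (4*d) with hN
  -- the finite set of monomials of bounded exponents in 3 variables
  set T : Finset (MvPolynomial (Fin 3) F) :=
    Finset.image (fun g : Fin 3 → Fin (N+1) =>
      (monomial (Finsupp.equivFunOnFinite.symm fun i => ((g i : ℕ))) (1 : F))) Finset.univ with hT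
  -- the linearly independent family
  set w : (Fin 4 → Fin (d+1)) → MvPolynomial (Fin 3) F := fun g =>
    aeval f (monomial (Finsupp.equivFunOnFinite.symm fun i => ((g i : ℕ))) (1 : F)) with hw
  -- w is linearly independent
  have hwli : LinearIndependent F w := by
    have hb := (MvPolynomial.basisMonomials (Fin 4) F).linearIndependent
    have hscomp : Function.Injective
        (fun g : Fin 4 → Fin (d+1) => (Finsupp.equivFunOnFinite.symm fun i => ((g i : ℕ)))) := by
      intro a b hab
      funext i
      have := congrArg (fun s : Fin 4 →₀ ℕ => s i) hab
      simpa [Fin.val_injective.eq_iff] using Fin.val_injective (by simpa using this)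
    have h1 : LinearIndependent F (fun g : Fin 4 → Fin (d+1) =>
        (monomial (Finsupp.equivFunOnFinite.symm fun i => ((g i : ℕ))) (1 : F) :
          MvPolynomial (Fin 4) F)) := by
      have := hb.comp _ hscomp
      simp only [MvPolynomial.coe_basisMonomials] at this
      exact this
    have := h1.map' (aeval f).toLinearMap (LinearMap.ker_eq_bot.mpr hinj)
    exact this
  -- every w g lies in the span of T
  have hwT : ∀ g, w g ∈ Submodule.span F (T : Set (MvPolynomial (Fin 3) F)) := by
    intro g
    have hdeg : (w g).totalDegree ≤ N := by
      refine le_trans (aux_totalDegree_aeval_le f D hfD _) ?_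
      rw [hN]
      refine Nat.mul_le_mul_left _ ?_
      rw [totalDegree_monomial _ (one_ne_zero)]
      have : ((Finsupp.equivFunOnFinite.symm fun i => ((g i : ℕ))).sum fun _ e => e)
          = ∑ i : Fin 4, (g i : ℕ) := by
        rw [Finsupp.sum_fintype]
        · simp
        · intro; rfl
      rw [this]
      calc ∑ i : Fin 4, (g i : ℕ) ≤ ∑ _i : Fin 4, d :=
            Finset.sum_le_sum fun i _ => Nat.lt_succ_iff.mp (g i).isLt
        _ = 4 * d := by simp [Finset.sum_const, Nat.mul_comm]
    have := aux_mem_span_monomials N (w g) hdeg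
    refine Submodule.span_mono ?_ this
    rintro x ⟨g', rfl⟩
    exact Finset.mem_image.mpr ⟨g', Finset.mem_univ _, rfl⟩
  -- cardinality contradiction
  haveI : Module.Finite F (Submodule.span F (T : Set (MvPolynomial (Fin 3) F))) :=
    Module.Finite.span_of_finite F (T.finite_toSet)
  have hcard : Fintype.card (Fin 4 → Fin (d+1))
      ≤ Module.finrank F (Submodule.span F (T : Set (MvPolynomial (Fin 3) F))) := by
    set V := Submodule.span F (T : Set (MvPolynomial (Fin 3) F))
    have hw' : LinearIndependent F (fun g => (⟨w g, hwT g⟩ : V)) := by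
      refine LinearIndependent.of_comp V.subtype ?_
      exact hwli
    exact hw'.fintype_card_le_finrank
  have hfr : Module.finrank F (Submodule.span F (T : Set (MvPolynomial (Fin 3) F))) ≤ T.card :=
    finrank_span_finset_le_card T
  have hTcard : T.card ≤ (N+1)^3 := by
    refine le_trans (Finset.card_image_le) ?_
    simp [Fintype.card_fun]
  have hbig : (d+1)^4 ≤ (N+1)^3 := by
    calc (d+1)^4 = Fintype.card (Fin 4 → Fin (d+1)) := by simp [Fintype.card_fun]
      _ ≤ _ := le_trans hcard (le_trans hfr hTcard)
  -- arithmetic contradiction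
  have hd1 : 1 ≤ d := Nat.one_le_iff_ne_zero.mpr (by positivity)
  have h1 : N + 1 ≤ d * (4*D+1) := by
    have : d * (4*D+1) = 4*d*D + d := by ring
    rw [this, hN]
    have : D * (4*d) = 4*d*D := by ring
    omega
  have h2 : (N+1)^3 ≤ d^3 * (4*D+1)^3 := by
    calc (N+1)^3 ≤ (d * (4*D+1))^3 := Nat.pow_le_pow_left h1 3
      _ = d^3 * (4*D+1)^3 := by ring
  have h3 : d^3 * (4*D+1)^3 = d^4 := by rw [hd]; ring
  have h4 : d^4 < (d+1)^4 := Nat.pow_lt_pow_left (Nat.lt_succ_self d) (by norm_num)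
  omega

/-- Factor out the largest power of X from a nonzero polynomial. -/
lemma aux_factor_X_pow {R : Type*} [CommRing R] [IsDomain R] :
    ∀ (n : ℕ) (Q : Polynomial R), Q ≠ 0 → Q.natDegree ≤ n →
      ∃ (m : ℕ) (Q' : Polynomial R), Q = Polynomial.X ^ m * Q' ∧ Q'.coeff 0 ≠ 0 := by
  intro n
  induction n with
  | zero =>
    intro Q hQ hdeg
    refine ⟨0, Q, by simp, ?_⟩
    intro h0
    apply hQ
    have := Polynomial.eq_C_of_natDegree_eq_zero (Nat.le_zero.mp hdeg)
    rw [this] at h0 ⊢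
    simpa using h0
  | succ n ih =>
    intro Q hQ hdeg
    by_cases h0 : Q.coeff 0 ≠ 0
    · exact ⟨0, Q, by simp, h0⟩
    · push_neg at h0
      obtain ⟨Q₁, rfl⟩ := Polynomial.X_dvd_iff.mpr h0
      have hQ₁ : Q₁ ≠ 0 := fun h => hQ (by simp [h])
      have hdeg₁ : Q₁.natDegree ≤ n := by
        have := Polynomial.natDegree_mul (Polynomial.X_ne_zero (R := R)) hQ₁
        rw [this] at hdeg
        simp [Polynomial.natDegree_X] at hdeg
        omega
      obtain ⟨m, Q', hfac, hc⟩ := ih Q₁ hQ₁ hdeg₁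
      exact ⟨m + 1, Q', by rw [hfac]; ring, hc⟩

/-- The transcendence-drop lemma: if `y` has algebraically independent image mod `p`
and `f ∈ p` is nonzero, then `f, y` is algebraically independent. -/
lemma aux_drop {F A : Type*} [Field F] [CommRing A] [IsDomain A] [Algebra F A]
    {s : ℕ} {y : Fin s → A} {p : Ideal A} {f : A}
    (hy : AlgebraicIndependent F (fun i => Ideal.Quotient.mk p (y i)))
    (hf : f ∈ p) (hf0 : f ≠ 0) :
    AlgebraicIndependent F (Fin.cons f y) := by
  rw [AlgebraicIndependent]
  rw [injective_iff_map_eq_zero]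
  intro P hP
  by_contra hPne
  -- move to a polynomial in one variable over MvPolynomial (Fin s) F
  set Q : Polynomial (MvPolynomial (Fin s) F) := finSuccEquiv F s P with hQdef
  have hQ : Q ≠ 0 := fun h => hPne ((map_eq_zero_iff _ (finSuccEquiv F s).injective).mp h)
  -- evaluation ring hom
  set E : Polynomial (MvPolynomial (Fin s) F) →+* A :=
    Polynomial.eval₂RingHom ((aeval y).toRingHom) f with hEdef
  have hEP : E Q = aeval (Fin.cons f y) P := by
    have hcomp : E.comp ((finSuccEquiv F s : MvPolynomial (Fin (s+1)) F →+*
        Polynomial (MvPolynomial (Fin s) F)))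
        = ((aeval (Fin.cons f y) : MvPolynomial (Fin (s+1)) F →ₐ[F] A) :
            MvPolynomial (Fin (s+1)) F →+* A) := by
      apply MvPolynomial.ringHom_ext
      · intro a
        simp [hEdef, finSuccEquiv_apply]
      · intro i
        refine Fin.cases ?_ ?_ i
        · simp [hEdef, finSuccEquiv_X_zero]
        · intro j
          simp [hEdef, finSuccEquiv_X_succ]
    exact RingHom.congr_fun hcomp P
  obtain ⟨m, Q', hfac, hc0⟩ := aux_factor_X_pow Q.natDegree Q hQ le_rfl
  have hEQ' : f ^ m * E Q' = 0 := by
    have : E Q = 0 := by rw [hEP, hP]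
    rw [hfac] at this
    simpa [hEdef] using this
  have hEQ'0 : E Q' = 0 := by
    rcases mul_eq_zero.mp hEQ' with h | h
    · exact absurd h (pow_ne_zero m hf0)
    · exact h
  -- push down to A ⧸ p
  have hkey : (aeval (fun i => Ideal.Quotient.mk p (y i))) (Q'.coeff 0) = 0 := by
    have h1 : Ideal.Quotient.mk p (E Q') = 0 := by rw [hEQ'0, map_zero]
    have h2 : Ideal.Quotient.mk p (E Q')
        = Polynomial.eval₂ ((Ideal.Quotient.mk p).comp ((aeval y).toRingHom))
            (Ideal.Quotient.mk p f) Q' := by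
      simp only [hEdef, Polynomial.coe_eval₂RingHom]
      exact Polynomial.hom_eval₂ _ _ _ _
    have h3 : Ideal.Quotient.mk p f = 0 := Ideal.Quotient.eq_zero_iff_mem.mpr hf
    have h4 : ((Ideal.Quotient.mk p).comp ((aeval y).toRingHom)) (Q'.coeff 0) = 0 := by
      rw [← Polynomial.eval₂_at_zero]
      conv_lhs => rw [← h3]
      rw [← h2, h1]
    have : ((Ideal.Quotient.mk p).comp ((aeval y).toRingHom)) (Q'.coeff 0)
        = (aeval fun i => Ideal.Quotient.mk p (y i)) (Q'.coeff 0) := by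
      have hcomp : ((Ideal.Quotient.mkₐ F p).comp (aeval y))
          = aeval (fun i => Ideal.Quotient.mkₐ F p (y i)) := comp_aeval y (Ideal.Quotient.mkₐ F p)
      have := AlgHom.congr_fun hcomp (Q'.coeff 0)
      simpa using this
    rw [← this]
    exact h4
  exact hc0 (hy (by rw [hkey, map_zero]))

/-- From a chain of primes of length `m` in a domain, extract `m` algebraically
independent elements. -/
lemma aux_chain_indep {F : Type u} [Field F] :
    ∀ (m : ℕ) (A : Type v) (_ : CommRing A) (_ : IsDomain A) (_ : Algebra F A)
      (c : LTSeries (PrimeSpectrum A)), c.length = m →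
      ∃ v : Fin m → A, AlgebraicIndependent F v := by
  intro m
  induction m with
  | zero =>
    intro A _ _ _ c _
    exact ⟨Fin.elim0, algebraicIndependent_empty_type⟩
  | succ m ih =>
    intro A _ _ _ c hc
    -- the second prime in the chain
    have h1m : 1 ≤ c.length := by omega
    set P : PrimeSpectrum A := c.toFun ⟨1, by omega⟩ with hP
    set P0 : PrimeSpectrum A := c.toFun ⟨0, by omega⟩ with hP0
    have hlt : P0 < P := by
      have := c.step ⟨0, by omega⟩
      change (_ : PrimeSpectrum A) < _ at this
      convert this using 2 <;> ext <;> simp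
    obtain ⟨f, hfP, hfP0⟩ := SetLike.exists_of_lt ((PrimeSpectrum.asIdeal_lt_asIdeal _ _).mpr hlt)
    haveI hPprime : P.asIdeal.IsPrime := P.isPrime
    -- quotient domain
    let A' := A ⧸ P.asIdeal
    -- the chain in the quotient
    have hmono : ∀ i : Fin (m + 1), P.asIdeal ≤ (c.toFun ⟨(i : ℕ) + 1, by omega⟩).asIdeal := by
      intro i
      have : (⟨1, by omega⟩ : Fin (c.length + 1)) ≤ ⟨(i : ℕ) + 1, by omega⟩ := by
        simp [Fin.le_def]
      exact (PrimeSpectrum.asIdeal_le_asIdeal _ _).mpr (c.monotone this)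
    have hprime : ∀ i : Fin (m + 1),
        ((c.toFun ⟨(i : ℕ) + 1, by omega⟩).asIdeal.map (Ideal.Quotient.mk P.asIdeal)).IsPrime := by
      intro i
      haveI := (c.toFun ⟨(i : ℕ) + 1, by omega⟩).isPrime
      refine Ideal.map_isPrime_of_surjective Ideal.Quotient.mk_surjective ?_
      rw [Ideal.mk_ker]
      exact hmono i
    set c' : LTSeries (PrimeSpectrum A') :=
      { length := m
        toFun := fun i => ⟨(c.toFun ⟨(i : ℕ) + 1, by omega⟩).asIdeal.map
            (Ideal.Quotient.mk P.asIdeal), hprime i⟩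
        step := by
          intro i
          show (_ : PrimeSpectrum A') < _
          rw [← PrimeSpectrum.asIdeal_lt_asIdeal]
          have hstep : (c.toFun ⟨(i : ℕ) + 1, by omega⟩).asIdeal
              < (c.toFun ⟨(i : ℕ) + 1 + 1, by omega⟩).asIdeal := by
            rw [PrimeSpectrum.asIdeal_lt_asIdeal]
            have := c.step ⟨(i : ℕ) + 1, by omega⟩
            change (_ : PrimeSpectrum A) < _ at this
            convert this using 2 <;> ext <;> simp
          refine lt_of_le_of_ne (Ideal.map_mono hstep.le) ?_
          intro heq
          have hcm : ∀ j : Fin (m + 1), Ideal.comap (Ideal.Quotient.mk P.asIdeal)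
              ((c.toFun ⟨(j : ℕ) + 1, by omega⟩).asIdeal.map (Ideal.Quotient.mk P.asIdeal))
              = (c.toFun ⟨(j : ℕ) + 1, by omega⟩).asIdeal := by
            intro j
            rw [Ideal.comap_map_of_surjective _ Ideal.Quotient.mk_surjective]
            rw [← RingHom.ker_eq_comap_bot, Ideal.mk_ker]
            exact sup_eq_left.mpr (hmono j)
          simp only [Fin.coe_castSucc, Fin.val_succ] at heq
          have h1 := hcm i.castSucc
          have h2 := hcm i.succ
          simp only [Fin.coe_castSucc, Fin.val_succ] at h1 h2
          rw [heq, h2] at h1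
          exact hstep.ne h1.symm
      } with hc'
    obtain ⟨v', hv'⟩ := ih A' inferInstance inferInstance inferInstance c' rfl
    -- lift v' to A
    choose w hw using fun i => Ideal.Quotient.mk_surjective (I := P.asIdeal) (v' i)
    have hwind : AlgebraicIndependent F (fun i => Ideal.Quotient.mk P.asIdeal (w i)) := by
      have : (fun i => Ideal.Quotient.mk P.asIdeal (w i)) = v' := funext hw
      rw [this]
      exact hv'
    have hf0 : f ≠ 0 := by
      intro h
      exact hfP0 (h ▸ P0.asIdeal.zero_mem)
    exact ⟨Fin.cons f w, aux_drop hwind hfP hf0⟩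

/-- Krull dimension upper bound for subalgebras of `k[x,y,z]`. -/
lemma aux_upper {F : Type u} [Field F] (S : Subalgebra F (MvPolynomial (Fin 3) F)) :
    ringKrullDim S ≤ 3 := by
  have hlen : ∀ c : LTSeries (PrimeSpectrum S), c.length ≤ 3 := by
    intro c
    by_contra hcon
    push_neg at hcon
    obtain ⟨v, hv⟩ := aux_chain_indep (F := F) c.length S inferInstance inferInstance inferInstance c rfl
    have hv2 : AlgebraicIndependent F ((S.val : S →ₐ[F] MvPolynomial (Fin 3) F) ∘ v) :=
      hv.map (Subtype.val_injective.injOn)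
    have hv3 : AlgebraicIndependent F
        ((((S.val : S →ₐ[F] MvPolynomial (Fin 3) F) ∘ v)) ∘ Fin.castLE hcon) :=
      hv2.comp _ (Fin.strictMono_castLE hcon).injective
    exact aux_not_indep4 _ hv3
  rw [ringKrullDim, Order.krullDim_eq_iSup_length]
  have : (⨆ (p : LTSeries (PrimeSpectrum S)), (p.length : ℕ∞)) ≤ (3 : ℕ∞) :=
    iSup_le fun p => by exact_mod_cast hlen p
  calc ((⨆ (p : LTSeries (PrimeSpectrum S)), (p.length : ℕ∞) : ℕ∞) : WithBot ℕ∞)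
      ≤ ((3 : ℕ∞) : WithBot ℕ∞) := WithBot.coe_le_coe.mpr this
    _ = 3 := rfl

end AuxiliaryLemmas

/-- For `J = (xz - yz, xy - yz) ⊂ k[x,y,z]` the Jacobian ideal is
`I = (xy - xz, xz - yz, xz + yz - z², -xy + y² - yz, -x² + xy + xz)`.  The special fiber
algebra `k[I]`, i.e. the `k`-subalgebra of `k[x,y,z]` generated by these five quadrics, has
Krull dimension 3 (equivalently, the rational map `ℙ² ⇢ ℙ⁴` defined by the five quadrics has
2-dimensional image). -/
theorem stmt_19 {k : Type*} [Field k] [CharZero k] [IsAlgClosed k]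
    (q : Fin 5 → MvPolynomial (Fin 3) k)
    (hq : q = ![X 0 * X 1 - X 0 * X 2, X 0 * X 2 - X 1 * X 2,
      X 0 * X 2 + X 1 * X 2 - X 2 ^ 2, -(X 0 * X 1) + X 1 ^ 2 - X 1 * X 2,
      -(X 0 ^ 2) + X 0 * X 1 + X 0 * X 2]) :
    ringKrullDim (Algebra.adjoin k (Set.range q)) = 3 := by
  set A : Subalgebra k (MvPolynomial (Fin 3) k) := Algebra.adjoin k (Set.range q) with hA
  refine le_antisymm (aux_upper A) ?_
  set g1 : Fin 3 → MvPolynomial (Fin 3) k := ![0, X 1, X 2] with hg1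
  set g2 : Fin 3 → MvPolynomial (Fin 3) k := ![0, 0, X 2] with hg2
  set g3 : Fin 3 → MvPolynomial (Fin 3) k := ![0, 0, 0] with hg3
  set φ1 : A →+* MvPolynomial (Fin 3) k :=
    ((aeval g1).toRingHom.comp (Subalgebra.val A).toRingHom) with hφ1
  set φ2 : A →+* MvPolynomial (Fin 3) k :=
    ((aeval g2).toRingHom.comp (Subalgebra.val A).toRingHom) with hφ2
  set φ3 : A →+* MvPolynomial (Fin 3) k :=
    ((aeval g3).toRingHom.comp (Subalgebra.val A).toRingHom) with hφ3
  have hm0 : q 0 ∈ A := Algebra.subset_adjoin ⟨0, rfl⟩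
  have hm2 : q 2 ∈ A := Algebra.subset_adjoin ⟨2, rfl⟩
  have hm3 : q 3 ∈ A := Algebra.subset_adjoin ⟨3, rfl⟩
  -- step 0 : ⊥ < ker φ1
  have lt01 : (⊥ : Ideal A) < RingHom.ker φ1 := by
    refine lt_of_le_of_ne bot_le ?_
    intro h
    have hmem : (⟨q 0, hm0⟩ : A) ∈ RingHom.ker φ1 := by
      rw [RingHom.mem_ker]
      show aeval g1 (q 0) = 0
      subst hq
      simp [hg1]
    rw [← h, Ideal.mem_bot] at hmem
    have hz : q 0 = 0 := congrArg Subtype.val hmem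
    have he := congrArg (eval (![1, 1, 0] : Fin 3 → k)) hz
    subst hq
    simp at he
  -- inclusion lemmas
  have hcomp12 : ∀ a : A, φ1 a = 0 → φ2 a = 0 := by
    intro a h
    have hcmp : (aeval g2 : MvPolynomial (Fin 3) k →ₐ[k] MvPolynomial (Fin 3) k)
        = (aeval (![X 0, 0, X 2] : Fin 3 → MvPolynomial (Fin 3) k)).comp (aeval g1) := by
      apply MvPolynomial.algHom_ext
      intro i
      fin_cases i <;> simp [hg1, hg2]
    show (aeval g2) (a : MvPolynomial (Fin 3) k) = 0
    rw [hcmp, AlgHom.comp_apply]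
    have h' : (aeval g1) (a : MvPolynomial (Fin 3) k) = 0 := h
    rw [h', map_zero]
  have hcomp23 : ∀ a : A, φ2 a = 0 → φ3 a = 0 := by
    intro a h
    have hcmp : (aeval g3 : MvPolynomial (Fin 3) k →ₐ[k] MvPolynomial (Fin 3) k)
        = (aeval (![X 0, X 1, 0] : Fin 3 → MvPolynomial (Fin 3) k)).comp (aeval g2) := by
      apply MvPolynomial.algHom_ext
      intro i
      fin_cases i <;> simp [hg2, hg3]
    show (aeval g3) (a : MvPolynomial (Fin 3) k) = 0
    rw [hcmp, AlgHom.comp_apply]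
    have h' : (aeval g2) (a : MvPolynomial (Fin 3) k) = 0 := h
    rw [h', map_zero]
  -- step 1 : ker φ1 < ker φ2
  have lt12 : RingHom.ker φ1 < RingHom.ker φ2 := by
    refine lt_of_le_of_ne (fun a ha => RingHom.mem_ker.mpr
      (hcomp12 a (RingHom.mem_ker.mp ha))) ?_
    intro h
    have hmem : (⟨q 3, hm3⟩ : A) ∈ RingHom.ker φ2 := by
      rw [RingHom.mem_ker]
      show aeval g2 (q 3) = 0
      subst hq
      simp [hg2]
    rw [← h, RingHom.mem_ker] at hmem
    have h1 : aeval g1 (q 3) = 0 := hmem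
    have he := congrArg (eval (![0, 1, 0] : Fin 3 → k)) h1
    subst hq
    simp [hg1] at he
  -- step 2 : ker φ2 < ker φ3
  have lt23 : RingHom.ker φ2 < RingHom.ker φ3 := by
    refine lt_of_le_of_ne (fun a ha => RingHom.mem_ker.mpr
      (hcomp23 a (RingHom.mem_ker.mp ha))) ?_
    intro h
    have hmem : (⟨q 2, hm2⟩ : A) ∈ RingHom.ker φ3 := by
      rw [RingHom.mem_ker]
      show aeval g3 (q 2) = 0
      subst hq
      simp [hg3]
    rw [← h, RingHom.mem_ker] at hmem
    have h1 : aeval g2 (q 2) = 0 := hmem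
    have he := congrArg (eval (![0, 0, 1] : Fin 3 → k)) h1
    subst hq
    simp [hg2] at he
  -- assemble the chain
  set pt0 : PrimeSpectrum A := ⟨⊥, Ideal.bot_prime⟩ with hpt0
  set pt1 : PrimeSpectrum A := ⟨RingHom.ker φ1, RingHom.ker_isPrime φ1⟩ with hpt1
  set pt2 : PrimeSpectrum A := ⟨RingHom.ker φ2, RingHom.ker_isPrime φ2⟩ with hpt2
  set pt3 : PrimeSpectrum A := ⟨RingHom.ker φ3, RingHom.ker_isPrime φ3⟩ with hpt3
  set c : LTSeries (PrimeSpectrum A) :=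
    { length := 3
      toFun := ![pt0, pt1, pt2, pt3]
      step := by
        intro i
        fin_cases i
        · exact (PrimeSpectrum.asIdeal_lt_asIdeal pt0 pt1).mp lt01
        · exact (PrimeSpectrum.asIdeal_lt_asIdeal pt1 pt2).mp lt12
        · exact (PrimeSpectrum.asIdeal_lt_asIdeal pt2 pt3).mp lt23 } with hc
  have hlow := Order.LTSeries.length_le_krullDim c
  rw [ringKrullDim]
  have h3 : c.length = 3 := rfl
  rw [h3] at hlow
  exact_mod_cast hlow
end
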